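/- arXiv:1811.10058 — 6 statements merged into one kernel-verified Lean document; each statement's English description precedes it below -/
import Mathlib

section
/- Let $S$ be a countable set and $(X_t)_{t\in\mathbb{Z}}$ a stationary stochastic process taking values in $S$. Then almost surely, for every $x\in S$ that appears in the trajectory $\{X_t : t\in\mathbb{Z}\}$, the set $\{t\in\mathbb{Z} : X_t = x\}$ is unbounded above and unbounded below. -/
open MeasureTheory ENNReal

namespace BiRecAux

variable {S : Type*} [MeasurableSpace S] [MeasurableSingletonClass S]

/-- The shift on bi-infinite sequences. -/
def shift (f : ℤ → S) : ℤ → S := fun t => f (t + 1)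

lemma measurable_shift : Measurable (shift (S := S)) :=
  measurable_pi_lambda _ fun t => measurable_pi_apply _

/-- "Last visit to `x` is at time `n`". -/
def A (x : S) (n : ℤ) : Set (ℤ → S) := {f | f n = x ∧ ∀ t, n < t → f t ≠ x}

/-- "First visit to `x` is at time `n`". -/
def A' (x : S) (n : ℤ) : Set (ℤ → S) := {f | f n = x ∧ ∀ t, t < n → f t ≠ x}

lemma measurableSet_A (x : S) (n : ℤ) : MeasurableSet (A x n) := by
  have h1 : A x n = ((fun f : ℤ → S => f n) ⁻¹' {x}) ∩
      ⋂ (t : ℤ) (_ : n < t), ((fun f : ℤ → S => f t) ⁻¹' {x})ᶜ := by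
    ext f; simp [A]
  rw [h1]
  exact ((measurable_pi_apply n) (measurableSet_singleton x)).inter
    (MeasurableSet.iInter fun t => MeasurableSet.iInter fun _ =>
      ((measurable_pi_apply t) (measurableSet_singleton x)).compl)

lemma measurableSet_A' (x : S) (n : ℤ) : MeasurableSet (A' x n) := by
  have h1 : A' x n = ((fun f : ℤ → S => f n) ⁻¹' {x}) ∩
      ⋂ (t : ℤ) (_ : t < n), ((fun f : ℤ → S => f t) ⁻¹' {x})ᶜ := by
    ext f; simp [A']
  rw [h1]
  exact ((measurable_pi_apply n) (measurableSet_singleton x)).inter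
    (MeasurableSet.iInter fun t => MeasurableSet.iInter fun _ =>
      ((measurable_pi_apply t) (measurableSet_singleton x)).compl)

lemma shift_preimage_A (x : S) (n : ℤ) : shift ⁻¹' (A x n) = A x (n + 1) := by
  ext f
  constructor
  · rintro ⟨h1, h2⟩
    refine ⟨h1, fun t ht => ?_⟩
    have h3 := h2 (t - 1) (by omega)
    simpa [shift, show t - 1 + 1 = t from by ring] using h3
  · rintro ⟨h1, h2⟩
    exact ⟨h1, fun t ht => h2 (t + 1) (by omega)⟩

lemma shift_preimage_A' (x : S) (n : ℤ) : shift ⁻¹' (A' x n) = A' x (n + 1) := by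
  ext f
  constructor
  · rintro ⟨h1, h2⟩
    refine ⟨h1, fun t ht => ?_⟩
    have h3 := h2 (t - 1) (by omega)
    simpa [shift, show t - 1 + 1 = t from by ring] using h3
  · rintro ⟨h1, h2⟩
    exact ⟨h1, fun t ht => h2 (t + 1) (by omega)⟩

lemma pairwise_disjoint_A (x : S) :
    Pairwise (Function.onFun Disjoint (A x)) := by
  intro n m hnm
  show Disjoint (A x n) (A x m)
  rw [Set.disjoint_left]
  rintro f ⟨hfn, hn⟩ ⟨hfm, hm⟩
  rcases lt_or_gt_of_ne hnm with h | h
  · exact hn m h hfm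
  · exact hm n h hfn

lemma pairwise_disjoint_A' (x : S) :
    Pairwise (Function.onFun Disjoint (A' x)) := by
  intro n m hnm
  show Disjoint (A' x n) (A' x m)
  rw [Set.disjoint_left]
  rintro f ⟨hfn, hn⟩ ⟨hfm, hm⟩
  rcases lt_or_gt_of_ne hnm with h | h
  · exact hm n h hfn
  · exact hn m h hfm

end BiRecAux

open BiRecAux

/-- A stationary process indexed by `ℤ` with values in a countable space is a.s.
bi-recurrent for every state appearing in its trajectory: the set of visit
times to any such state is unbounded above and below. -/
theorem stationary_process_birecurrent
    {Ω S : Type*} [MeasurableSpace Ω] [MeasurableSpace S] [MeasurableSingletonClass S]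
    [Countable S] (P : Measure Ω) [IsProbabilityMeasure P]
    (X : ℤ → Ω → S) (hXmeas : ∀ t, Measurable (X t))
    (hstat : Measure.map (fun ω (t : ℤ) => X (t + 1) ω) P
      = Measure.map (fun ω (t : ℤ) => X t ω) P) :
    ∀ᵐ ω ∂P, ∀ x : S, (∃ t : ℤ, X t ω = x) →
      (∀ n : ℤ, ∃ t, n ≤ t ∧ X t ω = x) ∧ (∀ n : ℤ, ∃ t, t ≤ n ∧ X t ω = x) := by
  classical
  set traj : Ω → ℤ → S := fun ω t => X t ω with htraj_def
  have htraj : Measurable traj := measurable_pi_lambda _ fun t => hXmeas t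
  set μ : Measure (ℤ → S) := Measure.map traj P with hμ_def
  have hinst : IsProbabilityMeasure μ := Measure.isProbabilityMeasure_map htraj.aemeasurable
  -- shift invariance
  have hshift : Measure.map shift μ = μ := by
    rw [hμ_def, Measure.map_map measurable_shift htraj]
    exact hstat
  have hshift_apply : ∀ B : Set (ℤ → S), MeasurableSet B → μ (shift ⁻¹' B) = μ B := by
    intro B hB
    rw [← Measure.map_apply measurable_shift hB, hshift]
  -- measures of A x n are all equal to μ (A x 0)
  have hAconst : ∀ (x : S) (n : ℤ), μ (A x n) = μ (A x 0) := by
    intro x n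
    induction n using Int.induction_on with
    | zero => rfl
    | succ k ih =>
      rw [← ih, ← shift_preimage_A, hshift_apply _ (measurableSet_A x _)]
    | pred k ih =>
      have h := shift_preimage_A x (-(k:ℤ) - 1)
      rw [show -(k:ℤ) - 1 + 1 = -(k:ℤ) from by ring] at h
      rw [← ih, ← h, hshift_apply _ (measurableSet_A x _)]
  have hA'const : ∀ (x : S) (n : ℤ), μ (A' x n) = μ (A' x 0) := by
    intro x n
    induction n using Int.induction_on with
    | zero => rfl
    | succ k ih =>
      rw [← ih, ← shift_preimage_A', hshift_apply _ (measurableSet_A' x _)]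
    | pred k ih =>
      have h := shift_preimage_A' x (-(k:ℤ) - 1)
      rw [show -(k:ℤ) - 1 + 1 = -(k:ℤ) from by ring] at h
      rw [← ih, ← h, hshift_apply _ (measurableSet_A' x _)]
  -- each A x n is null
  have nullOf : ∀ (B : ℤ → Set (ℤ → S)), (∀ n, MeasurableSet (B n)) →
      Pairwise (Function.onFun Disjoint B) → (∀ n, μ (B n) = μ (B 0)) →
      μ (B 0) = 0 := by
    intro B hmeas hdisj hconst
    by_contra h0
    have hsum : ∑' n : ℤ, μ (B n) = μ (⋃ n, B n) :=
      (measure_iUnion hdisj hmeas).symm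
    have h1 : ∑' n : ℤ, μ (B n) = ∑' _ : ℤ, μ (B 0) := by
      exact tsum_congr fun n => hconst n
    have htop : (∑' _ : ℤ, μ (B 0)) = ⊤ :=
      ENNReal.tsum_const_eq_top_of_ne_zero h0
    have : μ (⋃ n, B n) = ⊤ := by rw [← hsum, h1, htop]
    exact (measure_lt_top μ _).ne (by rw [this])
  have hAnull : ∀ (x : S) (n : ℤ), μ (A x n) = 0 := by
    intro x n
    rw [hAconst x n]
    exact nullOf (A x) (measurableSet_A x) (pairwise_disjoint_A x) (hAconst x)
  have hA'null : ∀ (x : S) (n : ℤ), μ (A' x n) = 0 := by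
    intro x n
    rw [hA'const x n]
    exact nullOf (A' x) (measurableSet_A' x) (pairwise_disjoint_A' x) (hA'const x)
  -- the global null set
  set N : Set (ℤ → S) := ⋃ (x : S), ⋃ (n : ℤ), (A x n ∪ A' x n) with hN_def
  have hNmeas : MeasurableSet N :=
    MeasurableSet.iUnion fun x => MeasurableSet.iUnion fun n =>
      (measurableSet_A x n).union (measurableSet_A' x n)
  have hNnull : μ N = 0 :=
    measure_iUnion_null fun x => measure_iUnion_null fun n =>
      measure_union_null (hAnull x n) (hA'null x n)
  have hPnull : P (traj ⁻¹' N) = 0 := by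
    rw [← Measure.map_apply htraj hNmeas]
    exact hNnull
  have hae : ∀ᵐ ω ∂P, traj ω ∉ N := by
    rw [ae_iff]
    simp only [not_not]; exact hPnull
  filter_upwards [hae] with ω hω
  rintro x ⟨t0, ht0⟩
  constructor
  · intro n
    by_contra h
    push_neg at h
    obtain ⟨m, hm, hmax⟩ := Int.exists_greatest_of_bdd
      (P := fun t => X t ω = x) ⟨n, fun z hz => le_of_not_gt fun hlt => h z hlt.le hz⟩ ⟨t0, ht0⟩
    apply hω
    refine Set.mem_iUnion.2 ⟨x, Set.mem_iUnion.2 ⟨m, Set.mem_union_left _ ?_⟩⟩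
    exact ⟨hm, fun t ht hxt => absurd (hmax t hxt) (not_le.2 ht)⟩
  · intro n
    by_contra h
    push_neg at h
    obtain ⟨m, hm, hmin⟩ := Int.exists_least_of_bdd
      (P := fun t => X t ω = x) ⟨n, fun z hz => le_of_not_gt fun hlt => h z hlt.le hz⟩ ⟨t0, ht0⟩
    apply hω
    refine Set.mem_iUnion.2 ⟨x, Set.mem_iUnion.2 ⟨m, Set.mem_union_right _ ?_⟩⟩
    exact ⟨hm, fun t ht hxt => absurd (hmin t hxt) (not_le.2 ht)⟩
end

section
/- Suppose $P$ is an irreducible, aperiodic, positive recurrent transition matrix on a countable state space $S$ with stationary distribution $\pi$, and suppose $P^n$ converges uniformly to $\pi$: $\sup_{x\in S}\|P^n(x,\cdot)-\pi\|\to 0$ as $n\to\infty$. Then every Markov chain $(X_t)_{t\in\mathbb{Z}}$ indexed by all of $\mathbb{Z}$ with transition matrix $P$ is stationary; in particular $X_t\sim\pi$ for every $t\in\mathbb{Z}$. -/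
open MeasureTheory ProbabilityTheory ENNReal Filter
open scoped Classical Topology

/-- `n`-step transition probabilities of a transition matrix. -/
noncomputable def matpow {S : Type*} (p : S → S → ℝ≥0∞) : ℕ → S → S → ℝ≥0∞
  | 0, x, y => if x = y then 1 else 0
  | n+1, x, y => ∑' z, matpow p n x z * p z y

/-- Irreducibility of a transition matrix. -/
def Irreducible' {S : Type*} (p : S → S → ℝ≥0∞) : Prop := ∀ x y, ∃ n, 0 < matpow p n x y

/-- Aperiodicity: for each state, the gcd of the set of return times is 1. -/
def Aperiodic' {S : Type*} (p : S → S → ℝ≥0∞) : Prop :=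
  ∀ x, ∀ d : ℕ, (∀ n : ℕ, 0 < n → 0 < matpow p n x x → d ∣ n) → d = 1

/-- First return probability. -/
noncomputable def fret {S : Type*} (p : S → S → ℝ≥0∞) (x : S) : ℕ → S → ℝ≥0∞
  | 0, _ => 0
  | n+1, y => ∑' z, p y z * (if z = x then (if n = 0 then 1 else 0) else fret p x n z)

/-- Positive recurrence of a state for `p`. -/
def PosRecMatrix {S : Type*} (p : S → S → ℝ≥0∞) (x : S) : Prop :=
  (∑' n : ℕ, fret p x n x) = 1 ∧ (∑' n : ℕ, (n : ℝ≥0∞) * fret p x n x) < ⊤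

/-- Total variation distance between two (sub)probability vectors on `S`. -/
noncomputable def tvd {S : Type*} (μ ν : S → ℝ≥0∞) : ℝ≥0∞ :=
  ∑' y, ((μ y - ν y) + (ν y - μ y))

noncomputable def cylVal {S : Type*} (p : S → S → ℝ≥0∞) (π : S → ℝ≥0∞) (k : ℕ)
    (o : ℤ → ℕ) (F : Finset ℤ) (a : ℤ → S) : ℝ≥0∞ :=
  ∑' g : Fin (k+1) → S,
    if (∀ i ∈ F, g ⟨min (o i) k, Nat.lt_succ_of_le (min_le_right _ _)⟩ = a i)
    then π (g ⟨min k k, Nat.lt_succ_of_le (min_le_right _ _)⟩) *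
      ∏ j ∈ Finset.range k, p (g ⟨min (j+1) k, Nat.lt_succ_of_le (min_le_right _ _)⟩)
        (g ⟨min j k, Nat.lt_succ_of_le (min_le_right _ _)⟩)
    else 0


theorem matpow_succ' {S : Type*} (p : S → S → ℝ≥0∞) (n : ℕ) (x y : S) :
    matpow p (n+1) x y = ∑' z, p x z * matpow p n z y := by
  induction n generalizing y with
  | zero =>
    show (∑' z, matpow p 0 x z * p z y) = _
    simp only [matpow]
    rw [tsum_eq_single x (by intro z hz; simp [Ne.symm hz]),
        tsum_eq_single y (by intro z hz; simp [hz])]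
    simp
  | succ n ih =>
    show (∑' z, matpow p (n+1) x z * p z y) = _
    calc (∑' z, matpow p (n+1) x z * p z y)
        = ∑' z, (∑' w, p x w * matpow p n w z) * p z y := by
          congr 1; ext z; rw [ih]
      _ = ∑' z, ∑' w, p x w * matpow p n w z * p z y := by
          congr 1; ext z; rw [ENNReal.tsum_mul_right]
      _ = ∑' w, ∑' z, p x w * (matpow p n w z * p z y) := by
          rw [ENNReal.tsum_comm]; simp_rw [mul_assoc]
      _ = ∑' w, p x w * ∑' z, matpow p n w z * p z y := by
          congr 1; ext w; rw [ENNReal.tsum_mul_left]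
      _ = _ := rfl

theorem ennreal_sub_tsum {S : Type*} (f g : S → ℝ≥0∞) :
    (∑' z, f z) - (∑' z, g z) ≤ ∑' z, (f z - g z) := by
  rw [tsub_le_iff_right, ← ENNReal.tsum_add]
  exact Summable.tsum_le_tsum (fun z => le_tsub_add) ENNReal.summable ENNReal.summable

theorem ennreal_mul_sub_le (c x y : ℝ≥0∞) : c * x - c * y ≤ c * (x - y) := by
  rw [tsub_le_iff_right, ← mul_add]
  exact mul_le_mul' le_rfl le_tsub_add

theorem key_lemma {Ω S : Type*} [MeasurableSpace Ω] [MeasurableSpace S]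
    [MeasurableSingletonClass S] [Countable S] (P : Measure Ω) [IsProbabilityMeasure P]
    (p : S → S → ℝ≥0∞) (π : S → ℝ≥0∞)
    (X : ℤ → Ω → S) (hXmeas : ∀ t, Measurable (X t))
    (hE : ∀ (k : ℕ) (t : ℤ) (xs : ℕ → S), P {ω | ∀ i : ℕ, i ≤ k → X (t - i) ω = xs i}
        = π (xs k) * ∏ j ∈ Finset.range k, p (xs (j+1)) (xs j))
    (F : Finset ℤ) (a : ℤ → S) (c : ℤ) (M : ℤ) (k : ℕ) (o : ℤ → ℕ)
    (ho : ∀ i ∈ F, (o i : ℤ) = M - i) (hok : ∀ i ∈ F, o i ≤ k) :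
    P {ω | ∀ i ∈ F, X (i + c) ω = a i} = cylVal p π k o F a := by
  classical
  have hXset : ∀ (t : ℤ) (x : S), MeasurableSet {ω | X t ω = x} := fun t x =>
    hXmeas t (measurableSet_singleton x)
  have hEmeas : ∀ (t : ℤ) (kk : ℕ) (xs : ℕ → S),
      MeasurableSet {ω | ∀ i : ℕ, i ≤ kk → X (t - i) ω = xs i} := by
    intro t kk xs
    have : {ω | ∀ i : ℕ, i ≤ kk → X (t - i) ω = xs i}
        = ⋂ (i : ℕ), ⋂ (_ : i ≤ kk), {ω | X (t - i) ω = xs i} := by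
      ext ω; simp [Set.mem_iInter]
    rw [this]
    exact MeasurableSet.iInter (fun i => MeasurableSet.iInter (fun _ => hXset _ _))
  set t : ℤ := M + c with ht
  set B := {ω | ∀ i ∈ F, X (i + c) ω = a i} with hB
  have hBmeas : MeasurableSet B := by
    have : B = ⋂ (i : ℤ), ⋂ (_ : i ∈ F), {ω | X (i + c) ω = a i} := by
      ext ω; simp [hB]
    rw [this]
    exact MeasurableSet.iInter fun i => MeasurableSet.iInter fun _ => hXset _ _
  have hfc : ∀ (j : Fin (k+1)),
      (⟨min j.1 k, Nat.lt_succ_of_le (min_le_right _ _)⟩ : Fin (k+1)) = j := by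
    intro j
    apply Fin.ext
    simp only []
    omega
  -- partition over the window
  have hpartw : P B = ∑' g : Fin (k+1) → S,
      P (B ∩ {ω | ∀ i : ℕ, i ≤ k → X (t - i) ω
        = g ⟨min i k, Nat.lt_succ_of_le (min_le_right _ _)⟩}) := by
    have hd : Pairwise (Function.onFun Disjoint (fun g : Fin (k+1) → S =>
        B ∩ {ω | ∀ i : ℕ, i ≤ k → X (t - i) ω
          = g ⟨min i k, Nat.lt_succ_of_le (min_le_right _ _)⟩})) := by
      intro g g' hgg'
      simp only [Function.onFun, Set.disjoint_left]
      rintro ω ⟨-, h1⟩ ⟨-, h2⟩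
      refine hgg' (funext fun j => ?_)
      have e1 := h1 j.1 (by omega)
      have e2 := h2 j.1 (by omega)
      rw [hfc j] at e1 e2
      exact e1.symm.trans e2
    have hunion : B = ⋃ g : Fin (k+1) → S,
        (B ∩ {ω | ∀ i : ℕ, i ≤ k → X (t - i) ω
          = g ⟨min i k, Nat.lt_succ_of_le (min_le_right _ _)⟩}) := by
      ext ω
      simp only [Set.mem_iUnion, Set.mem_inter_iff, Set.mem_setOf_eq]
      constructor
      · intro hω
        refine ⟨fun j => X (t - (j.1 : ℕ)) ω, hω, fun i hi => ?_⟩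
        show X (t - i) ω = X (t - ((min i k : ℕ) : ℤ)) ω
        rw [min_eq_left hi]
      · rintro ⟨g, hω, -⟩; exact hω
    conv_lhs => rw [hunion]
    exact measure_iUnion hd
      (fun g => hBmeas.inter (hEmeas t k
        (fun i => g ⟨min i k, Nat.lt_succ_of_le (min_le_right _ _)⟩)))
  rw [hpartw, cylVal]
  congr 1
  funext g
  have hXval : ∀ (ω : Ω),
      (∀ i : ℕ, i ≤ k → X (t - i) ω
        = g ⟨min i k, Nat.lt_succ_of_le (min_le_right _ _)⟩) →
      ∀ i ∈ F, X (i + c) ω = g ⟨min (o i) k, Nat.lt_succ_of_le (min_le_right _ _)⟩ := by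
    intro ω hω i hi
    have e : i + c = t - (o i : ℤ) := by rw [ht, ho i hi]; ring
    rw [e]
    exact hω (o i) (hok i hi)
  by_cases hcompat : ∀ i ∈ F,
      g ⟨min (o i) k, Nat.lt_succ_of_le (min_le_right _ _)⟩ = a i
  · rw [if_pos hcompat]
    have hsub : {ω | ∀ i : ℕ, i ≤ k → X (t - i) ω
        = g ⟨min i k, Nat.lt_succ_of_le (min_le_right _ _)⟩} ⊆ B := by
      intro ω hω i hi
      rw [hXval ω hω i hi]
      exact hcompat i hi
    rw [Set.inter_eq_self_of_subset_right hsub, hE k t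
      (fun i => g ⟨min i k, Nat.lt_succ_of_le (min_le_right _ _)⟩)]
  · rw [if_neg hcompat]
    push_neg at hcompat
    obtain ⟨i, hi, hne⟩ := hcompat
    have : B ∩ {ω | ∀ i : ℕ, i ≤ k → X (t - i) ω
        = g ⟨min i k, Nat.lt_succ_of_le (min_le_right _ _)⟩} = ∅ := by
      ext ω
      simp only [Set.mem_inter_iff, Set.mem_setOf_eq, Set.mem_empty_iff_false, iff_false,
        not_and]
      intro hBω hω
      exact hne ((hXval ω hω i hi).symm.trans (hBω i hi))
    rw [this, measure_empty]

/-- If `Pⁿ` converges uniformly to the stationary distribution `π`, then every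
Markov chain indexed by all of `ℤ` with transition matrix `P` is stationary; in
particular `X_t ∼ π` for every `t ∈ ℤ`. -/
theorem bi_infinite_chain_stationary_of_uniform_convergence
    {Ω S : Type*} [MeasurableSpace Ω] [MeasurableSpace S] [MeasurableSingletonClass S]
    [Countable S] (P : Measure Ω) [IsProbabilityMeasure P]
    (p : S → S → ℝ≥0∞) (hrow : ∀ x, ∑' y, p x y = 1)
    (hirr : Irreducible' p) (haper : Aperiodic' p) (hposrec : ∀ x, PosRecMatrix p x)
    (π : S → ℝ≥0∞) (hπsum : ∑' x, π x = 1)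
    (hπstat : ∀ y, ∑' x, π x * p x y = π y)
    (huniform : Tendsto (fun n => ⨆ x : S, tvd (matpow p n x) π) atTop (𝓝 0))
    (X : ℤ → Ω → S) (hXmeas : ∀ t, Measurable (X t))
    (hmarkov : ∀ (t : ℤ) (k : ℕ) (x : S) (xs : ℕ → S),
      P ({ω | X (t + 1) ω = x} ∩ {ω | ∀ i : ℕ, i ≤ k → X (t - i) ω = xs i})
        = p (xs 0) x * P {ω | ∀ i : ℕ, i ≤ k → X (t - i) ω = xs i}) :
    (Measure.map (fun ω (t : ℤ) => X (t + 1) ω) P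
        = Measure.map (fun ω (t : ℤ) => X t ω) P)
      ∧ ∀ (t : ℤ) (y : S), P {ω | X t ω = y} = π y := by
  -- The marginal distribution of `X t` is `π` for every `t`.
  have hmu : ∀ (t : ℤ) (y : S), P {ω | X t ω = y} = π y := by
    set μ : ℤ → S → ℝ≥0∞ := fun t x => P {ω | X t ω = x} with hμdef
    have hXset : ∀ (t : ℤ) (x : S), MeasurableSet {ω | X t ω = x} := by
      intro t x
      exact hXmeas t (measurableSet_singleton x)
    -- partition lemma
    have hpart : ∀ (t : ℤ) (B : Set Ω), MeasurableSet B →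
        P B = ∑' z : S, P (B ∩ {ω | X t ω = z}) := by
      intro t B hB
      rw [← measure_iUnion (fun z z' hzz' => by
          simp only [Function.onFun, Set.disjoint_left]
          rintro ω ⟨-, h1⟩ ⟨-, h2⟩
          exact hzz' (h1.symm.trans h2))
        (fun z => hB.inter (hXset t z))]
      congr 1
      ext ω
      simp only [Set.mem_iUnion, Set.mem_inter_iff, Set.mem_setOf_eq]
      constructor
      · intro h; exact ⟨X t ω, h, rfl⟩
      · rintro ⟨z, h, -⟩; exact h
    have hμ1 : ∀ t, ∑' z, μ t z = 1 := by
      intro t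
      have := hpart t Set.univ MeasurableSet.univ
      simpa [hμdef] using this.symm
    -- one step evolution
    have hstep : ∀ (t : ℤ) (x : S), μ (t+1) x = ∑' z, p z x * μ t z := by
      intro t x
      have h0 : ∀ z : S, {ω | ∀ i : ℕ, i ≤ 0 → X (t - i) ω = (fun _ => z) i}
          = {ω | X t ω = z} := by
        intro z
        ext ω
        simp only [Set.mem_setOf_eq]
        constructor
        · intro h; simpa using h 0 le_rfl
        · intro h i hi
          interval_cases i
          simpa using h
      calc μ (t+1) x = ∑' z, P ({ω | X (t+1) ω = x} ∩ {ω | X t ω = z}) :=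
            hpart t _ (hXset (t+1) x)
        _ = ∑' z, p z x * μ t z := by
            congr 1; ext z
            have := hmarkov t 0 x (fun _ => z)
            rw [h0 z] at this
            exact this
    -- n-step evolution
    have hiter : ∀ (n : ℕ) (t : ℤ) (x : S), μ t x = ∑' z, μ (t - n) z * matpow p n z x := by
      intro n
      induction n with
      | zero =>
        intro t x
        rw [tsum_eq_single x (by intro z hz; simp [matpow, hz])]
        simp [matpow]
      | succ n ih =>
        intro t x
        have e1 : ∀ z, μ (t - n) z = ∑' w, p w z * μ (t - n - 1) w := by
          intro z
          have := hstep (t - n - 1) z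
          rw [show t - (n:ℤ) - 1 + 1 = t - n by ring] at this
          exact this
        calc μ t x = ∑' z, μ (t - n) z * matpow p n z x := ih t x
          _ = ∑' z, (∑' w, p w z * μ (t - n - 1) w) * matpow p n z x := by
              congr 1; ext z; rw [e1 z]
          _ = ∑' z, ∑' w, p w z * μ (t - n - 1) w * matpow p n z x := by
              congr 1; ext z; rw [ENNReal.tsum_mul_right]
          _ = ∑' w, ∑' z, μ (t - n - 1) w * (p w z * matpow p n z x) := by
              rw [ENNReal.tsum_comm]
              congr 1; ext z; congr 1; ext w; ring
          _ = ∑' w, μ (t - n - 1) w * ∑' z, p w z * matpow p n z x := by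
              congr 1; ext w; rw [ENNReal.tsum_mul_left]
          _ = ∑' w, μ (t - (n+1 : ℕ)) w * matpow p (n+1) w x := by
              congr 1; ext w
              rw [matpow_succ', show t - ((n:ℕ)+1 : ℕ) = t - (n:ℤ) - 1 by push_cast; ring]
    -- tvd bound
    have htvd : ∀ (n : ℕ) (t : ℤ), tvd (μ t) π ≤ ⨆ x : S, tvd (matpow p n x) π := by
      intro n t
      set s := t - (n : ℤ) with hs
      have hπ' : ∀ y, π y = ∑' z, μ s z * π y := by
        intro y
        rw [ENNReal.tsum_mul_right, hμ1 s, one_mul]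
      calc tvd (μ t) π
          = ∑' y, ((μ t y - π y) + (π y - μ t y)) := rfl
        _ ≤ ∑' y, ∑' z, μ s z * ((matpow p n z y - π y) + (π y - matpow p n z y)) := by
            refine Summable.tsum_le_tsum (fun y => ?_) ENNReal.summable ENNReal.summable
            conv_lhs => rw [hiter n t y, hπ' y]
            refine le_trans (add_le_add (ennreal_sub_tsum _ _) (ennreal_sub_tsum _ _)) ?_
            rw [← ENNReal.tsum_add]
            refine Summable.tsum_le_tsum (fun z => ?_) ENNReal.summable ENNReal.summable
            rw [mul_add]
            exact add_le_add (ennreal_mul_sub_le _ _ _) (ennreal_mul_sub_le _ _ _)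
        _ = ∑' z, μ s z * tvd (matpow p n z) π := by
            rw [ENNReal.tsum_comm]
            congr 1; ext z
            rw [tvd, ENNReal.tsum_mul_left]
        _ ≤ ∑' z, μ s z * ⨆ x : S, tvd (matpow p n x) π := by
            refine Summable.tsum_le_tsum (fun z => ?_) ENNReal.summable ENNReal.summable
            exact mul_le_mul' le_rfl (le_iSup (fun x => tvd (matpow p n x) π) z)
        _ = ⨆ x : S, tvd (matpow p n x) π := by
            rw [ENNReal.tsum_mul_right, hμ1, one_mul]
    intro t y
    have h0 : tvd (μ t) π = 0 :=
      le_antisymm (ge_of_tendsto' huniform (fun n => htvd n t)) zero_le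
    have h1 := (ENNReal.tsum_eq_zero.mp h0) y
    rw [add_eq_zero] at h1
    exact le_antisymm (tsub_eq_zero_iff_le.mp h1.1) (tsub_eq_zero_iff_le.mp h1.2)
  refine ⟨?_, hmu⟩
  have hS : Nonempty S := by
    by_contra h
    rw [not_nonempty_iff] at h
    rw [tsum_empty] at hπsum
    exact zero_ne_one hπsum
  have hXset : ∀ (t : ℤ) (x : S), MeasurableSet {ω | X t ω = x} := by
    intro t x
    exact hXmeas t (measurableSet_singleton x)
  have hEmeas : ∀ (t : ℤ) (k : ℕ) (xs : ℕ → S),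
      MeasurableSet {ω | ∀ i : ℕ, i ≤ k → X (t - i) ω = xs i} := by
    intro t k xs
    have : {ω | ∀ i : ℕ, i ≤ k → X (t - i) ω = xs i}
        = ⋂ (i : ℕ), ⋂ (_ : i ≤ k), {ω | X (t - i) ω = xs i} := by
      ext ω; simp [Set.mem_iInter]
    rw [this]
    exact MeasurableSet.iInter (fun i => MeasurableSet.iInter (fun _ => hXset _ _))
  -- FDD formula
  have hE : ∀ (k : ℕ) (t : ℤ) (xs : ℕ → S),
      P {ω | ∀ i : ℕ, i ≤ k → X (t - i) ω = xs i}
        = π (xs k) * ∏ j ∈ Finset.range k, p (xs (j+1)) (xs j) := by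
    intro k
    induction k with
    | zero =>
      intro t xs
      have : {ω | ∀ i : ℕ, i ≤ 0 → X (t - i) ω = xs i} = {ω | X t ω = xs 0} := by
        ext ω
        simp only [Set.mem_setOf_eq]
        constructor
        · intro h; simpa using h 0 le_rfl
        · intro h i hi; interval_cases i; simpa using h
      rw [this, hmu t (xs 0)]
      simp
    | succ k ih =>
      intro t xs
      have hset : {ω | ∀ i : ℕ, i ≤ k + 1 → X (t - i) ω = xs i}
          = {ω | X ((t-1) + 1) ω = xs 0}
            ∩ {ω | ∀ i : ℕ, i ≤ k → X ((t-1) - i) ω = (fun j => xs (j+1)) i} := by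
        ext ω
        simp only [Set.mem_setOf_eq, Set.mem_inter_iff]
        constructor
        · intro h
          refine ⟨by simpa using h 0 (by omega), fun i hi => ?_⟩
          have e : (t:ℤ) - 1 - (i:ℕ) = t - ((i+1 : ℕ) : ℤ) := by push_cast; ring
          rw [e]
          exact h (i+1) (by omega)
        · rintro ⟨h0, h⟩ i hi
          match i with
          | 0 => simpa using h0
          | (j+1) =>
            have e : (t:ℤ) - ((j+1 : ℕ) : ℤ) = t - 1 - (j:ℕ) := by push_cast; ring
            rw [e]
            exact h j (by omega)
      rw [hset, hmarkov (t-1) k (xs 0) (fun j => xs (j+1)),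
        ih (t-1) (fun j => xs (j+1)), Finset.prod_range_succ']
      ring
  have hshift : ∀ (F : Finset ℤ) (a : ℤ → S) (c d : ℤ),
      P {ω | ∀ i ∈ F, X (i + c) ω = a i} = P {ω | ∀ i ∈ F, X (i + d) ω = a i} := by
    intro F a c d
    rcases F.eq_empty_or_nonempty with rfl | hF
    · simp
    · have ho : ∀ i ∈ F, (((F.max' hF - i).toNat : ℕ) : ℤ) = F.max' hF - i := by
        intro i hi
        exact Int.toNat_of_nonneg (by linarith [F.le_max' i hi])
      have hok : ∀ i ∈ F, (F.max' hF - i).toNat ≤ (F.max' hF - F.min' hF).toNat := by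
        intro i hi
        have h1 := F.min'_le i hi
        have h2 := F.le_max' i hi
        omega
      rw [key_lemma P p π X hXmeas hE F a c (F.max' hF) ((F.max' hF - F.min' hF).toNat)
          (fun i => (F.max' hF - i).toNat) ho hok,
        key_lemma P p π X hXmeas hE F a d (F.max' hF) ((F.max' hF - F.min' hF).toNat)
          (fun i => (F.max' hF - i).toNat) ho hok]
  have hm1 : Measurable (fun ω (t : ℤ) => X (t + 1) ω) :=
    measurable_pi_lambda _ (fun t => hXmeas (t + 1))
  have hm0 : Measurable (fun ω (t : ℤ) => X t ω) :=
    measurable_pi_lambda _ (fun t => hXmeas t)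
  haveI : IsProbabilityMeasure (Measure.map (fun ω (t : ℤ) => X (t + 1) ω) P) :=
    Measure.isProbabilityMeasure_map hm1.aemeasurable
  haveI : IsProbabilityMeasure (Measure.map (fun ω (t : ℤ) => X t ω) P) :=
    Measure.isProbabilityMeasure_map hm0.aemeasurable
  refine ext_of_generate_finite (measurableCylinders (fun _ : ℤ => S))
    generateFrom_measurableCylinders.symm isPiSystem_measurableCylinders
    (fun s hs => ?_) (by simp)
  obtain ⟨I, A, hA, rfl⟩ := (mem_measurableCylinders _).mp hs
  rw [Measure.map_apply hm1 (hA.cylinder I), Measure.map_apply hm0 (hA.cylinder I)]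
  -- decompose over points of A
  have hdecomp : ∀ c : ℤ,
      P ((fun ω (t : ℤ) => X (t + c) ω) ⁻¹' cylinder I A)
        = ∑' b : A, P {ω | ∀ i : I, X ((i : ℤ) + c) ω = b.1 i} := by
    intro c
    have hd : Pairwise (Function.onFun Disjoint (fun b : A =>
        {ω | ∀ i : I, X ((i : ℤ) + c) ω = b.1 i})) := by
      intro b b' hbb'
      simp only [Function.onFun, Set.disjoint_left, Set.mem_setOf_eq]
      intro ω h1 h2
      exact hbb' (Subtype.ext (funext fun i => (h1 i).symm.trans (h2 i)))
    have hunion : (fun ω (t : ℤ) => X (t + c) ω) ⁻¹' cylinder I A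
        = ⋃ b : A, {ω | ∀ i : I, X ((i : ℤ) + c) ω = b.1 i} := by
      ext ω
      simp only [Set.mem_preimage, mem_cylinder, Set.mem_iUnion, Set.mem_setOf_eq]
      constructor
      · intro h
        exact ⟨⟨I.restrict (fun t => X (t + c) ω), h⟩, fun i => rfl⟩
      · rintro ⟨b, hb⟩
        have : I.restrict (fun t => X (t + c) ω) = b.1 := funext fun i => hb i
        rw [this]
        exact b.2
    rw [hunion]
    exact measure_iUnion hd (fun b => by
      have : {ω | ∀ i : I, X ((i : ℤ) + c) ω = b.1 i}
          = ⋂ i : I, {ω | X ((i : ℤ) + c) ω = b.1 i} := by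
        ext ω; simp [Set.mem_iInter]
      rw [this]
      exact MeasurableSet.iInter (fun i => hXmeas _ (measurableSet_singleton _)))
  have h0 : P ((fun ω (t : ℤ) => X t ω) ⁻¹' cylinder I A)
      = P ((fun ω (t : ℤ) => X (t + 0) ω) ⁻¹' cylinder I A) := by
    simp only [add_zero]
  rw [show (fun ω (t : ℤ) => X (t + 1) ω) ⁻¹' cylinder I A
      = (fun ω (t : ℤ) => X (t + (1:ℤ)) ω) ⁻¹' cylinder I A from rfl, h0,
    hdecomp 1, hdecomp 0]
  congr 1
  funext b
  -- convert subtype-indexed conditions to Finset membership form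
  have conv : ∀ c : ℤ, {ω | ∀ i : I, X ((i : ℤ) + c) ω = b.1 i}
      = {ω | ∀ i ∈ I, X (i + c) ω
          = (fun z => if h : z ∈ I then b.1 ⟨z, h⟩ else Classical.arbitrary S) i} := by
    intro c
    ext ω
    simp only [Set.mem_setOf_eq]
    constructor
    · intro h i hi
      rw [dif_pos hi]
      exact h ⟨i, hi⟩
    · intro h i
      have := h i.1 i.2
      rwa [dif_pos i.2] at this
  rw [conv 1, conv 0]
  exact hshift I _ 1 0
end

section
/- Suppose the Doeblin graph $\mathbb{G}$ is almost surely connected (an EFT) and $x^*$ is positive recurrent. Then there exists a state path $(\beta_t)_{t\in\mathbb{Z}}$ in $\mathbb{G}$, unique up to null sets, whose set of visit times to $x^*$ is a.s. unbounded above and below. Moreover $(\beta_t)_{t\in\mathbb{Z}}$ is stationary, for each $t$ the random variable $\beta_t$ is measurable with respect to $\sigma(\xi_s : s < t)$, and $(\beta_t)$ is bi-recurrent for every positive recurrent state $x\in S$. -/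
open MeasureTheory ProbabilityTheory ENNReal
open scoped Classical

/-- The state path in the Doeblin graph. -/
def Fpath {S Ξ Ω : Type*} (h : S → Ξ → S) (ξ : ℤ → Ω → Ξ) (ω : Ω) (t : ℤ) (x : S) : ℕ → S
  | 0 => x
  | n+1 => h (Fpath h ξ ω t x n) (ξ (t + n) ω)

/-- Time until return to `y` of the path started at `(t,x)` (`⊤` if no return). -/
noncomputable def retTime {S Ξ Ω : Type*} (h : S → Ξ → S) (ξ : ℤ → Ω → Ξ)
    (t : ℤ) (x y : S) (ω : Ω) : ℝ≥0∞ :=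
  sInf {c : ℝ≥0∞ | ∃ r : ℕ, c = r ∧ 0 < r ∧ Fpath h ξ ω t x r = y}

/-- Two vertices of the Doeblin graph are in the same component iff their
forward paths merge. -/
def Merge {S Ξ Ω : Type*} (h : S → Ξ → S) (ξ : ℤ → Ω → Ξ) (ω : Ω) (u v : ℤ × S) : Prop :=
  ∃ k l : ℕ, u.1 + k = v.1 + l ∧ Fpath h ξ ω u.1 u.2 k = Fpath h ξ ω v.1 v.2 l

set_option linter.unusedSectionVars false

namespace DGaux

variable {S Ξ : Type*} (h : S → Ξ → S)

/-- Path driven by a deterministic sequence `f`. -/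
def dp (f : ℤ → Ξ) (t : ℤ) (y : S) : ℕ → S := Fpath h (fun u (g : ℤ → Ξ) => g u) f t y

@[simp] lemma dp_zero (f : ℤ → Ξ) (t : ℤ) (y : S) : dp h f t y 0 = y := rfl

lemma dp_succ (f : ℤ → Ξ) (t : ℤ) (y : S) (n : ℕ) :
    dp h f t y (n+1) = h (dp h f t y n) (f (t + n)) := rfl

lemma fpath_eq_dp {Ω : Type*} (ξ : ℤ → Ω → Ξ) (ω : Ω) (t : ℤ) (y : S) (n : ℕ) :
    Fpath h ξ ω t y n = dp h (fun u => ξ u ω) t y n := by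
  induction n with
  | zero => rfl
  | succ n ih => show h _ _ = h _ _; rw [ih]; rfl

variable (x : S)

/-- State at time `t` of the path started at `(c,x)`. -/
def stA (f : ℤ → Ξ) (c t : ℤ) : S := dp h f c x (t - c).toNat

@[simp] lemma stA_self (f : ℤ → Ξ) (c : ℤ) : stA h x f c c = x := by
  simp [stA]

lemma stA_succ (f : ℤ → Ξ) {c t : ℤ} (hct : c ≤ t) :
    stA h x f c (t+1) = h (stA h x f c t) (f t) := by
  have h1 : (t + 1 - c).toNat = (t - c).toNat + 1 := by omega
  have h2 : c + ((t - c).toNat : ℤ) = t := by omega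
  rw [stA, h1, dp_succ, h2]; rfl

lemma stA_of_eq {x' : S} {f : ℤ → Ξ} {c c' t0 : ℤ} (hc : c ≤ t0) (hc' : c' ≤ t0)
    (hbase : stA h x f c t0 = stA h x' f c' t0) :
    ∀ t, t0 ≤ t → stA h x f c t = stA h x' f c' t := by
  refine Int.le_induction hbase ?_
  intro t ht ih
  rw [stA_succ h x f (le_trans hc ht), stA_succ h x' f (le_trans hc' ht), ih]

def vis (f : ℤ → Ξ) (s t : ℤ) : Prop := s ≤ t ∧ stA h x f s t = x

lemma vis_self (f : ℤ → Ξ) (s : ℤ) : vis h x f s s := ⟨le_refl _, stA_self h x f s⟩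

lemma stA_restart {f : ℤ → Ξ} {s v t : ℤ} (hv : vis h x f s v) (hvt : v ≤ t) :
    stA h x f s t = stA h x f v t := by
  refine stA_of_eq h x hv.1 (le_refl v) ?_ t hvt
  rw [hv.2, stA_self]

lemma vis_trans {f : ℤ → Ξ} {s v t : ℤ} (h1 : vis h x f s v) (h2 : vis h x f v t) :
    vis h x f s t :=
  ⟨le_trans h1.1 h2.1, by rw [stA_restart h x h1 h2.1]; exact h2.2⟩

def vstr (f : ℤ → Ξ) (t : ℤ) : Prop := ∃ S0 : ℤ, ∀ s, s ≤ S0 → vis h x f s t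

def isTau (f : ℤ → Ξ) (t v : ℤ) : Prop :=
  vstr h x f v ∧ v ≤ t ∧ ∀ w, vstr h x f w → w ≤ t → w ≤ v

noncomputable def bfun (f : ℤ → Ξ) (t : ℤ) : S :=
  if H : ∃ v, isTau h x f t v then stA h x f H.choose t else x

theorem vstr_nonempty {f : ℤ → Ξ}
    (Hmer : ∀ c c' : ℤ, ∃ t0, c ≤ t0 ∧ c' ≤ t0 ∧ stA h x f c t0 = stA h x f c' t0)
    (Hret : ∀ t : ℤ, ∃ r : ℕ, 0 < r ∧ vis h x f t (t + r))
    (Hbnd : ∃ m : ℤ, ∀ u : ℤ, u ≤ -1 → ∃ c, u < c ∧ c < m ∧ vis h x f u c) :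
    ∃ v, vstr h x f v := by
  obtain ⟨m, hm⟩ := Hbnd
  set M : ℤ := max m 1 with hM
  have cross : ∀ s : ℤ, s ≤ 0 → ∃ c, 0 ≤ c ∧ c < M ∧ vis h x f s c := by
    intro s hs
    rcases eq_or_lt_of_le hs with hs0 | hs0
    · exact ⟨0, le_refl _, by omega, hs0 ▸ vis_self h x f s⟩
    · have hs1 : s ≤ -1 := by omega
      obtain ⟨u, ⟨hu1, hu2, hu3⟩, humax⟩ :=
        Int.exists_greatest_of_bdd (P := fun u => s ≤ u ∧ u ≤ -1 ∧ vis h x f s u)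
          ⟨-1, fun z hz => hz.2.1⟩ ⟨s, le_refl s, hs1, vis_self h x f s⟩
      obtain ⟨c, hc1, hc2, hc3⟩ := hm u hu2
      have hsc : vis h x f s c := vis_trans h x hu3 hc3
      have hc0 : 0 ≤ c := by
        by_contra hc0
        have : c ≤ u := humax c ⟨le_trans hu1 (le_of_lt hc1), by omega, hsc⟩
        omega
      exact ⟨c, hc0, by omega, hsc⟩
  have merge : ∀ k : ℕ, ∃ T : ℤ, 0 ≤ T ∧ ∀ c : ℤ, 0 ≤ c → c ≤ (k : ℤ) →
      ∀ t, T ≤ t → stA h x f c t = stA h x f 0 t := by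
    intro k
    induction k with
    | zero =>
        refine ⟨0, le_refl _, fun c h0 hk t ht => ?_⟩
        have hc : c = 0 := by omega
        rw [hc]
    | succ k ih =>
        obtain ⟨T, hT0, hT⟩ := ih
        obtain ⟨t0, h1, h2, heq⟩ := Hmer ((k : ℤ) + 1) 0
        refine ⟨max (max T t0) ((k:ℤ)+1), by omega, fun c h0 hk t ht => ?_⟩
        rcases le_or_gt c k with hck | hck
        · exact hT c h0 hck t (by omega)
        · have : c = (k : ℤ) + 1 := by push_cast at hk ⊢; omega
          subst this
          exact stA_of_eq h x h1 h2 heq t (by omega)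
  have up : ∀ j : ℕ, ∃ t : ℤ, (j : ℤ) ≤ t ∧ 0 ≤ t ∧ vis h x f 0 t := by
    intro j
    induction j with
    | zero => exact ⟨0, by omega, le_refl _, vis_self h x f 0⟩
    | succ j ih =>
        obtain ⟨t, ht1, ht2, ht3⟩ := ih
        obtain ⟨r, hr0, hrv⟩ := Hret t
        exact ⟨t + r, by push_cast; omega, by omega, vis_trans h x ht3 hrv⟩
  obtain ⟨T, hT0, hTm⟩ := merge M.toNat
  obtain ⟨t0, ht1, ht2, ht3⟩ := up (max T M).toNat
  have htT : T ≤ t0 := by omega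
  have htM : M ≤ t0 := by omega
  refine ⟨t0, 0, fun s hs => ?_⟩
  obtain ⟨c, hc0, hcM, hsc⟩ := cross s hs
  refine ⟨by omega, ?_⟩
  rw [stA_restart h x hsc (by omega)]
  rw [hTm c hc0 (by omega) t0 htT]
  exact ht3.2

theorem vstr_succ {f : ℤ → Ξ} (Hret : ∀ t : ℤ, ∃ r : ℕ, 0 < r ∧ vis h x f t (t + r))
    {t : ℤ} (hv : vstr h x f t) : ∃ t', t < t' ∧ vstr h x f t' := by
  obtain ⟨S0, hS0⟩ := hv
  obtain ⟨r, hr0, hrv⟩ := Hret t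
  exact ⟨t + r, by omega, S0, fun s hs => vis_trans h x (hS0 s hs) hrv⟩

theorem vstr_unbdd_above {f : ℤ → Ξ} (Hret : ∀ t : ℤ, ∃ r : ℕ, 0 < r ∧ vis h x f t (t + r))
    (hne : ∃ v, vstr h x f v) : ∀ n : ℤ, ∃ t, n ≤ t ∧ vstr h x f t := by
  obtain ⟨v0, hv0⟩ := hne
  have key : ∀ j : ℕ, ∃ t, v0 + (j : ℤ) ≤ t ∧ vstr h x f t := by
    intro j
    induction j with
    | zero => exact ⟨v0, by omega, hv0⟩
    | succ j ih =>
        obtain ⟨t, ht1, ht2⟩ := ih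
        obtain ⟨t', ht1', ht2'⟩ := vstr_succ h x Hret ht2
        exact ⟨t', by push_cast; omega, ht2'⟩
  intro n
  obtain ⟨t, ht1, ht2⟩ := key (n - v0).toNat
  exact ⟨t, by omega, ht2⟩

theorem vstr_coherent {f : ℤ → Ξ} {v w : ℤ} (hv : vstr h x f v) (hw : vstr h x f w)
    (hvw : v ≤ w) : vis h x f v w := by
  obtain ⟨Sv, hSv⟩ := hv
  obtain ⟨Sw, hSw⟩ := hw
  have h1 := hSv (min Sv Sw) (min_le_left _ _)
  have h2 := hSw (min Sv Sw) (min_le_right _ _)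
  exact ⟨hvw, by rw [← stA_restart h x h1 hvw]; exact h2.2⟩

theorem isTau_unique {f : ℤ → Ξ} {t v v' : ℤ} (h1 : isTau h x f t v) (h2 : isTau h x f t v') :
    v = v' :=
  le_antisymm (h2.2.2 v h1.1 h1.2.1) (h1.2.2 v' h2.1 h2.2.1)

theorem exists_isTau {f : ℤ → Ξ} (Hlb : ∀ n : ℤ, ∃ v, v ≤ n ∧ vstr h x f v) (t : ℤ) :
    ∃ v, isTau h x f t v := by
  obtain ⟨v0, hv1, hv2⟩ := Hlb t
  obtain ⟨v, ⟨hva, hvb⟩, hvmax⟩ :=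
    Int.exists_greatest_of_bdd (P := fun v => vstr h x f v ∧ v ≤ t)
      ⟨t, fun z hz => hz.2⟩ ⟨v0, hv2, hv1⟩
  exact ⟨v, hva, hvb, fun w hw hwt => hvmax w ⟨hw, hwt⟩⟩

theorem bfun_eq_of_isTau {f : ℤ → Ξ} {t v : ℤ} (hv : isTau h x f t v) :
    bfun h x f t = stA h x f v t := by
  have H : ∃ v, isTau h x f t v := ⟨v, hv⟩
  rw [bfun, dif_pos H]
  exact congrArg (fun z => stA h x f z t) (isTau_unique h x H.choose_spec hv)

theorem bfun_at_vstr {f : ℤ → Ξ} {v : ℤ} (hv : vstr h x f v) : bfun h x f v = x := by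
  rw [bfun_eq_of_isTau h x ⟨hv, le_refl v, fun w _ hw => hw⟩, stA_self]

theorem bfun_agree {f : ℤ → Ξ} (Hlb : ∀ n : ℤ, ∃ v, v ≤ n ∧ vstr h x f v)
    {v t : ℤ} (hv : vstr h x f v) (ht : v ≤ t) : bfun h x f t = stA h x f v t := by
  obtain ⟨τ, hτ⟩ := exists_isTau h x Hlb t
  rw [bfun_eq_of_isTau h x hτ]
  exact (stA_restart h x (vstr_coherent h x hv hτ.1 (hτ.2.2 v hv ht)) hτ.2.1).symm

theorem bfun_path {f : ℤ → Ξ} (Hlb : ∀ n : ℤ, ∃ v, v ≤ n ∧ vstr h x f v) (t : ℤ) :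
    bfun h x f (t+1) = h (bfun h x f t) (f t) := by
  obtain ⟨τ, hτ⟩ := exists_isTau h x Hlb t
  by_cases hv : vstr h x f (t+1)
  · rw [bfun_at_vstr h x hv, bfun_eq_of_isTau h x hτ]
    have h1 : vis h x f τ (t+1) := vstr_coherent h x hτ.1 hv (le_trans hτ.2.1 (by omega))
    rw [← stA_succ h x f hτ.2.1]
    exact h1.2.symm
  · have hτ' : isTau h x f (t+1) τ := by
      refine ⟨hτ.1, le_trans hτ.2.1 (by omega), fun w hw hwt => ?_⟩
      rcases eq_or_lt_of_le hwt with he | hl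
      · exact absurd (he ▸ hw) hv
      · exact hτ.2.2 w hw (by omega)
    rw [bfun_eq_of_isTau h x hτ', bfun_eq_of_isTau h x hτ, stA_succ h x f hτ.2.1]

theorem bfun_unique {f : ℤ → Ξ} (Hlb : ∀ n : ℤ, ∃ v, v ≤ n ∧ vstr h x f v)
    (g : ℤ → S) (hg : ∀ t, g (t+1) = h (g t) (f t))
    (hrec : ∀ n : ℤ, ∃ w, w ≤ n ∧ g w = x) (t : ℤ) : g t = bfun h x f t := by
  obtain ⟨τ, hτ⟩ := exists_isTau h x Hlb t
  obtain ⟨S0, hS0⟩ := hτ.1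
  obtain ⟨w, hw, hgw⟩ := hrec (min S0 τ)
  have hfollow : ∀ u, w ≤ u → g u = stA h x f w u := by
    refine Int.le_induction ?_ ?_
    · rw [stA_self]; exact hgw
    · intro u hu ih
      rw [hg u, ih, stA_succ h x f hu]
  have hvwτ : vis h x f w τ := hS0 w (le_trans hw (min_le_left _ _))
  have hwt : w ≤ t := le_trans (le_trans hw (min_le_right _ _)) hτ.2.1
  rw [hfollow t hwt, stA_restart h x hvwτ hτ.2.1, bfun_eq_of_isTau h x hτ]

/-! shift lemmas -/

lemma dp_shift (f : ℤ → Ξ) (t : ℤ) (y : S) (n : ℕ) :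
    dp h (fun u => f (u+1)) t y n = dp h f (t+1) y n := by
  induction n with
  | zero => rfl
  | succ n ih =>
      rw [dp_succ, dp_succ, ih]
      have : t + (n : ℤ) + 1 = t + 1 + n := by omega
      rw [this]

lemma stA_shift (f : ℤ → Ξ) (c t : ℤ) :
    stA h x (fun u => f (u+1)) c t = stA h x f (c+1) (t+1) := by
  rw [stA, stA, dp_shift]
  congr 1
  omega

lemma vis_shift (f : ℤ → Ξ) (s t : ℤ) :
    vis h x (fun u => f (u+1)) s t ↔ vis h x f (s+1) (t+1) := by
  unfold vis
  rw [stA_shift]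
  constructor <;> rintro ⟨h1, h2⟩ <;> exact ⟨by omega, h2⟩

lemma vstr_shift (f : ℤ → Ξ) (t : ℤ) :
    vstr h x (fun u => f (u+1)) t ↔ vstr h x f (t+1) := by
  constructor
  · rintro ⟨S0, hS0⟩
    refine ⟨S0 + 1, fun s hs => ?_⟩
    have := (vis_shift h x f (s-1) t).1 (hS0 (s-1) (by omega))
    simpa using this
  · rintro ⟨S0, hS0⟩
    exact ⟨S0 - 1, fun s hs => (vis_shift h x f s t).2 (hS0 (s+1) (by omega))⟩

lemma isTau_shift (f : ℤ → Ξ) (t v : ℤ) :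
    isTau h x (fun u => f (u+1)) t v ↔ isTau h x f (t+1) (v+1) := by
  unfold isTau
  rw [vstr_shift]
  constructor
  · rintro ⟨h1, h2, h3⟩
    refine ⟨h1, by omega, fun w hw hwt => ?_⟩
    have := h3 (w-1) (by rw [vstr_shift]; simpa using hw) (by omega)
    omega
  · rintro ⟨h1, h2, h3⟩
    refine ⟨h1, by omega, fun w hw hwt => ?_⟩
    have := h3 (w+1) ((vstr_shift h x f w).1 hw) (by omega)
    omega

lemma bfun_shift (f : ℤ → Ξ) (t : ℤ) :
    bfun h x (fun u => f (u+1)) t = bfun h x f (t+1) := by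
  by_cases H : ∃ v, isTau h x (fun u => f (u+1)) t v
  · obtain ⟨v, hv⟩ := H
    rw [bfun_eq_of_isTau h x hv, bfun_eq_of_isTau h x ((isTau_shift h x f t v).1 hv),
      stA_shift]
  · have H' : ¬ ∃ v, isTau h x f (t+1) v := by
      rintro ⟨v, hv⟩
      exact H ⟨v - 1, (isTau_shift h x f t (v-1)).2 (by simpa using hv)⟩
    rw [bfun, bfun, dif_neg H, dif_neg H']


/-! ## Measurability -/

section Meas

variable {Ω : Type*} [MeasurableSpace Ξ] [MeasurableSpace S]
  [MeasurableSingletonClass S] [Countable S]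

lemma meas_happ (hhmeas : ∀ x, Measurable (h x))
    {α : Type*} {m : MeasurableSpace α} {F : α → S} {G : α → Ξ}
    (hF : Measurable F) (hG : Measurable G) : Measurable fun a => h (F a) (G a) := by
  intro E hE
  have : (fun a => h (F a) (G a)) ⁻¹' E = ⋃ y : S, F ⁻¹' {y} ∩ G ⁻¹' (h y ⁻¹' E) := by
    ext a
    simp only [Set.mem_preimage, Set.mem_iUnion, Set.mem_inter_iff, Set.mem_singleton_iff]
    exact ⟨fun ha => ⟨F a, rfl, ha⟩, fun ⟨y, hy, ha⟩ => by rw [hy]; exact ha⟩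
  rw [this]
  exact MeasurableSet.iUnion fun y => (hF (measurableSet_singleton y)).inter (hG (hhmeas y hE))

variable (ξ : ℤ → Ω → Ξ)

lemma meas_fpath_lt {m' : MeasurableSpace Ω} (hhmeas : ∀ x, Measurable (h x)) (t : ℤ)
    (hm : ∀ s : ℤ, s < t → @Measurable Ω Ξ m' _ (ξ s)) (y : S) :
    ∀ (n : ℕ) (s : ℤ), s + n ≤ t → @Measurable Ω S m' _ (fun ω => Fpath h ξ ω s y n) := by
  intro n
  induction n with
  | zero => exact fun s _ => measurable_const
  | succ n ih =>
      intro s hs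
      exact meas_happ h hhmeas (ih s (by omega)) (hm (s + n) (by omega))

/-- `stA` at the level of `ω`, for indices `≤ t`, is measurable. -/
lemma meas_stA_lt {m' : MeasurableSpace Ω} (hhmeas : ∀ x, Measurable (h x)) (t : ℤ)
    (hm : ∀ s : ℤ, s < t → @Measurable Ω Ξ m' _ (ξ s)) {s v : ℤ} (hsv : s ≤ v) (hvt : v ≤ t) :
    @Measurable Ω S m' _ (fun ω => stA h x (fun u => ξ u ω) s v) := by
  have : ∀ ω, stA h x (fun u => ξ u ω) s v = Fpath h ξ ω s x (v - s).toNat := by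
    intro ω; rw [stA, fpath_eq_dp]
  simp only [this]
  exact meas_fpath_lt h ξ hhmeas t hm x ((v - s).toNat) s (by omega)

lemma measSet_vis_lt {m' : MeasurableSpace Ω} (hhmeas : ∀ x, Measurable (h x)) (t : ℤ)
    (hm : ∀ s : ℤ, s < t → @Measurable Ω Ξ m' _ (ξ s)) (s v : ℤ) (hvt : v ≤ t) :
    @MeasurableSet Ω m' {ω | vis h x (fun u => ξ u ω) s v} := by
  by_cases hsv : s ≤ v
  · have : {ω | vis h x (fun u => ξ u ω) s v}
        = (fun ω => stA h x (fun u => ξ u ω) s v) ⁻¹' {x} := by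
      ext ω; simp [vis, hsv]
    rw [this]
    exact meas_stA_lt h x ξ hhmeas t hm hsv hvt (measurableSet_singleton x)
  · have : {ω | vis h x (fun u => ξ u ω) s v} = ∅ := by
      ext ω; simp [vis, hsv]
    rw [this]; exact MeasurableSet.empty

lemma measSet_vstr_lt {m' : MeasurableSpace Ω} (hhmeas : ∀ x, Measurable (h x)) (t : ℤ)
    (hm : ∀ s : ℤ, s < t → @Measurable Ω Ξ m' _ (ξ s)) (v : ℤ) (hvt : v ≤ t) :
    @MeasurableSet Ω m' {ω | vstr h x (fun u => ξ u ω) v} := by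
  have : {ω | vstr h x (fun u => ξ u ω) v}
      = ⋃ S0 : ℤ, ⋂ s : ℤ, ⋂ (_ : s ≤ S0), {ω | vis h x (fun u => ξ u ω) s v} := by
    ext ω; simp [vstr]
  rw [this]
  exact MeasurableSet.iUnion fun S0 => MeasurableSet.iInter fun s => MeasurableSet.iInter
    fun _ => measSet_vis_lt h x ξ hhmeas t hm s v hvt

lemma measSet_isTau_lt {m' : MeasurableSpace Ω} (hhmeas : ∀ x, Measurable (h x)) (t : ℤ)
    (hm : ∀ s : ℤ, s < t → @Measurable Ω Ξ m' _ (ξ s)) (t' v : ℤ) (ht' : t' ≤ t) :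
    @MeasurableSet Ω m' {ω | isTau h x (fun u => ξ u ω) t' v} := by
  by_cases hvt : v ≤ t'
  · have : {ω | isTau h x (fun u => ξ u ω) t' v}
        = {ω | vstr h x (fun u => ξ u ω) v} ∩
          ⋂ w : ℤ, ⋂ (_ : w ≤ t') , ⋂ (_ : ¬ (w ≤ v)),
            {ω | vstr h x (fun u => ξ u ω) w}ᶜ := by
      ext ω
      simp only [isTau, Set.mem_setOf_eq, Set.mem_inter_iff, Set.mem_iInter, Set.mem_compl_iff]
      constructor
      · rintro ⟨h1, h2, h3⟩
        exact ⟨h1, fun w hw hnw hvs => hnw (h3 w hvs hw)⟩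
      · rintro ⟨h1, h2⟩
        refine ⟨h1, hvt, fun w hw hwt => ?_⟩
        by_contra hnw
        exact h2 w hwt hnw hw
    rw [this]
    refine (measSet_vstr_lt h x ξ hhmeas t hm v (le_trans hvt ht')).inter ?_
    exact MeasurableSet.iInter fun w => MeasurableSet.iInter fun hw =>
      MeasurableSet.iInter fun _ =>
        (measSet_vstr_lt h x ξ hhmeas t hm w (le_trans hw ht')).compl
  · have : {ω | isTau h x (fun u => ξ u ω) t' v} = ∅ := by
      ext ω; simp only [isTau, Set.mem_setOf_eq, Set.mem_empty_iff_false, iff_false]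
      rintro ⟨_, h2, _⟩; exact hvt h2
    rw [this]; exact MeasurableSet.empty

/-- The key measurability statement: `ω ↦ bfun h x (ξ · ω) t` is measurable w.r.t.
any σ-algebra for which all `ξ s`, `s < t`, are measurable. -/
lemma meas_bfun {m' : MeasurableSpace Ω} (hhmeas : ∀ x, Measurable (h x)) (t : ℤ)
    (hm : ∀ s : ℤ, s < t → @Measurable Ω Ξ m' _ (ξ s)) :
    @Measurable Ω S m' _ (fun ω => bfun h x (fun u => ξ u ω) t) := by
  apply measurable_to_countable'
  intro y
  have key : (fun ω => bfun h x (fun u => ξ u ω) t) ⁻¹' {y}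
      = (⋃ v : ℤ, {ω | isTau h x (fun u => ξ u ω) t v} ∩
          {ω | stA h x (fun u => ξ u ω) v t = y})
        ∪ (if y = x then ⋂ v : ℤ, {ω | isTau h x (fun u => ξ u ω) t v}ᶜ else ∅) := by
    ext ω
    simp only [Set.mem_preimage, Set.mem_singleton_iff, Set.mem_union, Set.mem_iUnion,
      Set.mem_inter_iff, Set.mem_setOf_eq]
    by_cases H : ∃ v, isTau h x (fun u => ξ u ω) t v
    · obtain ⟨v0, hv0⟩ := H
      rw [bfun_eq_of_isTau h x hv0]
      constructor
      · intro hy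
        exact Or.inl ⟨v0, hv0, hy⟩
      · rintro (⟨v, hv, hy⟩ | hy)
        · rwa [isTau_unique h x hv0 hv]
        · exfalso
          rcases eq_or_ne y x with rfl | hne
          · rw [if_pos rfl] at hy
            exact (Set.mem_iInter.mp hy v0) hv0
          · simp [if_neg hne] at hy
    · rw [bfun, dif_neg H]
      constructor
      · intro hy
        refine Or.inr ?_
        rw [if_pos hy.symm]
        simp only [Set.mem_iInter, Set.mem_compl_iff, Set.mem_setOf_eq]
        exact fun v hv => H ⟨v, hv⟩
      · rintro (⟨v, hv, _⟩ | hy)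
        · exact absurd ⟨v, hv⟩ H
        · rcases eq_or_ne y x with rfl | hne
          · rfl
          · simp [if_neg hne] at hy
  rw [key]
  refine MeasurableSet.union ?_ ?_
  · refine MeasurableSet.iUnion fun v => ?_
    by_cases hvt : v ≤ t
    · refine (measSet_isTau_lt h x ξ hhmeas t hm t v (le_refl t)).inter ?_
      exact meas_stA_lt h x ξ hhmeas t hm hvt (le_refl t) (measurableSet_singleton y)
    · have : {ω | isTau h x (fun u => ξ u ω) t v} = ∅ := by
        ext ω; simp only [isTau, Set.mem_setOf_eq, Set.mem_empty_iff_false, iff_false]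
        rintro ⟨_, h2, _⟩; exact hvt h2
      rw [this, Set.empty_inter]; exact MeasurableSet.empty
  · split
    · exact MeasurableSet.iInter fun v =>
        (measSet_isTau_lt h x ξ hhmeas t hm t v (le_refl t)).compl
    · exact MeasurableSet.empty

end Meas

end DGaux

/-! ## Probabilistic lemmas -/

namespace DGaux

section Prob

variable {S Ξ Ω : Type*} [MeasurableSpace Ω] [MeasurableSpace Ξ] [MeasurableSpace S]
  [MeasurableSingletonClass S] [Countable S]
  (h : S → Ξ → S) (ξ : ℤ → Ω → Ξ)

lemma fpath_theta {θ : Ω → Ω} (hcov : ∀ (t : ℤ) (ω : Ω), ξ t (θ ω) = ξ (t + 1) ω)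
    (ω : Ω) (s : ℤ) (y : S) : ∀ n : ℕ, Fpath h ξ (θ ω) s y n = Fpath h ξ ω (s+1) y n := by
  intro n
  induction n with
  | zero => rfl
  | succ n ih =>
      show h _ (ξ (s + n) (θ ω)) = h _ (ξ (s + 1 + n) ω)
      rw [ih, hcov]
      have he : s + (n:ℤ) + 1 = s + 1 + n := by omega
      rw [he]

lemma retTime_eq_iInf (t : ℤ) (x y : S) (ω : Ω) :
    retTime h ξ t x y ω
      = ⨅ r : ℕ, if (0 < r ∧ Fpath h ξ ω t x r = y) then (r : ℝ≥0∞) else ⊤ := by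
  apply le_antisymm
  · refine le_iInf fun r => ?_
    by_cases hc : 0 < r ∧ Fpath h ξ ω t x r = y
    · rw [if_pos hc]; exact sInf_le ⟨r, rfl, hc.1, hc.2⟩
    · rw [if_neg hc]; exact le_top
  · refine le_sInf ?_
    rintro c ⟨r, rfl, hr1, hr2⟩
    exact iInf_le_of_le r (le_of_eq (if_pos ⟨hr1, hr2⟩))

lemma meas_retTime (hhmeas : ∀ x, Measurable (h x)) (hξmeas : ∀ s, Measurable (ξ s))
    (t : ℤ) (x y : S) : Measurable fun ω => retTime h ξ t x y ω := by
  have he : (fun ω => retTime h ξ t x y ω)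
      = fun ω => ⨅ r : ℕ, if (0 < r ∧ Fpath h ξ ω t x r = y) then (r : ℝ≥0∞) else ⊤ :=
    funext fun ω => retTime_eq_iInf h ξ t x y ω
  rw [he]
  refine Measurable.iInf fun r => Measurable.ite ?_ measurable_const measurable_const
  by_cases hr : 0 < r
  · have : {ω | 0 < r ∧ Fpath h ξ ω t x r = y}
        = (fun ω => Fpath h ξ ω t x r) ⁻¹' {y} := by ext ω; simp [hr]
    rw [this]
    exact meas_fpath_lt h ξ hhmeas (t + r + 1) (fun s _ => hξmeas s) x r t (by omega)
      (measurableSet_singleton y)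
  · have : {ω | 0 < r ∧ Fpath h ξ ω t x r = y} = ∅ := by ext ω; simp [hr]
    rw [this]; exact MeasurableSet.empty

lemma retTime_attained {t : ℤ} {x y : S} {ω : Ω} (hfin : retTime h ξ t x y ω ≠ ⊤) :
    ∃ r : ℕ, 0 < r ∧ Fpath h ξ ω t x r = y ∧ retTime h ξ t x y ω = r := by
  have hne : {r : ℕ | 0 < r ∧ Fpath h ξ ω t x r = y}.Nonempty := by
    by_contra hcon
    apply hfin
    have : {c : ℝ≥0∞ | ∃ r : ℕ, c = r ∧ 0 < r ∧ Fpath h ξ ω t x r = y} = ∅ := by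
      ext c
      simp only [Set.mem_setOf_eq, Set.mem_empty_iff_false, iff_false]
      rintro ⟨r, rfl, h1, h2⟩
      exact hcon ⟨r, h1, h2⟩
    rw [retTime, this, sInf_empty]
  set A := {r : ℕ | 0 < r ∧ Fpath h ξ ω t x r = y} with hA
  have hmem := Nat.sInf_mem hne
  refine ⟨sInf A, hmem.1, hmem.2, le_antisymm ?_ ?_⟩
  · exact sInf_le ⟨sInf A, rfl, hmem.1, hmem.2⟩
  · refine le_sInf ?_
    rintro c ⟨r, rfl, hr1, hr2⟩
    exact_mod_cast Nat.sInf_le (show r ∈ A from ⟨hr1, hr2⟩)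

lemma retTime_theta {θ : Ω → Ω} (hcov : ∀ (t : ℤ) (ω : Ω), ξ t (θ ω) = ξ (t + 1) ω)
    (t : ℤ) (x y : S) (ω : Ω) :
    retTime h ξ t x y (θ ω) = retTime h ξ (t+1) x y ω := by
  unfold retTime
  congr 1
  ext c
  simp only [Set.mem_setOf_eq, fpath_theta h ξ hcov]

lemma P_retTime_shift {P : Measure Ω} [IsProbabilityMeasure P] {θ : Ω → Ω}
    (hθ : MeasurePreserving θ P P)
    (hcov : ∀ (t : ℤ) (ω : Ω), ξ t (θ ω) = ξ (t + 1) ω)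
    (hhmeas : ∀ x, Measurable (h x)) (hξmeas : ∀ s, Measurable (ξ s))
    (x : S) {C : Set ℝ≥0∞} (hC : MeasurableSet C) (u : ℤ) :
    P ((fun ω => retTime h ξ u x x ω) ⁻¹' C) = P ((fun ω => retTime h ξ 0 x x ω) ⁻¹' C) := by
  have step : ∀ v : ℤ, P ((fun ω => retTime h ξ (v+1) x x ω) ⁻¹' C)
      = P ((fun ω => retTime h ξ v x x ω) ⁻¹' C) := by
    intro v
    have hset : (fun ω => retTime h ξ (v+1) x x ω) ⁻¹' C
        = θ ⁻¹' ((fun ω => retTime h ξ v x x ω) ⁻¹' C) := by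
      ext ω
      simp only [Set.mem_preimage, retTime_theta h ξ hcov]
    rw [hset, hθ.measure_preimage ((meas_retTime h ξ hhmeas hξmeas v x x) hC).nullMeasurableSet]
  induction u using Int.induction_on with
  | zero => rfl
  | succ k ih => rw [step k]; exact ih
  | pred k ih =>
      have h1 := step (-(k:ℤ) - 1)
      have h2 : (-(k:ℤ) - 1 + 1) = -(k:ℤ) := by omega
      rw [h2] at h1
      rw [← h1]
      exact ih

lemma ae_ret_finite {P : Measure Ω} [IsProbabilityMeasure P] {θ : Ω → Ω}
    (hθ : MeasurePreserving θ P P)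
    (hcov : ∀ (t : ℤ) (ω : Ω), ξ t (θ ω) = ξ (t + 1) ω)
    (hhmeas : ∀ x, Measurable (h x)) (hξmeas : ∀ s, Measurable (ξ s))
    (x : S) (hint : ∫⁻ ω, retTime h ξ 0 x x ω ∂P ≠ ⊤) :
    ∀ᵐ ω ∂P, ∀ t : ℤ, retTime h ξ t x x ω ≠ ⊤ := by
  rw [ae_all_iff]
  intro t
  have h0 : P ((fun ω => retTime h ξ 0 x x ω) ⁻¹' {⊤}) = 0 := by
    have hlt := ae_lt_top (meas_retTime h ξ hhmeas hξmeas 0 x x) hint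
    rw [ae_iff] at hlt
    convert hlt using 2
    ext ω
    simp [lt_top_iff_ne_top]
  have := P_retTime_shift h ξ hθ hcov hhmeas hξmeas x (measurableSet_singleton ⊤) t
  rw [ae_iff]
  have hset : {ω | ¬ retTime h ξ t x x ω ≠ ⊤} = (fun ω => retTime h ξ t x x ω) ⁻¹' {⊤} := by
    ext ω; simp
  rw [hset, this, h0]

lemma tsum_tail_le {P : Measure Ω} [IsProbabilityMeasure P]
    (hhmeas : ∀ x, Measurable (h x)) (hξmeas : ∀ s, Measurable (ξ s)) (x : S) :
    ∑' k : ℕ, P {ω | ((k+1 : ℕ) : ℝ≥0∞) ≤ retTime h ξ 0 x x ω}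
      ≤ ∫⁻ ω, retTime h ξ 0 x x ω ∂P := by
  set N := fun ω => retTime h ξ 0 x x ω with hN
  have hmeasN : Measurable N := meas_retTime h ξ hhmeas hξmeas 0 x x
  have hms : ∀ k : ℕ, MeasurableSet {ω | ((k+1 : ℕ) : ℝ≥0∞) ≤ N ω} := by
    intro k
    exact hmeasN measurableSet_Ici
  have pw : ∀ ω, (∑' k : ℕ,
      Set.indicator {ω | ((k+1 : ℕ) : ℝ≥0∞) ≤ N ω} (1 : Ω → ℝ≥0∞) ω) ≤ N ω := by
    intro ω
    by_cases hfin : N ω = ⊤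
    · rw [hfin]; exact le_top
    · obtain ⟨r, hr0, hrp, hEq⟩ := retTime_attained h ξ (t := 0) (x := x) (y := x) hfin
      have hEq' : N ω = (r : ℝ≥0∞) := hEq
      have hind : ∀ k : ℕ, Set.indicator {ω | ((k+1 : ℕ) : ℝ≥0∞) ≤ N ω}
          (1 : Ω → ℝ≥0∞) ω = if k < r then 1 else 0 := by
        intro k
        have hiff : (ω ∈ {ω | ((k+1 : ℕ) : ℝ≥0∞) ≤ N ω}) ↔ (k < r) := by
          simp only [Set.mem_setOf_eq, hEq', Nat.cast_le]
          omega
        rw [Set.indicator_apply, if_congr hiff rfl rfl]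
        split <;> rfl
      rw [tsum_congr hind]
      have h1 : (∑' k : ℕ, if k < r then (1:ℝ≥0∞) else 0)
          = ∑ k ∈ Finset.range r, (if k < r then (1:ℝ≥0∞) else 0) := by
        refine tsum_eq_sum ?_
        intro k hk
        rw [if_neg (by simpa using hk)]
      rw [h1, hEq']
      have h2 : ∀ k ∈ Finset.range r, (if k < r then (1:ℝ≥0∞) else 0) = 1 := by
        intro k hk
        rw [if_pos (Finset.mem_range.mp hk)]
      rw [Finset.sum_congr rfl h2, Finset.sum_const, Finset.card_range]
      simp
  calc ∑' k : ℕ, P {ω | ((k+1 : ℕ) : ℝ≥0∞) ≤ N ω}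
      = ∑' k : ℕ, ∫⁻ ω, Set.indicator {ω | ((k+1 : ℕ) : ℝ≥0∞) ≤ N ω} (1 : Ω → ℝ≥0∞) ω ∂P := by
        refine tsum_congr fun k => ?_
        rw [lintegral_indicator_one (hms k)]
    _ = ∫⁻ ω, (∑' k : ℕ,
          Set.indicator {ω | ((k+1 : ℕ) : ℝ≥0∞) ≤ N ω} (1 : Ω → ℝ≥0∞) ω) ∂P :=
        (lintegral_tsum fun k => (measurable_const.indicator (hms k)).aemeasurable).symm
    _ ≤ ∫⁻ ω, N ω ∂P := lintegral_mono pw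

lemma ae_bnd {P : Measure Ω} [IsProbabilityMeasure P] {θ : Ω → Ω}
    (hθ : MeasurePreserving θ P P)
    (hcov : ∀ (t : ℤ) (ω : Ω), ξ t (θ ω) = ξ (t + 1) ω)
    (hhmeas : ∀ x, Measurable (h x)) (hξmeas : ∀ s, Measurable (ξ s))
    (x : S) (hint : ∫⁻ ω, retTime h ξ 0 x x ω ∂P ≠ ⊤) :
    ∀ᵐ ω ∂P, ∃ m : ℕ, ∀ n : ℕ,
      retTime h ξ (-(n:ℤ)-1) x x ω < ((m+n+1 : ℕ) : ℝ≥0∞) := by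
  set q : ℕ → ℝ≥0∞ := fun k => P {ω | ((k+1 : ℕ) : ℝ≥0∞) ≤ retTime h ξ 0 x x ω} with hq
  have hqsum : ∑' k, q k ≠ ⊤ := by
    refine ne_top_of_le_ne_top hint ?_
    exact tsum_tail_le h ξ hhmeas hξmeas x
  set E : ℕ → Set Ω :=
    fun m => {ω | ∃ n : ℕ, ((m+n+1 : ℕ) : ℝ≥0∞) ≤ retTime h ξ (-(n:ℤ)-1) x x ω} with hE
  have hEbound : ∀ m : ℕ, P (E m) ≤ ∑' k : ℕ, q (k + m) := by
    intro m
    have hsub : E m = ⋃ n : ℕ, {ω | ((m+n+1 : ℕ) : ℝ≥0∞) ≤ retTime h ξ (-(n:ℤ)-1) x x ω} := by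
      ext ω; simp [hE]
    rw [hsub]
    refine le_trans (measure_iUnion_le _) ?_
    refine ENNReal.tsum_le_tsum fun n => ?_
    have h1 : {ω | ((m+n+1 : ℕ) : ℝ≥0∞) ≤ retTime h ξ (-(n:ℤ)-1) x x ω}
        = (fun ω => retTime h ξ (-(n:ℤ)-1) x x ω) ⁻¹' (Set.Ici ((m+n+1 : ℕ) : ℝ≥0∞)) := by
      ext ω; simp [Set.mem_Ici]
    rw [h1, P_retTime_shift h ξ hθ hcov hhmeas hξmeas x measurableSet_Ici]
    apply le_of_eq
    have hmn : (m+n+1 : ℕ) = n+m+1 := by omega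
    have h2 : (fun ω => retTime h ξ 0 x x ω) ⁻¹' (Set.Ici ((m+n+1 : ℕ) : ℝ≥0∞))
        = {ω | ((n+m+1 : ℕ) : ℝ≥0∞) ≤ retTime h ξ 0 x x ω} := by
      rw [hmn]; ext ω; simp [Set.mem_Ici]
    rw [h2]
  have htend := ENNReal.tendsto_sum_nat_add q hqsum
  have hP : ∀ m : ℕ, P (⋂ m', E m') ≤ (fun i => ∑' k, q (k + i)) m :=
    fun m => le_trans (measure_mono (Set.iInter_subset _ m)) (hEbound m)
  have hzero : P (⋂ m, E m) ≤ 0 := ge_of_tendsto' htend hP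
  rw [ae_iff]
  have hset : {ω | ¬ ∃ m : ℕ, ∀ n : ℕ,
      retTime h ξ (-(n:ℤ)-1) x x ω < ((m+n+1 : ℕ) : ℝ≥0∞)} = ⋂ m, E m := by
    ext ω
    simp only [Set.mem_setOf_eq, not_exists, not_forall, not_lt, Set.mem_iInter, hE]
  rw [hset]
  exact le_antisymm hzero zero_le

/-- Mass argument: an equivariant disjoint family of measurable sets is null. -/
lemma null_of_equivariant {P : Measure Ω} [IsProbabilityMeasure P] {θ : Ω → Ω}
    (hθ : MeasurePreserving θ P P) (A : ℤ → Set Ω) (hmeas : ∀ k, MeasurableSet (A k))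
    (hshift : ∀ k, θ ⁻¹' (A k) = A (k+1))
    (hdisj : ∀ k l, k ≠ l → A k ∩ A l = ∅) : ∀ k, P (A k) = 0 := by
  have hconst : ∀ k : ℤ, P (A k) = P (A 0) := by
    intro k
    induction k using Int.induction_on with
    | zero => rfl
    | succ k ih => rw [← hshift k, hθ.measure_preimage (hmeas k).nullMeasurableSet]; exact ih
    | pred k ih =>
        have hv := hshift (-(k:ℤ)-1)
        have hstep : P (A (-(k:ℤ)-1+1)) = P (A (-(k:ℤ)-1)) := by
          rw [← hv, hθ.measure_preimage (hmeas _).nullMeasurableSet]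
        have he : (-(k:ℤ)-1+1) = -(k:ℤ) := by omega
        rw [he] at hstep
        rw [← hstep]
        exact ih
  intro k
  rw [hconst k]
  by_contra hne
  have hdisj' : Pairwise (Function.onFun Disjoint A) := by
    intro i j hij
    exact Set.disjoint_iff_inter_eq_empty.mpr (hdisj i j hij)
  have h1 : ∑' k : ℤ, P (A k) = P (⋃ k, A k) := (measure_iUnion hdisj' hmeas).symm
  have h2 : ∑' k : ℤ, P (A k) = ∑' _ : ℤ, P (A 0) := tsum_congr hconst
  rw [h2, ENNReal.tsum_const_eq_top_of_ne_zero hne] at h1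
  exact absurd h1.symm (ne_top_of_le_ne_top (by simp) (measure_mono (Set.subset_univ _))).elim

lemma measSet_eq_fun {b1 b2 : Ω → S} (h1 : Measurable b1) (h2 : Measurable b2) :
    MeasurableSet {ω | b1 ω = b2 ω} := by
  have : {ω | b1 ω = b2 ω} = ⋃ y : S, b1 ⁻¹' {y} ∩ b2 ⁻¹' {y} := by
    ext ω
    simp only [Set.mem_setOf_eq, Set.mem_iUnion, Set.mem_inter_iff, Set.mem_preimage,
      Set.mem_singleton_iff]
    exact ⟨fun he => ⟨b1 ω, rfl, he.symm⟩, fun ⟨y, hy1, hy2⟩ => hy1.trans hy2.symm⟩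
  rw [this]
  exact MeasurableSet.iUnion fun y =>
    (h1 (measurableSet_singleton y)).inter (h2 (measurableSet_singleton y))

lemma ae_unbdd_below {P : Measure Ω} [IsProbabilityMeasure P] {θ : Ω → Ω}
    (hθ : MeasurePreserving θ P P)
    (hcov : ∀ (t : ℤ) (ω : Ω), ξ t (θ ω) = ξ (t + 1) ω)
    (hhmeas : ∀ x, Measurable (h x)) (hξmeas : ∀ s, Measurable (ξ s)) (x : S) :
    ∀ᵐ ω ∂P, (∃ v, vstr h x (fun u => ξ u ω) v) →
      ∀ n : ℤ, ∃ v, v ≤ n ∧ vstr h x (fun u => ξ u ω) v := by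
  set A : ℤ → Set Ω := fun k =>
    {ω | vstr h x (fun u => ξ u ω) k ∧ ∀ w, w < k → ¬ vstr h x (fun u => ξ u ω) w} with hA
  have hmeasA : ∀ k, MeasurableSet (A k) := by
    intro k
    have hms : ∀ v : ℤ, MeasurableSet {ω | vstr h x (fun u => ξ u ω) v} := fun v =>
      measSet_vstr_lt h x ξ hhmeas v (fun s _ => hξmeas s) v (le_refl v)
    have : A k = {ω | vstr h x (fun u => ξ u ω) k} ∩
        ⋂ w : ℤ, ⋂ (_ : w < k), {ω | vstr h x (fun u => ξ u ω) w}ᶜ := by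
      ext ω
      simp only [hA, Set.mem_setOf_eq, Set.mem_inter_iff, Set.mem_iInter, Set.mem_compl_iff]
    rw [this]
    exact (hms k).inter (MeasurableSet.iInter fun w => MeasurableSet.iInter fun _ => (hms w).compl)
  have hvstr_theta : ∀ (ω : Ω) (v : ℤ),
      vstr h x (fun u => ξ u (θ ω)) v ↔ vstr h x (fun u => ξ u ω) (v+1) := by
    intro ω v
    have hfun : (fun u => ξ u (θ ω)) = (fun u => (fun w => ξ w ω) (u+1)) :=
      funext fun u => hcov u ω
    rw [hfun]
    exact vstr_shift h x (fun w => ξ w ω) v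
  have hshift : ∀ k, θ ⁻¹' (A k) = A (k+1) := by
    intro k
    ext ω
    simp only [hA, Set.mem_preimage, Set.mem_setOf_eq, hvstr_theta]
    constructor
    · rintro ⟨h1, h2⟩
      refine ⟨h1, fun w hw hvw => ?_⟩
      have hthis := h2 (w-1) (by omega)
      have hww : w - 1 + 1 = w := by omega
      rw [hww] at hthis
      exact hthis hvw
    · rintro ⟨h1, h2⟩
      exact ⟨h1, fun w hw hvw => h2 (w+1) (by omega) hvw⟩
  have hdisj : ∀ k l, k ≠ l → A k ∩ A l = ∅ := by
    intro k l hkl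
    ext ω
    simp only [hA, Set.mem_inter_iff, Set.mem_setOf_eq, Set.mem_empty_iff_false, iff_false]
    rintro ⟨⟨hk1, hk2⟩, ⟨hl1, hl2⟩⟩
    rcases lt_or_gt_of_ne hkl with hlt | hlt
    · exact hl2 k hlt hk1
    · exact hk2 l hlt hl1
  have hnull := null_of_equivariant hθ A hmeasA hshift hdisj
  have hae : ∀ᵐ ω ∂P, ∀ k : ℤ, ω ∉ A k := by
    rw [ae_all_iff]
    intro k
    exact measure_eq_zero_iff_ae_notMem.mp (hnull k)
  filter_upwards [hae] with ω hnot hne n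
  by_contra hcon
  push_neg at hcon
  have hbdd : ∃ b : ℤ, ∀ z : ℤ, vstr h x (fun u => ξ u ω) z → b ≤ z := by
    refine ⟨n+1, fun z hz => ?_⟩
    by_contra hzn
    exact hcon z (by omega) hz
  obtain ⟨lb, hlb1, hlb2⟩ := Int.exists_least_of_bdd hbdd hne
  exact hnot lb ⟨hlb1, fun w hw hvw => by have := hlb2 w hvw; omega⟩

lemma ae_all_eq_of_ae_eventually_eq {P : Measure Ω} [IsProbabilityMeasure P] {θ : Ω → Ω}
    (hθ : MeasurePreserving θ P P) (b1 b2 : ℤ → Ω → S)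
    (hm1 : ∀ t, Measurable (b1 t)) (hm2 : ∀ t, Measurable (b2 t))
    (he1 : ∀ t ω, b1 t (θ ω) = b1 (t+1) ω) (he2 : ∀ t ω, b2 t (θ ω) = b2 (t+1) ω)
    (hae : ∀ᵐ ω ∂P, ∃ k : ℤ, ∀ u, k ≤ u → b1 u ω = b2 u ω) :
    ∀ᵐ ω ∂P, ∀ u, b1 u ω = b2 u ω := by
  set B : ℤ → Set Ω := fun k =>
    {ω | (∀ u, k ≤ u → b1 u ω = b2 u ω) ∧ b1 (k-1) ω ≠ b2 (k-1) ω} with hB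
  have hmeasB : ∀ k, MeasurableSet (B k) := by
    intro k
    have : B k = (⋂ u : ℤ, ⋂ (_ : k ≤ u), {ω | b1 u ω = b2 u ω}) ∩
        {ω | b1 (k-1) ω = b2 (k-1) ω}ᶜ := by
      ext ω
      simp only [hB, Set.mem_setOf_eq, Set.mem_inter_iff, Set.mem_iInter, Set.mem_compl_iff]
    rw [this]
    exact (MeasurableSet.iInter fun u => MeasurableSet.iInter fun _ =>
      measSet_eq_fun (hm1 u) (hm2 u)).inter (measSet_eq_fun (hm1 _) (hm2 _)).compl
  have hshift : ∀ k, θ ⁻¹' (B k) = B (k+1) := by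
    intro k
    ext ω
    simp only [hB, Set.mem_preimage, Set.mem_setOf_eq, he1, he2]
    constructor
    · rintro ⟨h1, h2⟩
      refine ⟨fun u hu => ?_, ?_⟩
      · have hthis := h1 (u-1) (by omega)
        have hu1 : u - 1 + 1 = u := by omega
        rwa [hu1] at hthis
      · have heq : k - 1 + 1 = k + 1 - 1 := by omega
        rw [heq] at h2
        exact h2
    · rintro ⟨h1, h2⟩
      refine ⟨fun u hu => h1 (u+1) (by omega), ?_⟩
      have heq : k - 1 + 1 = k + 1 - 1 := by omega
      rw [heq]
      exact h2
  have hdisj : ∀ k l, k ≠ l → B k ∩ B l = ∅ := by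
    intro k l hkl
    ext ω
    simp only [hB, Set.mem_inter_iff, Set.mem_setOf_eq, Set.mem_empty_iff_false, iff_false]
    rintro ⟨⟨hk1, hk2⟩, ⟨hl1, hl2⟩⟩
    rcases lt_or_gt_of_ne hkl with hlt | hlt
    · exact hl2 (hk1 (l-1) (by omega))
    · exact hk2 (hl1 (k-1) (by omega))
  have hnull := null_of_equivariant hθ B hmeasB hshift hdisj
  have hae2 : ∀ᵐ ω ∂P, ∀ k : ℤ, ω ∉ B k := by
    rw [ae_all_iff]
    intro k
    exact measure_eq_zero_iff_ae_notMem.mp (hnull k)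
  filter_upwards [hae, hae2] with ω hev hnot u
  by_contra hne
  have hbdd : ∃ b : ℤ, ∀ z : ℤ, (∀ v, z ≤ v → b1 v ω = b2 v ω) → b ≤ z := by
    refine ⟨u+1, fun z hz => ?_⟩
    by_contra hzn
    exact hne (hz u (by omega))
  obtain ⟨lb, hlb1, hlb2⟩ := Int.exists_least_of_bdd hbdd hev
  refine hnot lb ⟨hlb1, fun heq => ?_⟩
  have : ∀ v, lb - 1 ≤ v → b1 v ω = b2 v ω := by
    intro v hv
    rcases eq_or_lt_of_le hv with hv1 | hv1
    · rw [← hv1]; exact heq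
    · exact hlb1 v (by omega)
  have := hlb2 (lb - 1) this
  omega

end Prob

end DGaux

open DGaux

/-- If the Doeblin graph is a.s. connected (an EFT) and `x⋆` is positive
recurrent, then there is a state path `β`, unique up to null sets, that is
bi-recurrent for `x⋆`; it is stationary, `β t` is measurable with respect to
`σ(ξ_s : s < t)`, and `β` is bi-recurrent for every positive recurrent state. -/
theorem unique_birecurrent_path_in_EFT
    {Ω S Ξ : Type*} [MeasurableSpace Ω] [MeasurableSpace Ξ] [MeasurableSpace S]
    [MeasurableSingletonClass S] [Countable S]
    (P : Measure Ω) [IsProbabilityMeasure P]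
    (h : S → Ξ → S) (hhmeas : ∀ x, Measurable (h x))
    (ξ : ℤ → Ω → Ξ) (hξmeas : ∀ t, Measurable (ξ t))
    (θ : Ω → Ω) (hergo : Ergodic θ P)
    (hcov : ∀ (t : ℤ) (ω : Ω), ξ t (θ ω) = ξ (t + 1) ω)
    (hconn : ∀ᵐ ω ∂P, ∀ u v : ℤ × S, Merge h ξ ω u v)
    (xstar : S)
    (hposrec : ∫⁻ ω, retTime h ξ 0 xstar xstar ω ∂P < ⊤) :
    ∃ β : ℤ → Ω → S,
      (∀ t : ℤ, @Measurable Ω S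
        (MeasurableSpace.comap (fun ω (s : {s : ℤ // s < t}) => ξ s ω) inferInstance) _
        (β t))
      ∧ (∀ᵐ ω ∂P, ∀ t : ℤ, β (t + 1) ω = h (β t ω) (ξ t ω))
      ∧ (∀ᵐ ω ∂P, ∀ n : ℤ,
          (∃ t, n ≤ t ∧ β t ω = xstar) ∧ (∃ t, t ≤ n ∧ β t ω = xstar))
      ∧ (Measure.map (fun ω (t : ℤ) => β (t + 1) ω) P
          = Measure.map (fun ω (t : ℤ) => β t ω) P)
      ∧ (∀ γ : ℤ → Ω → S,
          (∀ᵐ ω ∂P, ∀ t : ℤ, γ (t + 1) ω = h (γ t ω) (ξ t ω)) →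
          (∀ᵐ ω ∂P, ∀ n : ℤ,
            (∃ t, n ≤ t ∧ γ t ω = xstar) ∧ (∃ t, t ≤ n ∧ γ t ω = xstar)) →
          ∀ᵐ ω ∂P, ∀ t : ℤ, γ t ω = β t ω)
      ∧ (∀ x : S, (∫⁻ ω, retTime h ξ 0 x x ω ∂P < ⊤) →
          ∀ᵐ ω ∂P, ∀ n : ℤ,
            (∃ t, n ≤ t ∧ β t ω = x) ∧ (∃ t, t ≤ n ∧ β t ω = x)) := by
  have hθmp : MeasurePreserving θ P P := hergo.toMeasurePreserving
  -- the candidate path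
  set β : ℤ → Ω → S := fun t ω => bfun h xstar (fun u => ξ u ω) t with hβdef
  -- shift equivariance of the `bfun` construction
  have hbshift : ∀ (x : S) (t : ℤ) (ω : Ω),
      bfun h x (fun u => ξ u (θ ω)) t = bfun h x (fun u => ξ u ω) (t+1) := by
    intro x t ω
    have hfun : (fun u => ξ u (θ ω)) = (fun u => (fun w => ξ w ω) (u+1)) :=
      funext fun u => hcov u ω
    rw [hfun]
    exact bfun_shift h x (fun w => ξ w ω) t
  -- measurability w.r.t. the past
  have hbmeas_comap : ∀ (x : S) (t : ℤ), @Measurable Ω S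
      (MeasurableSpace.comap (fun ω (s : {s : ℤ // s < t}) => ξ s ω) inferInstance) _
      (fun ω => bfun h x (fun u => ξ u ω) t) := by
    intro x t
    refine meas_bfun h x ξ hhmeas t ?_
    intro s hs
    have hρ : @Measurable Ω ({s : ℤ // s < t} → Ξ)
        (MeasurableSpace.comap (fun ω (s : {s : ℤ // s < t}) => ξ s ω) inferInstance) _
        (fun ω (s : {s : ℤ // s < t}) => ξ s ω) := fun E hE => ⟨E, hE, rfl⟩
    exact (measurable_pi_apply (⟨s, hs⟩ : {s : ℤ // s < t})).comp hρ
  have hbmeas : ∀ (x : S) (t : ℤ), Measurable (fun ω => bfun h x (fun u => ξ u ω) t) := by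
    intro x t
    refine (hbmeas_comap x t).mono ?_ le_rfl
    rw [← measurable_iff_comap_le]
    exact measurable_pi_lambda _ fun s => hξmeas s
  -- the main almost-sure structural fact, for any positive recurrent state x
  have main_x : ∀ x : S, (∫⁻ ω, retTime h ξ 0 x x ω ∂P ≠ ⊤) →
      ∀ᵐ ω ∂P, (∀ n : ℤ, ∃ v, v ≤ n ∧ vstr h x (fun u => ξ u ω) v) ∧
               (∀ n : ℤ, ∃ v, n ≤ v ∧ vstr h x (fun u => ξ u ω) v) := by
    intro x hint
    have h1 := ae_ret_finite h ξ hθmp hcov hhmeas hξmeas x hint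
    have h2 := ae_bnd h ξ hθmp hcov hhmeas hξmeas x hint
    have h3 := ae_unbdd_below h ξ hθmp hcov hhmeas hξmeas x
    filter_upwards [hconn, h1, h2, h3] with ω hmer hfin hbnd hlb
    have Hret : ∀ t : ℤ, ∃ r : ℕ, 0 < r ∧ vis h x (fun u => ξ u ω) t (t + r) := by
      intro t
      obtain ⟨r, hr0, hrp, _⟩ := retTime_attained h ξ (hfin t)
      refine ⟨r, hr0, by omega, ?_⟩
      have e1 : (t + (r:ℤ) - t).toNat = r := by omega
      rw [stA, e1, ← fpath_eq_dp]
      exact hrp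
    have Hmer : ∀ c c' : ℤ, ∃ t0, c ≤ t0 ∧ c' ≤ t0 ∧
        stA h x (fun u => ξ u ω) c t0 = stA h x (fun u => ξ u ω) c' t0 := by
      intro c c'
      obtain ⟨k, l, hkl, heq⟩ := hmer (c, x) (c', x)
      simp only at hkl heq
      refine ⟨c + k, by omega, by omega, ?_⟩
      have e1 : (c + (k:ℤ) - c).toNat = k := by omega
      have e2 : (c + (k:ℤ) - c').toNat = l := by omega
      rw [stA, stA, e1, e2, ← fpath_eq_dp, ← fpath_eq_dp]
      exact heq
    have Hbnd : ∃ m : ℤ, ∀ u : ℤ, u ≤ -1 →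
        ∃ c, u < c ∧ c < m ∧ vis h x (fun u => ξ u ω) u c := by
      obtain ⟨m, hmm⟩ := hbnd
      refine ⟨(m:ℤ), fun u hu => ?_⟩
      set n : ℕ := (-u-1).toNat with hn
      have hun : u = -(n:ℤ)-1 := by omega
      obtain ⟨r, hr0, hrp, hEq⟩ := retTime_attained h ξ (hfin u)
      have hlt := hmm n
      rw [← hun, hEq, Nat.cast_lt] at hlt
      have hrz : (r:ℤ) < (m:ℤ) + (n:ℤ) + 1 := by exact_mod_cast hlt
      refine ⟨u + r, by omega, by omega, by omega, ?_⟩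
      have e1 : (u + (r:ℤ) - u).toNat = r := by omega
      rw [stA, e1, ← fpath_eq_dp]
      exact hrp
    have hne := vstr_nonempty h x Hmer Hret Hbnd
    exact ⟨hlb hne, fun n => vstr_unbdd_above h x Hret hne n⟩
  refine ⟨β, ?_, ?_, ?_, ?_, ?_, ?_⟩
  -- 1. measurability
  · exact fun t => hbmeas_comap xstar t
  -- 2. path property
  · filter_upwards [main_x xstar hposrec.ne] with ω hg
    intro t
    exact bfun_path h xstar hg.1 t
  -- 3. bi-recurrence at xstar
  · filter_upwards [main_x xstar hposrec.ne] with ω hg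
    intro n
    constructor
    · obtain ⟨v, hv1, hv2⟩ := hg.2 n
      exact ⟨v, hv1, bfun_at_vstr h xstar hv2⟩
    · obtain ⟨v, hv1, hv2⟩ := hg.1 n
      exact ⟨v, hv1, bfun_at_vstr h xstar hv2⟩
  -- 4. stationarity
  · have hmapg : Measurable (fun ω (t : ℤ) => β t ω) :=
      measurable_pi_lambda _ fun t => hbmeas xstar t
    have hcomp : (fun ω (t : ℤ) => β (t + 1) ω) = (fun ω (t : ℤ) => β t ω) ∘ θ := by
      funext ω
      funext t
      exact (hbshift xstar t ω).symm
    rw [hcomp, ← Measure.map_map hmapg hθmp.measurable, hθmp.map_eq]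
  -- 5. uniqueness
  · intro γ hγpath hγrec
    filter_upwards [main_x xstar hposrec.ne, hγpath, hγrec] with ω hg hp hr
    intro t
    exact bfun_unique h xstar hg.1 (fun u => γ u ω) (fun u => hp u) (fun n => (hr n).2) t
  -- 6. bi-recurrence at every positive recurrent state
  · intro x hint
    set bx : ℤ → Ω → S := fun t ω => bfun h x (fun u => ξ u ω) t with hbxdef
    have haemerge : ∀ᵐ ω ∂P, ∃ k : ℤ, ∀ u, k ≤ u → β u ω = bx u ω := by
      filter_upwards [main_x xstar hposrec.ne, main_x x hint.ne, hconn] with ω hxs hx hmer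
      obtain ⟨v, hv, hvstr⟩ := hxs.2 0
      obtain ⟨w, hw, hwstr⟩ := hx.2 0
      obtain ⟨k, l, hkl, heq⟩ := hmer (v, xstar) (w, x)
      simp only at hkl heq
      have e1 : (v + (k:ℤ) - v).toNat = k := by omega
      have e2 : (v + (k:ℤ) - w).toNat = l := by omega
      have hbase : stA h xstar (fun u => ξ u ω) v (v + k)
          = stA h x (fun u => ξ u ω) w (v + k) := by
        rw [stA, stA, e1, e2, ← fpath_eq_dp, ← fpath_eq_dp]
        exact heq
      refine ⟨max (v + k) (max v w), fun u hu => ?_⟩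
      have h1 : β u ω = stA h xstar (fun u' => ξ u' ω) v u :=
        bfun_agree h xstar hxs.1 hvstr (by omega)
      have h2 : bx u ω = stA h x (fun u' => ξ u' ω) w u :=
        bfun_agree h x hx.1 hwstr (by omega)
      rw [h1, h2]
      exact stA_of_eq h xstar (by omega) (by omega) hbase u (by omega)
    have hall := ae_all_eq_of_ae_eventually_eq hθmp β bx (fun t => hbmeas xstar t)
      (fun t => hbmeas x t) (fun t ω => hbshift xstar t ω) (fun t ω => hbshift x t ω) haemerge
    filter_upwards [hall, main_x x hint.ne] with ω heq hg
    intro n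
    constructor
    · obtain ⟨v, hv1, hv2⟩ := hg.2 n
      refine ⟨v, hv1, ?_⟩
      rw [heq v]
      exact bfun_at_vstr h x hv2
    · obtain ⟨v, hv1, hv2⟩ := hg.1 n
      refine ⟨v, hv1, ?_⟩
      rw [heq v]
      exact bfun_at_vstr h x hv2
end

section
/- Suppose the Doeblin graph $\mathbb{G}$ is a.s. connected, has fully independent transitions, $x^*$ is positive recurrent, and $p_{x^*,x^*}>0$. Then $\mathbb{P}(\mathbf{B}_0 = \{x^*\}) > 0$, i.e., the singleton $\{x^*\}$ is a possible configuration of the time-zero slice of the bridge graph. -/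
open MeasureTheory ProbabilityTheory ENNReal
open scoped Classical

/-- Time-`t` slice of the bridge graph for `x⋆`. -/
def Bslice {S Ξ Ω : Type*} (h : S → Ξ → S) (ξ : ℤ → Ω → Ξ) (xstar : S) (t : ℤ) (ω : Ω) :
    Set S :=
  {y : S | ∃ n : ℕ, Fpath h ξ ω (t - n) xstar n = y}


section Aux

variable {Ω S Ξ : Type*}

/-- Deterministic state path driven by an explicit sequence. -/
def dpath (h : S → Ξ → S) (x : S) (e : ℕ → Ξ) : ℕ → S
  | 0 => x
  | n + 1 => h (dpath h x e n) (e n)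

/-- Path with a time-dependent transition function. -/
def Mpath (f : ℤ → S → Ξ → S) (ξ : ℤ → Ω → Ξ) (ω : Ω) (t : ℤ) (x : S) : ℕ → S
  | 0 => x
  | n + 1 => f (t + n) (Mpath f ξ ω t x n) (ξ (t + n) ω)

lemma Fpath_eq_dpath (h : S → Ξ → S) (ξ : ℤ → Ω → Ξ) (ω : Ω) (t : ℤ) (x : S) :
    ∀ n, Fpath h ξ ω t x n = dpath h x (fun m => ξ (t + m) ω) n
  | 0 => rfl
  | n + 1 => by
      show h (Fpath h ξ ω t x n) (ξ (t + n) ω) = h (dpath h x _ n) (ξ (t + n) ω)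
      rw [Fpath_eq_dpath h ξ ω t x n]

lemma dpath_congr {h : S → Ξ → S} {x : S} {e e' : ℕ → Ξ} :
    ∀ n, (∀ m, m < n → e m = e' m) → dpath h x e n = dpath h x e' n
  | 0, _ => rfl
  | n + 1, H => by
      show h (dpath h x e n) (e n) = h (dpath h x e' n) (e' n)
      rw [dpath_congr n (fun m hm => H m (hm.trans (Nat.lt_succ_self n))),
        H n (Nat.lt_succ_self n)]

lemma Fpath_append (h : S → Ξ → S) (ξ : ℤ → Ω → Ξ) (ω : Ω) (t : ℤ) (x : S) (a : ℕ) :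
    ∀ b, Fpath h ξ ω t x (a + b) = Fpath h ξ ω (t + a) (Fpath h ξ ω t x a) b
  | 0 => rfl
  | b + 1 => by
      show h (Fpath h ξ ω t x (a + b)) (ξ (t + ↑(a + b)) ω)
          = h (Fpath h ξ ω (t + a) (Fpath h ξ ω t x a) b) (ξ (t + a + b) ω)
      rw [Fpath_append h ξ ω t x a b]
      congr 1
      push_cast
      ring_nf

lemma measurable_cases {mΩ : MeasurableSpace Ω} [MeasurableSpace S]
    [MeasurableSingletonClass S] [Countable S]
    {F : Ω → S} (hF : Measurable F) {g : S → Ω → S} (hg : ∀ x, Measurable (g x)) :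
    Measurable fun ω => g (F ω) ω := by
  letI := mΩ
  apply measurable_to_countable'
  intro y
  have hE : (fun ω => g (F ω) ω) ⁻¹' {y} = ⋃ x : S, F ⁻¹' {x} ∩ (g x) ⁻¹' {y} := by
    ext ω
    simp only [Set.mem_preimage, Set.mem_singleton_iff, Set.mem_iUnion, Set.mem_inter_iff]
    constructor
    · intro hy; exact ⟨F ω, rfl, hy⟩
    · rintro ⟨x, hx, hy⟩; rw [← hx] at hy; exact hy
  rw [hE]
  exact MeasurableSet.iUnion fun x =>
    (hF (measurableSet_singleton x)).inter (hg x (measurableSet_singleton y))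

lemma measurable_Fpath [MeasurableSpace Ω] [MeasurableSpace Ξ] [MeasurableSpace S]
    [MeasurableSingletonClass S] [Countable S]
    {h : S → Ξ → S} (hhmeas : ∀ x, Measurable (h x))
    {ξ : ℤ → Ω → Ξ} (hξmeas : ∀ t, Measurable (ξ t)) (t : ℤ) (x : S) :
    ∀ n, Measurable fun ω => Fpath h ξ ω t x n
  | 0 => measurable_const
  | n + 1 => by
      show Measurable fun ω => h (Fpath h ξ ω t x n) (ξ (t + n) ω)
      exact measurable_cases (measurable_Fpath hhmeas hξmeas t x n)
        (fun s => (hhmeas s).comp (hξmeas (t + n)))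

end Aux

section Aux2

variable {Ω S Ξ : Type*}

/-- Paths under the modified dynamics hit `xstar` within `n` steps iff the
original paths do the same, provided the starting time is not in the modified window. -/
lemma hit_iff_hit (h : S → Ξ → S) (ξ : ℤ → Ω → Ξ) (ω : Ω) (xstar : S)
    (f : ℤ → S → Ξ → S) (s : ℤ)
    (hf0 : ∀ e : Ξ, f s xstar e = h xstar e)
    (hfx : ∀ (t : ℤ) (x : S) (e : Ξ), x ≠ xstar → f t x e = h x e) (n : ℕ) :
    (∃ r : ℕ, 0 < r ∧ r ≤ n ∧ Fpath h ξ ω s xstar r = xstar) ↔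
    (∃ r : ℕ, 0 < r ∧ r ≤ n ∧ Mpath f ξ ω s xstar r = xstar) := by
  have claim1 : ∀ r : ℕ, (∀ j : ℕ, 0 < j → j < r → Fpath h ξ ω s xstar j ≠ xstar) →
      Mpath f ξ ω s xstar r = Fpath h ξ ω s xstar r := by
    intro r
    induction r with
    | zero => intro _; rfl
    | succ r ih =>
      intro H
      have hM : Mpath f ξ ω s xstar r = Fpath h ξ ω s xstar r :=
        ih fun j hj hjr => H j hj (hjr.trans (Nat.lt_succ_self r))
      show f (s + r) (Mpath f ξ ω s xstar r) (ξ (s + r) ω)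
          = h (Fpath h ξ ω s xstar r) (ξ (s + r) ω)
      rw [hM]
      rcases Nat.eq_zero_or_pos r with hr | hr
      · subst hr
        have hz : (s + ((0 : ℕ) : ℤ)) = s := by simp
        rw [hz]
        exact hf0 _
      · exact hfx _ _ _ (H r hr (Nat.lt_succ_self r))
  have claim2 : ∀ r : ℕ, (∀ j : ℕ, 0 < j → j < r → Mpath f ξ ω s xstar j ≠ xstar) →
      Mpath f ξ ω s xstar r = Fpath h ξ ω s xstar r := by
    intro r
    induction r with
    | zero => intro _; rfl
    | succ r ih =>
      intro H
      have hM : Mpath f ξ ω s xstar r = Fpath h ξ ω s xstar r :=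
        ih fun j hj hjr => H j hj (hjr.trans (Nat.lt_succ_self r))
      show f (s + r) (Mpath f ξ ω s xstar r) (ξ (s + r) ω)
          = h (Fpath h ξ ω s xstar r) (ξ (s + r) ω)
      rw [← hM]
      rcases Nat.eq_zero_or_pos r with hr | hr
      · subst hr
        have hz : (s + ((0 : ℕ) : ℤ)) = s := by simp
        rw [hz]
        exact hf0 _
      · exact hfx _ _ _ (H r hr (Nat.lt_succ_self r))
  have dir1 : ∀ r : ℕ, 0 < r → Fpath h ξ ω s xstar r = xstar →
      ∃ r', 0 < r' ∧ r' ≤ r ∧ Mpath f ξ ω s xstar r' = xstar := by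
    intro r
    induction r using Nat.strong_induction_on with
    | _ r ih =>
      intro hr0 hrx
      by_cases hmin : ∀ j : ℕ, 0 < j → j < r → Fpath h ξ ω s xstar j ≠ xstar
      · exact ⟨r, hr0, le_refl r, by rw [claim1 r hmin]; exact hrx⟩
      · push_neg at hmin
        obtain ⟨j, hj0, hjr, hjx⟩ := hmin
        obtain ⟨r', h1, h2, h3⟩ := ih j hjr hj0 hjx
        exact ⟨r', h1, h2.trans hjr.le, h3⟩
  have dir2 : ∀ r : ℕ, 0 < r → Mpath f ξ ω s xstar r = xstar →
      ∃ r', 0 < r' ∧ r' ≤ r ∧ Fpath h ξ ω s xstar r' = xstar := by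
    intro r
    induction r using Nat.strong_induction_on with
    | _ r ih =>
      intro hr0 hrx
      by_cases hmin : ∀ j : ℕ, 0 < j → j < r → Mpath f ξ ω s xstar j ≠ xstar
      · exact ⟨r, hr0, le_refl r, by rw [← claim2 r hmin]; exact hrx⟩
      · push_neg at hmin
        obtain ⟨j, hj0, hjr, hjx⟩ := hmin
        obtain ⟨r', h1, h2, h3⟩ := ih j hjr hj0 hjx
        exact ⟨r', h1, h2.trans hjr.le, h3⟩
  constructor
  · rintro ⟨r, hr0, hrn, hrx⟩
    obtain ⟨r', h1, h2, h3⟩ := dir1 r hr0 hrx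
    exact ⟨r', h1, h2.trans hrn, h3⟩
  · rintro ⟨r, hr0, hrn, hrx⟩
    obtain ⟨r', h1, h2, h3⟩ := dir2 r hr0 hrx
    exact ⟨r', h1, h2.trans hrn, h3⟩

/-- If single transitions from `xstar` stay at `xstar` during the window `[-M,-1]`
and every path started at `(s, xstar)` with `s < -M` returns to `xstar` by time `0`,
then every path started at `(-n, xstar)` is at `xstar` at time `0`. -/
lemma all_return (h : S → Ξ → S) (ξ : ℤ → Ω → Ξ) (ω : Ω) (xstar : S) (M : ℕ)
    (hD : ∀ t : ℤ, -(M : ℤ) ≤ t → t ≤ -1 → h xstar (ξ t ω) = xstar)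
    (hC : ∀ k : ℕ, ∃ r : ℕ, 0 < r ∧ r ≤ M + 1 + k ∧
      Fpath h ξ ω (-(M + 1 + k : ℕ) : ℤ) xstar r = xstar) :
    ∀ n : ℕ, Fpath h ξ ω (-(n : ℤ)) xstar n = xstar := by
  intro n
  induction n using Nat.strong_induction_on with
  | _ n ih =>
    rcases Nat.eq_zero_or_pos n with hn0 | hn0
    · subst hn0; rfl
    rcases le_or_gt n M with hnM | hnM
    · -- one lazy step then induction
      have h1 : Fpath h ξ ω (-(n : ℤ)) xstar 1 = xstar := by
        show h xstar (ξ (-(n : ℤ) + (0 : ℕ)) ω) = xstar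
        have : (-(n : ℤ) + (0 : ℕ)) = -(n : ℤ) := by push_cast; ring
        rw [this]
        exact hD _ (by omega) (by omega)
      have hsplit := Fpath_append h ξ ω (-(n : ℤ)) xstar 1 (n - 1)
      rw [h1] at hsplit
      have hn1 : 1 + (n - 1) = n := by omega
      rw [hn1] at hsplit
      have harg : (-(n : ℤ) + (1 : ℕ)) = -((n - 1 : ℕ) : ℤ) := by
        push_cast [Nat.cast_sub hn0]; ring
      rw [hsplit, harg]
      exact ih (n - 1) (by omega)
    · -- use the return event
      obtain ⟨r, hr0, hrn, hrx⟩ := hC (n - (M + 1))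
      have hMn : M + 1 + (n - (M + 1)) = n := by omega
      rw [hMn] at hrn hrx
      have hsplit := Fpath_append h ξ ω (-(n : ℤ)) xstar r (n - r)
      rw [hrx] at hsplit
      have hnr : r + (n - r) = n := by omega
      rw [hnr] at hsplit
      have harg : (-(n : ℤ) + (r : ℕ)) = -((n - r : ℕ) : ℤ) := by
        push_cast [Nat.cast_sub hrn]; ring
      rw [hsplit, harg]
      rcases Nat.eq_zero_or_pos (n - r) with hz | hz
      · rw [hz]; rfl
      · exact ih (n - r) (by omega)

end Aux2

section Aux3

variable {Ω ι : Type*}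

/-- Grouping lemma: refining an independent family of σ-algebras by independent
pairs yields an independent family of the pairs. -/
lemma iIndep_pair_refine {mΩ : MeasurableSpace Ω} {P : Measure Ω}
    {m κ κ' : ι → MeasurableSpace Ω}
    (hm : iIndep m P)
    (hκ : ∀ i, κ i ≤ m i) (hκ' : ∀ i, κ' i ≤ m i)
    (hpair : ∀ i, Indep (κ i) (κ' i) P) :
    iIndep (fun q : ι × Bool => cond q.2 (κ q.1) (κ' q.1)) P := by
  rw [iIndep_iff]
  intro s f hf
  classical
  have hmaps : ∀ q ∈ s, q.1 ∈ s.image Prod.fst := fun q hq => Finset.mem_image_of_mem _ hq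
  have hinter : ⋂ q ∈ s, f q
      = ⋂ i ∈ s.image Prod.fst, ⋂ q ∈ s.filter (fun q => q.1 = i), f q := by
    ext ω
    simp only [Set.mem_iInter, Finset.mem_filter, Finset.mem_image]
    constructor
    · rintro H i ⟨p, hp, rfl⟩ q ⟨hq, -⟩
      exact H q hq
    · intro H q hq
      exact H q.1 ⟨q, hq, rfl⟩ q ⟨hq, rfl⟩
  have hsub : ∀ q ∈ s, MeasurableSet[m q.1] (f q) := by
    intro q hq
    have := hf q hq
    rcases q with ⟨i, b⟩
    cases b
    · exact hκ' i _ this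
    · exact hκ i _ this
  have hfib : ∀ i ∈ s.image Prod.fst,
      MeasurableSet[m i] (⋂ q ∈ s.filter (fun q => q.1 = i), f q) := by
    intro i _
    refine Finset.measurableSet_biInter _ (fun q hq => ?_)
    rw [Finset.mem_filter] at hq
    rw [← hq.2]
    exact hsub q hq.1
  rw [hinter, (iIndep_iff m P).1 hm _ hfib,
    ← Finset.prod_fiberwise_of_maps_to hmaps (fun q => P (f q))]
  refine Finset.prod_congr rfl (fun i hi => ?_)
  have hfilter_sub : ∀ q ∈ s.filter (fun q => q.1 = i), q = (i, true) ∨ q = (i, false) := by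
    rintro ⟨j, b⟩ hq
    rw [Finset.mem_filter] at hq
    cases b
    · right; simpa using hq.2
    · left; simpa using hq.2
  by_cases ht : (i, true) ∈ s <;> by_cases hfa : (i, false) ∈ s
  · have hset : s.filter (fun q => q.1 = i) = {(i, true), (i, false)} := by
      apply Finset.Subset.antisymm
      · intro q hq
        rcases hfilter_sub q hq with rfl | rfl <;> simp
      · intro q hq
        simp only [Finset.mem_insert, Finset.mem_singleton] at hq
        rcases hq with rfl | rfl <;> simp [Finset.mem_filter, ht, hfa]
    rw [hset]
    have hne : ((i, true) : ι × Bool) ∉ ({(i, false)} : Finset (ι × Bool)) := by simp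
    rw [Finset.set_biInter_insert, Finset.set_biInter_singleton,
      Finset.prod_insert hne, Finset.prod_singleton]
    exact (Indep_iff _ _ _).1 (hpair i) _ _ (hf _ ht) (hf _ hfa)
  · have hset : s.filter (fun q => q.1 = i) = {(i, true)} := by
      apply Finset.Subset.antisymm
      · intro q hq
        rcases hfilter_sub q hq with rfl | rfl
        · simp
        · exact absurd (Finset.mem_filter.1 hq).1 hfa
      · intro q hq
        simp only [Finset.mem_singleton] at hq
        subst hq; simp [Finset.mem_filter, ht]
    rw [hset, Finset.set_biInter_singleton, Finset.prod_singleton]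
  · have hset : s.filter (fun q => q.1 = i) = {(i, false)} := by
      apply Finset.Subset.antisymm
      · intro q hq
        rcases hfilter_sub q hq with rfl | rfl
        · exact absurd (Finset.mem_filter.1 hq).1 ht
        · simp
      · intro q hq
        simp only [Finset.mem_singleton] at hq
        subst hq; simp [Finset.mem_filter, hfa]
    rw [hset, Finset.set_biInter_singleton, Finset.prod_singleton]
  · exfalso
    rw [Finset.mem_image] at hi
    obtain ⟨q, hq, hqi⟩ := hi
    rcases hfilter_sub q (Finset.mem_filter.2 ⟨hq, hqi⟩) with rfl | rfl
    · exact ht hq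
    · exact hfa hq

end Aux3

section Aux4

variable {Ω S Ξ : Type*}

/-- The event that the path started at `(s, xstar)` does not return to `xstar`
within `n` steps. -/
def badSet (h : S → Ξ → S) (ξ : ℤ → Ω → Ξ) (xstar : S) (s : ℤ) (n : ℕ) : Set Ω :=
  {ω | ∀ r : ℕ, 0 < r → r ≤ n → Fpath h ξ ω s xstar r ≠ xstar}

lemma measurableSet_badSet [MeasurableSpace Ω] [MeasurableSpace Ξ] [MeasurableSpace S]
    [MeasurableSingletonClass S] [Countable S]
    {h : S → Ξ → S} (hhmeas : ∀ x, Measurable (h x))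
    {ξ : ℤ → Ω → Ξ} (hξmeas : ∀ t, Measurable (ξ t)) (xstar : S) (s : ℤ) (n : ℕ) :
    MeasurableSet (badSet h ξ xstar s n) := by
  have : badSet h ξ xstar s n
      = ⋂ (r : ℕ) (_ : 0 < r) (_ : r ≤ n), (fun ω => Fpath h ξ ω s xstar r) ⁻¹' {xstar}ᶜ := by
    ext ω; simp [badSet]
  rw [this]
  exact MeasurableSet.iInter fun r => MeasurableSet.iInter fun _ => MeasurableSet.iInter fun _ =>
    (measurable_Fpath hhmeas hξmeas s xstar r) (measurableSet_singleton xstar).compl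

/-- The joint law of `n` consecutive driving variables is the product of the
common marginal. -/
lemma map_tuple_eq_pi [MeasurableSpace Ω] [MeasurableSpace Ξ]
    (P : Measure Ω) [IsProbabilityMeasure P]
    {ξ : ℤ → Ω → Ξ} (hξmeas : ∀ t, Measurable (ξ t))
    (hindep : iIndepFun ξ P)
    (hident : ∀ t, Measure.map (ξ t) P = Measure.map (ξ 0) P) (s : ℤ) (n : ℕ) :
    Measure.map (fun ω (i : Fin n) => ξ (s + i) ω) P
      = Measure.pi (fun _ : Fin n => Measure.map (ξ 0) P) := by
  haveI : IsProbabilityMeasure (Measure.map (ξ 0) P) :=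
    Measure.isProbabilityMeasure_map (hξmeas 0).aemeasurable
  symm
  apply Measure.pi_eq
  intro B hB
  have htup : Measurable (fun ω (i : Fin n) => ξ (s + i) ω) :=
    measurable_pi_lambda _ (fun i => hξmeas _)
  rw [Measure.map_apply htup (MeasurableSet.univ_pi hB)]
  have hpre : (fun ω (i : Fin n) => ξ (s + i) ω) ⁻¹' (Set.pi Set.univ B)
      = ⋂ i : Fin n, ξ (s + i) ⁻¹' B i := by
    ext ω; simp [Set.mem_pi]
  rw [hpre]
  classical
  set T : Finset ℤ := Finset.image (fun i : Fin n => s + (i : ℕ)) Finset.univ with hT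
  set B' : ℤ → Set Ξ := fun t =>
    ⋂ i ∈ Finset.univ.filter (fun i : Fin n => s + (i : ℕ) = t), B i with hB'
  have hinj : ∀ i ∈ (Finset.univ : Finset (Fin n)), ∀ j ∈ (Finset.univ : Finset (Fin n)),
      s + (i : ℕ) = s + (j : ℕ) → i = j := by
    intro i _ j _ hij
    have : ((i : ℕ) : ℤ) = ((j : ℕ) : ℤ) := by omega
    exact Fin.ext (by exact_mod_cast this)
  have hfilter : ∀ i : Fin n,
      Finset.univ.filter (fun j : Fin n => s + (j : ℕ) = s + (i : ℕ)) = {i} := by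
    intro i
    ext j
    simp only [Finset.mem_filter, Finset.mem_univ, true_and, Finset.mem_singleton]
    constructor
    · intro hj; exact hinj j (Finset.mem_univ j) i (Finset.mem_univ i) hj
    · rintro rfl; rfl
  have hB'i : ∀ i : Fin n, B' (s + (i : ℕ)) = B i := by
    intro i
    rw [hB']
    simp only [hfilter i, Finset.set_biInter_singleton]
  have hmeasB' : ∀ t, MeasurableSet (B' t) :=
    fun t => Finset.measurableSet_biInter _ (fun i _ => hB i)
  have hinter2 : ⋂ i : Fin n, ξ (s + i) ⁻¹' B i = ⋂ t ∈ T, ξ t ⁻¹' B' t := by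
    ext ω
    simp only [Set.mem_iInter, Set.mem_preimage, hT, Finset.mem_image, Finset.mem_univ,
      true_and, hB']
    constructor
    · rintro H t ⟨i, rfl⟩
      simp only [Set.mem_iInter, Finset.mem_filter, Finset.mem_univ, true_and]
      intro j hj
      rw [← hj]
      exact H j
    · intro H i
      have := H (s + (i : ℕ)) ⟨i, rfl⟩
      simp only [Set.mem_iInter, Finset.mem_filter, Finset.mem_univ, true_and] at this
      exact this i rfl
  rw [hinter2]
  have hcomap : ∀ t ∈ T, MeasurableSet[MeasurableSpace.comap (ξ t) inferInstance]
      (ξ t ⁻¹' B' t) := fun t _ => ⟨B' t, hmeasB' t, rfl⟩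
  rw [hindep.meas_biInter hcomap]
  rw [Finset.prod_image hinj]
  refine Finset.prod_congr rfl (fun i _ => ?_)
  rw [hB'i i, ← Measure.map_apply (hξmeas (s + (i : ℕ))) (hB i), hident (s + (i : ℕ))]

end Aux4

section Aux5

variable {Ω S Ξ : Type*}

/-- Stationarity: the probability of no return within `n` steps does not depend
on the starting time. -/
lemma prob_badSet_eq [MeasurableSpace Ω] [MeasurableSpace Ξ] [MeasurableSpace S]
    [MeasurableSingletonClass S] [Countable S]
    (P : Measure Ω) [IsProbabilityMeasure P]
    {h : S → Ξ → S} (hhmeas : ∀ x, Measurable (h x))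
    {ξ : ℤ → Ω → Ξ} (hξmeas : ∀ t, Measurable (ξ t))
    (hindep : iIndepFun ξ P)
    (hident : ∀ t, Measure.map (ξ t) P = Measure.map (ξ 0) P)
    (xstar : S) (s : ℤ) (n : ℕ) :
    P (badSet h ξ xstar s n) = P (badSet h ξ xstar 0 n) := by
  rcases isEmpty_or_nonempty Ω with hΩ | hΩ
  · have h1 : P Set.univ = 1 := measure_univ
    rw [Set.univ_eq_empty_iff.2 hΩ, measure_empty] at h1
    exact absurd h1 (by norm_num)
  obtain ⟨ω₀⟩ := hΩ
  classical
  set ξd : Ξ := ξ 0 ω₀ with hξd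
  set pad : (Fin n → Ξ) → ℕ → Ξ := fun e m => if hm : m < n then e ⟨m, hm⟩ else ξd with hpad
  set Bad : Set (Fin n → Ξ) :=
    {e | ∀ r : ℕ, 0 < r → r ≤ n → dpath h xstar (pad e) r ≠ xstar} with hBad
  have hdmeas : ∀ r : ℕ, Measurable fun e : Fin n → Ξ => dpath h xstar (pad e) r := by
    intro r
    induction r with
    | zero => exact measurable_const
    | succ r ih =>
      show Measurable fun e : Fin n → Ξ => h (dpath h xstar (pad e) r) (pad e r)
      refine measurable_cases (g := fun x e => h x (pad e r)) ih (fun x => ?_)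
      show Measurable fun e : Fin n → Ξ => h x (pad e r)
      by_cases hr : r < n
      · have hfun : (fun e : Fin n → Ξ => h x (pad e r)) = fun e => h x (e ⟨r, hr⟩) := by
          funext e
          rw [hpad]
          simp only [dif_pos hr]
        rw [hfun]
        exact (hhmeas x).comp (measurable_pi_apply _)
      · have hfun : (fun e : Fin n → Ξ => h x (pad e r)) = fun _ => h x ξd := by
          funext e
          rw [hpad]
          simp only [dif_neg hr]
        rw [hfun]
        exact measurable_const
  have hBadMeas : MeasurableSet Bad := by
    have : Bad = ⋂ (r : ℕ) (_ : 0 < r) (_ : r ≤ n),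
        (fun e => dpath h xstar (pad e) r) ⁻¹' {xstar}ᶜ := by
      ext e; simp [hBad]
    rw [this]
    exact MeasurableSet.iInter fun r => MeasurableSet.iInter fun _ =>
      MeasurableSet.iInter fun _ => (hdmeas r) (measurableSet_singleton xstar).compl
  have hrep : ∀ s' : ℤ, badSet h ξ xstar s' n
      = (fun ω (i : Fin n) => ξ (s' + i) ω) ⁻¹' Bad := by
    intro s'
    ext ω
    simp only [badSet, Set.mem_setOf_eq, Set.mem_preimage, hBad]
    have hpath : ∀ r : ℕ, r ≤ n → Fpath h ξ ω s' xstar r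
        = dpath h xstar (pad (fun i : Fin n => ξ (s' + i) ω)) r := by
      intro r hr
      rw [Fpath_eq_dpath h ξ ω s' xstar r]
      refine dpath_congr r (fun m hm => ?_)
      have hmn : m < n := lt_of_lt_of_le hm hr
      rw [hpad]
      simp only [dif_pos hmn]
    constructor
    · intro H r hr0 hrn
      rw [← hpath r hrn]
      exact H r hr0 hrn
    · intro H r hr0 hrn
      rw [hpath r hrn]
      exact H r hr0 hrn
  have htupmeas : ∀ s' : ℤ, Measurable (fun ω (i : Fin n) => ξ (s' + i) ω) :=
    fun s' => measurable_pi_lambda _ (fun i => hξmeas _)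
  rw [hrep s, hrep 0,
    ← Measure.map_apply (htupmeas s) hBadMeas,
    ← Measure.map_apply (htupmeas 0) hBadMeas,
    map_tuple_eq_pi P hξmeas hindep hident s n,
    map_tuple_eq_pi P hξmeas hindep hident 0 n]

end Aux5


section Aux6

variable {Ω S Ξ : Type*}

lemma exists_tail_lt_one [MeasurableSpace Ω] [MeasurableSpace Ξ] [MeasurableSpace S]
    [MeasurableSingletonClass S] [Countable S]
    (P : Measure Ω) [IsProbabilityMeasure P]
    {h : S → Ξ → S} (hhmeas : ∀ x, Measurable (h x))
    {ξ : ℤ → Ω → Ξ} (hξmeas : ∀ t, Measurable (ξ t)) (xstar : S)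
    (hposrec : ∫⁻ ω, retTime h ξ 0 xstar xstar ω ∂P < ⊤) :
    ∃ M : ℕ, ∑' k : ℕ, P (badSet h ξ xstar 0 (M + 1 + k)) < 1 := by
  classical
  set q : ℕ → ℝ≥0∞ := fun n => P (badSet h ξ xstar 0 n) with hq
  have hret : ∀ (n : ℕ) (ω : Ω), ω ∈ badSet h ξ xstar 0 n →
      ((n + 1 : ℕ) : ℝ≥0∞) ≤ retTime h ξ 0 xstar xstar ω := by
    intro n ω hω
    refine le_sInf ?_
    rintro c ⟨r, rfl, hr0, hrx⟩
    have hnr : n + 1 ≤ r := by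
      by_contra hcon
      exact hω r hr0 (by omega) hrx
    exact_mod_cast hnr
  have hanti : ∀ {m n : ℕ}, m ≤ n → badSet h ξ xstar 0 n ⊆ badSet h ξ xstar 0 m :=
    fun {m n} hmn ω hω r hr0 hrm => hω r hr0 (hrm.trans hmn)
  have hptwise : ∀ (K : ℕ) (ω : Ω),
      ∑ n ∈ Finset.range K, (badSet h ξ xstar 0 n).indicator (1 : Ω → ℝ≥0∞) ω
        ≤ retTime h ξ 0 xstar xstar ω := by
    intro K ω
    induction K with
    | zero => simp
    | succ K ih =>
      rw [Finset.sum_range_succ]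
      by_cases hω : ω ∈ badSet h ξ xstar 0 K
      · have hall : ∀ n ∈ Finset.range K,
            (badSet h ξ xstar 0 n).indicator (1 : Ω → ℝ≥0∞) ω = 1 := by
          intro n hn
          rw [Finset.mem_range] at hn
          exact Set.indicator_of_mem (hanti hn.le hω) 1
        rw [Finset.sum_congr rfl hall, Set.indicator_of_mem hω]
        simp only [Finset.sum_const, Finset.card_range, nsmul_eq_mul, mul_one, Pi.one_apply]
        have hKle := hret K ω hω
        push_cast at hKle ⊢
        exact hKle
      · rw [Set.indicator_of_notMem hω, add_zero]
        exact ih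
  have hsum_le : ∀ K : ℕ, ∑ n ∈ Finset.range K, q n
      ≤ ∫⁻ ω, retTime h ξ 0 xstar xstar ω ∂P := by
    intro K
    have h1 : ∀ n ∈ Finset.range K,
        q n = ∫⁻ ω, (badSet h ξ xstar 0 n).indicator (1 : Ω → ℝ≥0∞) ω ∂P := fun n _ =>
      (lintegral_indicator_one (measurableSet_badSet hhmeas hξmeas xstar 0 n)).symm
    rw [Finset.sum_congr rfl h1,
      ← lintegral_finset_sum _ (fun n _ =>
        measurable_one.indicator (measurableSet_badSet hhmeas hξmeas xstar 0 n))]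
    exact lintegral_mono (fun ω => hptwise K ω)
  have htsum : ∑' n, q n ≠ ⊤ :=
    ((ENNReal.tsum_le_of_sum_range_le hsum_le).trans_lt hposrec).ne
  have hev : ∀ᶠ i in Filter.atTop, ∑' k, q (k + i) < 1 :=
    (ENNReal.tendsto_sum_nat_add q htsum).eventually_lt_const (by norm_num)
  obtain ⟨i₀, hi₀⟩ := Filter.eventually_atTop.1 hev
  refine ⟨i₀, ?_⟩
  calc ∑' k, q (i₀ + 1 + k) = ∑' k, q (k + (i₀ + 1)) :=
        tsum_congr fun k => by rw [Nat.add_comm]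
    _ < 1 := hi₀ (i₀ + 1) (Nat.le_succ i₀)

end Aux6

/-- If the Doeblin graph is a.s. connected, has fully independent transitions,
`x⋆` is positive recurrent and `p_{x⋆,x⋆} > 0`, then the singleton `{x⋆}` is a
possible configuration of the time-zero slice of the bridge graph. -/
theorem singleton_configuration_possible
    {Ω S Ξ : Type*} [MeasurableSpace Ω] [MeasurableSpace Ξ] [MeasurableSpace S]
    [MeasurableSingletonClass S] [Countable S]
    (P : Measure Ω) [IsProbabilityMeasure P]
    (h : S → Ξ → S) (hhmeas : ∀ x, Measurable (h x))
    (ξ : ℤ → Ω → Ξ) (hξmeas : ∀ t, Measurable (ξ t))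
    (hindep : iIndepFun ξ P)
    (hident : ∀ t, Measure.map (ξ t) P = Measure.map (ξ 0) P)
    (hfullindep : ∀ t : ℤ, iIndepFun
      (fun (x : S) ω => h x (ξ t ω)) P)
    (hconn : ∀ᵐ ω ∂P, ∀ u v : ℤ × S, Merge h ξ ω u v)
    (xstar : S)
    (hposrec : ∫⁻ ω, retTime h ξ 0 xstar xstar ω ∂P < ⊤)
    (hlazy : 0 < P {ω | h xstar (ξ 0 ω) = xstar}) :
    0 < P {ω | Bslice h ξ xstar 0 ω = {xstar}} := by
  classical
  obtain ⟨M, hM⟩ := exists_tail_lt_one P hhmeas hξmeas xstar hposrec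
  set PP : ℤ → Prop := fun t => -(M : ℤ) ≤ t ∧ t ≤ -1 with hPP
  set f' : ℤ → S → Ξ → S := fun t x e => if x = xstar ∧ PP t then xstar else h x e with hf'
  -- the split σ-algebras
  set κ : ℤ → MeasurableSpace Ω := fun t =>
    if PP t then MeasurableSpace.comap (fun ω => h xstar (ξ t ω)) inferInstance else ⊥ with hκdef
  set κ' : ℤ → MeasurableSpace Ω := fun t =>
    if PP t then ⨆ x ∈ ({xstar}ᶜ : Set S),
        MeasurableSpace.comap (fun ω => h x (ξ t ω)) inferInstance
    else MeasurableSpace.comap (ξ t) inferInstance with hκ'def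
  have hcomap_le : ∀ (t : ℤ) (x : S),
      MeasurableSpace.comap (fun ω => h x (ξ t ω)) inferInstance
        ≤ MeasurableSpace.comap (ξ t) inferInstance := by
    intro t x
    have h1 : MeasurableSpace.comap (fun ω => h x (ξ t ω)) (inferInstance : MeasurableSpace S)
        = MeasurableSpace.comap (ξ t) (MeasurableSpace.comap (h x) inferInstance) :=
      MeasurableSpace.comap_comp.symm
    rw [h1]
    exact MeasurableSpace.comap_mono (hhmeas x).comap_le
  have hκ_le : ∀ t, κ t ≤ MeasurableSpace.comap (ξ t) inferInstance := by
    intro t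
    by_cases hPPt : PP t
    · simp only [hκdef, if_pos hPPt]
      exact hcomap_le t xstar
    · simp only [hκdef, if_neg hPPt]
      exact bot_le
  have hκ'_le : ∀ t, κ' t ≤ MeasurableSpace.comap (ξ t) inferInstance := by
    intro t
    by_cases hPPt : PP t
    · simp only [hκ'def, if_pos hPPt]
      exact iSup₂_le fun x _ => hcomap_le t x
    · simp only [hκ'def, if_neg hPPt]
      exact le_rfl
  have hpair : ∀ t, Indep (κ t) (κ' t) P := by
    intro t
    by_cases hPPt : PP t
    · simp only [hκdef, hκ'def, if_pos hPPt]
      have hle : ∀ x : S, MeasurableSpace.comap (fun ω => h x (ξ t ω))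
          (inferInstance : MeasurableSpace S) ≤ ‹MeasurableSpace Ω› :=
        fun x => ((hhmeas x).comp (hξmeas t)).comap_le
      have hind := indep_iSup_of_disjoint hle (hfullindep t).iIndep
        (S := {xstar}) (T := {xstar}ᶜ) disjoint_compl_right
      simpa using hind
    · simp only [hκdef, if_neg hPPt]
      exact indep_bot_left _
  set mfam : ℤ × Bool → MeasurableSpace Ω := fun p => cond p.2 (κ p.1) (κ' p.1) with hmfam
  have hbig : iIndep mfam P := iIndep_pair_refine hindep.iIndep hκ_le hκ'_le hpair
  have hmfam_le : ∀ p, mfam p ≤ ‹MeasurableSpace Ω› := by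
    rintro ⟨t, b⟩
    cases b
    · exact (hκ'_le t).trans (hξmeas t).comap_le
    · exact (hκ_le t).trans (hξmeas t).comap_le
  have hsup_le_amb : ∀ T0 : Set (ℤ × Bool), (⨆ p ∈ T0, mfam p) ≤ ‹MeasurableSpace Ω› :=
    fun T0 => iSup₂_le fun p _ => hmfam_le p
  set Tset : Set (ℤ × Bool) := {p | PP p.1 ∧ p.2 = true} with hTset
  have hIndep : Indep (⨆ p ∈ Tsetᶜ, mfam p) (⨆ p ∈ Tset, mfam p) P :=
    indep_iSup_of_disjoint hmfam_le hbig disjoint_compl_left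
  -- measurability w.r.t. minf
  have hMeas_out : ∀ t : ℤ, ¬ PP t → ∀ x : S,
      Measurable[⨆ p ∈ Tsetᶜ, mfam p] fun ω => h x (ξ t ω) := by
    intro t hPPt x
    rw [measurable_iff_comap_le]
    have h2 : (MeasurableSpace.comap (ξ t) inferInstance : MeasurableSpace Ω) ≤ ⨆ p ∈ Tsetᶜ, mfam p := by
      have : mfam (t, false) ≤ ⨆ p ∈ Tsetᶜ, mfam p :=
        le_biSup mfam (show (t, false) ∈ Tsetᶜ by simp [hTset])
      simpa only [hmfam, cond_false, hκ'def, if_neg hPPt] using this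
    exact (hcomap_le t x).trans h2
  have hMeas_win : ∀ t : ℤ, PP t → ∀ x : S, x ≠ xstar →
      Measurable[⨆ p ∈ Tsetᶜ, mfam p] fun ω => h x (ξ t ω) := by
    intro t hPPt x hx
    rw [measurable_iff_comap_le]
    have h2 : MeasurableSpace.comap (fun ω => h x (ξ t ω)) inferInstance
        ≤ ⨆ y ∈ ({xstar}ᶜ : Set S),
            MeasurableSpace.comap (fun ω => h y (ξ t ω)) inferInstance :=
      le_biSup (f := fun y : S =>
        MeasurableSpace.comap (fun ω => h y (ξ t ω)) inferInstance) (by simpa using hx)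
    have h3 : mfam (t, false) ≤ ⨆ p ∈ Tsetᶜ, mfam p :=
      le_biSup mfam (show (t, false) ∈ Tsetᶜ by simp [hTset])
    refine h2.trans ?_
    simpa only [hmfam, cond_false, hκ'def, if_pos hPPt] using h3
  have hMeas_Mpath : ∀ (s : ℤ) (r : ℕ), s + (r : ℤ) ≤ 0 →
      Measurable[⨆ p ∈ Tsetᶜ, mfam p] fun ω => Mpath f' ξ ω s xstar r := by
    intro s r
    induction r with
    | zero => exact fun _ => measurable_const
    | succ r ih =>
      intro hr
      have hr0 : s + (r : ℤ) ≤ 0 := by push_cast at hr ⊢; omega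
      show Measurable[⨆ p ∈ Tsetᶜ, mfam p] fun ω =>
        f' (s + r) (Mpath f' ξ ω s xstar r) (ξ (s + r) ω)
      refine measurable_cases (mΩ := ⨆ p ∈ Tsetᶜ, mfam p)
        (g := fun x ω => f' (s + r) x (ξ (s + r) ω)) (ih hr0) (fun x => ?_)
      show Measurable[⨆ p ∈ Tsetᶜ, mfam p] fun ω => f' (s + r) x (ξ (s + r) ω)
      by_cases hcond : x = xstar ∧ PP (s + r)
      · have heq : (fun ω => f' (s + r) x (ξ (s + r) ω)) = fun _ => xstar := by
          funext ω
          simp only [hf']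
          rw [if_pos hcond]
        rw [heq]
        exact measurable_const
      · have heq : (fun ω => f' (s + r) x (ξ (s + r) ω))
            = fun ω => h x (ξ (s + r) ω) := by
          funext ω
          simp only [hf']
          rw [if_neg hcond]
        rw [heq]
        by_cases hPPt : PP (s + r)
        · exact hMeas_win _ hPPt x (fun hxx => hcond ⟨hxx, hPPt⟩)
        · exact hMeas_out _ hPPt x
  -- the events
  set D : Set Ω := ⋂ t ∈ Finset.Icc (-(M : ℤ)) (-1), {ω | h xstar (ξ t ω) = xstar} with hDdef
  set C' : Set Ω := ⋂ k : ℕ, ⋃ r : ℕ, ⋃ (_ : 0 < r), ⋃ (_ : r ≤ M + 1 + k),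
      {ω | Mpath f' ξ ω (-(M + 1 + k : ℕ) : ℤ) xstar r = xstar} with hC'def
  have hC'measinf : MeasurableSet[⨆ p ∈ Tsetᶜ, mfam p] C' := by
    rw [hC'def]
    refine MeasurableSet.iInter fun k => MeasurableSet.iUnion fun r =>
      MeasurableSet.iUnion fun _ => MeasurableSet.iUnion fun hrle => ?_
    have harg : (-(M + 1 + k : ℕ) : ℤ) + (r : ℤ) ≤ 0 := by push_cast; omega
    exact (hMeas_Mpath _ r harg) (measurableSet_singleton xstar)
  have hDmeasD : MeasurableSet[⨆ p ∈ Tset, mfam p] D := by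
    rw [hDdef]
    refine Finset.measurableSet_biInter _ (fun t ht => ?_)
    rw [Finset.mem_Icc] at ht
    have hPPt : PP t := ht
    have h1 : MeasurableSet[κ t] {ω | h xstar (ξ t ω) = xstar} := by
      rw [show κ t = MeasurableSpace.comap (fun ω => h xstar (ξ t ω)) inferInstance by
        simp only [hκdef, if_pos hPPt]]
      exact ⟨{xstar}, measurableSet_singleton xstar, by ext ω; simp⟩
    have h2 : κ t ≤ ⨆ p ∈ Tset, mfam p := by
      have : mfam (t, true) ≤ ⨆ p ∈ Tset, mfam p :=
        le_biSup mfam (show (t, true) ∈ Tset from ⟨hPPt, rfl⟩)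
      simpa only [hmfam, cond_true] using this
    exact h2 _ h1
  have hPmul : P (C' ∩ D) = P C' * P D :=
    (Indep_iff _ _ _).1 hIndep _ _ hC'measinf hDmeasD
  -- probability of D
  have hsetD : ∀ t : ℤ, {ω | h xstar (ξ t ω) = xstar}
      = ξ t ⁻¹' ((h xstar) ⁻¹' {xstar}) := by
    intro t; ext ω; simp
  have hAmeas : MeasurableSet ((h xstar) ⁻¹' {xstar}) :=
    (hhmeas xstar) (measurableSet_singleton xstar)
  have hfac : ∀ t : ℤ, P {ω | h xstar (ξ t ω) = xstar}
      = P {ω | h xstar (ξ 0 ω) = xstar} := by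
    intro t
    rw [hsetD t, hsetD 0, ← Measure.map_apply (hξmeas t) hAmeas,
      ← Measure.map_apply (hξmeas 0) hAmeas, hident t]
  have hPD : P D = (P {ω | h xstar (ξ 0 ω) = xstar}) ^ (Finset.Icc (-(M : ℤ)) (-1)).card := by
    rw [hDdef, hindep.meas_biInter (fun t _ => by
      rw [hsetD t]
      exact ⟨(h xstar) ⁻¹' {xstar}, hAmeas, rfl⟩)]
    rw [Finset.prod_congr rfl (fun t _ => hfac t), Finset.prod_const]
  have hPDpos : 0 < P D := by
    rw [hPD]
    exact ENNReal.pow_pos hlazy _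
  -- probability of C'
  have hnotPP : ∀ k : ℕ, ¬ PP (-(M + 1 + k : ℕ) : ℤ) := by
    intro k hk
    rw [hPP] at hk
    obtain ⟨h1, -⟩ := hk
    push_cast at h1
    omega
  have hf'0 : ∀ (k : ℕ) (e : Ξ), f' (-(M + 1 + k : ℕ) : ℤ) xstar e = h xstar e := by
    intro k e
    simp only [hf']
    exact if_neg (fun hc => hnotPP k hc.2)
  have hf'x : ∀ (t : ℤ) (x : S) (e : Ξ), x ≠ xstar → f' t x e = h x e := by
    intro t x e hx
    simp only [hf']
    exact if_neg (fun hc => hx hc.1)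
  have hcompl : C'ᶜ ⊆ ⋃ k : ℕ, badSet h ξ xstar (-(M + 1 + k : ℕ) : ℤ) (M + 1 + k) := by
    intro ω hω
    rw [hC'def] at hω
    simp only [Set.mem_compl_iff, Set.mem_iInter, not_forall] at hω
    obtain ⟨k, hk⟩ := hω
    refine Set.mem_iUnion.2 ⟨k, ?_⟩
    intro r hr0 hrn hrx
    apply hk
    obtain ⟨r', h1, h2, h3⟩ :=
      (hit_iff_hit h ξ ω xstar f' (-(M + 1 + k : ℕ) : ℤ) (hf'0 k) hf'x (M + 1 + k)).1
        ⟨r, hr0, hrn, hrx⟩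
    simp only [Set.mem_iUnion]
    exact ⟨r', h1, h2, h3⟩
  have hPC'c : P (C'ᶜ) < 1 := by
    calc P (C'ᶜ) ≤ ∑' k : ℕ, P (badSet h ξ xstar (-(M + 1 + k : ℕ) : ℤ) (M + 1 + k)) :=
          le_trans (measure_mono hcompl) (measure_iUnion_le _)
      _ = ∑' k : ℕ, P (badSet h ξ xstar 0 (M + 1 + k)) :=
          tsum_congr fun k => prob_badSet_eq P hhmeas hξmeas hindep hident xstar _ _
      _ < 1 := hM
  have hPC'pos : 0 < P C' := by
    rcases (zero_le : (0 : ℝ≥0∞) ≤ P C').lt_or_eq with hlt | heq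
    · exact hlt
    · exfalso
      have h1 : P (C'ᶜ) = 1 := by
        rw [prob_compl_eq_one_sub (hsup_le_amb Tsetᶜ C' hC'measinf), ← heq, tsub_zero]
      rw [h1] at hPC'c
      exact lt_irrefl 1 hPC'c
  -- conclusion
  have hsub : C' ∩ D ⊆ {ω | Bslice h ξ xstar 0 ω = {xstar}} := by
    rintro ω ⟨hωC, hωD⟩
    have hDprop : ∀ t : ℤ, -(M : ℤ) ≤ t → t ≤ -1 → h xstar (ξ t ω) = xstar := by
      intro t h1 h2
      rw [hDdef] at hωD
      simp only [Set.mem_iInter] at hωD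
      exact hωD t (Finset.mem_Icc.2 ⟨h1, h2⟩)
    have hCprop : ∀ k : ℕ, ∃ r : ℕ, 0 < r ∧ r ≤ M + 1 + k ∧
        Fpath h ξ ω (-(M + 1 + k : ℕ) : ℤ) xstar r = xstar := by
      intro k
      rw [hC'def] at hωC
      simp only [Set.mem_iInter, Set.mem_iUnion] at hωC
      obtain ⟨r, hr0, hrn, hrx⟩ := hωC k
      exact (hit_iff_hit h ξ ω xstar f' (-(M + 1 + k : ℕ) : ℤ) (hf'0 k) hf'x (M + 1 + k)).2
        ⟨r, hr0, hrn, hrx⟩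
    have hall := all_return h ξ ω xstar M hDprop hCprop
    show Bslice h ξ xstar 0 ω = {xstar}
    ext y
    simp only [Bslice, Set.mem_setOf_eq, Set.mem_singleton_iff]
    constructor
    · rintro ⟨n, rfl⟩
      rw [zero_sub]
      exact hall n
    · rintro rfl
      exact ⟨0, rfl⟩
  calc (0 : ℝ≥0∞) < P C' * P D := ENNReal.mul_pos (ne_of_gt hPC'pos) (ne_of_gt hPDpos)
    _ = P (C' ∩ D) := hPmul.symm
    _ ≤ P {ω | Bslice h ξ xstar 0 ω = {xstar}} := measure_mono hsub
end

section
/- Let $\mathbb{G}$ be an a.s. connected Doeblin graph driven by a stationary ergodic sequence, $x^*$ positive recurrent, and $(\beta_t)_{t\in\mathbb{Z}}$ the unique bi-recurrent state path. For any state $y\in S$, let $N^{(0,x^*)}(y;x^*)$ be the number of visits of the path started at $(0,x^*)$ to $y$ before its first return to $x^*$ (counting the initial visit if $y=x^*$). Then $\mathbb{E}[N^{(0,x^*)}(y;x^*)\, 1_{\{\beta_0=x^*\}}] = \mathbb{P}(\beta_0 = y)$, and summing over $y$, $\mathbb{E}[\sigma^{(0,x^*)}(x^*)\, 1_{\{\beta_0=x^*\}}]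 = 1$. In the Markovian case these reduce to the classical cycle formulas $\mathbb{E}[N^{(0,x^*)}(y;x^*)]\,\pi(x^*)=\pi(y)$ and $\mathbb{E}[\sigma^{(0,x^*)}(x^*)]\,\pi(x^*)=1$. -/
open MeasureTheory ProbabilityTheory ENNReal
open scoped Classical

/-- Number of visits of the path started at `(0,x⋆)` to `y` strictly before its
first return to `x⋆` (counting the initial visit when `y = x⋆`). -/
noncomputable def Nvisits {S Ξ Ω : Type*} (h : S → Ξ → S) (ξ : ℤ → Ω → Ξ)
    (xstar y : S) (ω : Ω) : ℕ∞ :=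
  {n : ℕ | (n : ℝ≥0∞) < retTime h ξ 0 xstar xstar ω ∧ Fpath h ξ ω 0 xstar n = y}.encard

section Aux

variable {Ω S Ξ : Type*} (h : S → Ξ → S) (ξ : ℤ → Ω → Ξ)

lemma fpath_succ (ω : Ω) (t : ℤ) (x : S) (n : ℕ) :
    Fpath h ξ ω t x (n+1) = h (Fpath h ξ ω t x n) (ξ (t + n) ω) := rfl

lemma fpath_add (ω : Ω) (t : ℤ) (x : S) (k j : ℕ) :
    Fpath h ξ ω t x (k + j) = Fpath h ξ ω (t + k) (Fpath h ξ ω t x k) j := by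
  induction j with
  | zero => rfl
  | succ j ih =>
      have : k + (j + 1) = (k + j) + 1 := by ring
      rw [this, fpath_succ, fpath_succ, ih]
      congr 2
      push_cast; ring

/-- tail property: if the path from `(t,x)` is at `z` at step `k`, then later values
agree with the path restarted from `(t+k, z)`. -/
lemma fpath_tail (ω : Ω) (t : ℤ) (x z : S) (k j : ℕ) (hz : Fpath h ξ ω t x k = z) :
    Fpath h ξ ω t x (k + j) = Fpath h ξ ω (t + k) z j := by
  rw [fpath_add, hz]

variable {θ : Ω → Ω}

lemma xi_iterate (hcov : ∀ (t : ℤ) (ω : Ω), ξ t (θ ω) = ξ (t + 1) ω)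
    (m : ℕ) (t : ℤ) (ω : Ω) : ξ t (θ^[m] ω) = ξ (t + m) ω := by
  induction m generalizing t ω with
  | zero => simp
  | succ m ih =>
      rw [Function.iterate_succ_apply, ih, hcov]
      congr 1; push_cast; ring

lemma fpath_iterate (hcov : ∀ (t : ℤ) (ω : Ω), ξ t (θ ω) = ξ (t + 1) ω)
    (m : ℕ) (ω : Ω) (t : ℤ) (x : S) (n : ℕ) :
    Fpath h ξ (θ^[m] ω) t x n = Fpath h ξ ω (t + m) x n := by
  induction n with
  | zero => rfl
  | succ n ih =>
      rw [fpath_succ, fpath_succ, ih, xi_iterate ξ hcov]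
      congr 2; push_cast; ring

lemma beta_iterate {β : ℤ → Ω → S} (hβcov : ∀ (t : ℤ) (ω : Ω), β t (θ ω) = β (t + 1) ω)
    (m : ℕ) (t : ℤ) (ω : Ω) : β t (θ^[m] ω) = β (t + m) ω := by
  induction m generalizing t ω with
  | zero => simp
  | succ m ih =>
      rw [Function.iterate_succ_apply, ih, hβcov]
      congr 1; push_cast; ring

/-- a path that is at `z` at time `t` follows `Fpath` afterwards -/
lemma path_follows {c : ℤ → S} {ω : Ω}
    (hc : ∀ t : ℤ, c (t + 1) = h (c t) (ξ t ω)) (t : ℤ) (n : ℕ) :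
    c (t + n) = Fpath h ξ ω t (c t) n := by
  induction n with
  | zero => simp [Fpath]
  | succ n ih =>
      rw [fpath_succ, ← ih]
      have : t + ((n : ℤ) + 1) = (t + n) + 1 := by ring
      push_cast
      rw [this, hc]

section RetTime

lemma retTime_le (ω : Ω) (t : ℤ) (x z : S) {r : ℕ} (hr : 0 < r)
    (hvis : Fpath h ξ ω t x r = z) : retTime h ξ t x z ω ≤ r :=
  sInf_le ⟨r, rfl, hr, hvis⟩

lemma retTime_lt_iff (ω : Ω) (t : ℤ) (x z : S) (n : ℕ) :
    (n : ℝ≥0∞) < retTime h ξ t x z ω ↔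
      ∀ r : ℕ, 0 < r → r ≤ n → Fpath h ξ ω t x r ≠ z := by
  constructor
  · intro hn r hr hrn hvis
    have := lt_of_lt_of_le hn (retTime_le h ξ ω t x z hr hvis)
    exact absurd (by exact_mod_cast this) (not_lt.2 hrn)
  · intro H
    have h1 : ((n + 1 : ℕ) : ℝ≥0∞) ≤ retTime h ξ t x z ω := by
      apply le_sInf
      rintro c ⟨r, rfl, hr, hvis⟩
      have : n + 1 ≤ r := by
        by_contra hc
        exact H r hr (by omega) hvis
      exact_mod_cast this
    calc (n : ℝ≥0∞) < ((n + 1 : ℕ) : ℝ≥0∞) := by exact_mod_cast Nat.lt_succ_self n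
      _ ≤ _ := h1

lemma retTime_eq_top (ω : Ω) (t : ℤ) (x z : S)
    (H : ∀ r : ℕ, 0 < r → Fpath h ξ ω t x r ≠ z) : retTime h ξ t x z ω = ⊤ := by
  have : {c : ℝ≥0∞ | ∃ r : ℕ, c = r ∧ 0 < r ∧ Fpath h ξ ω t x r = z} = ∅ := by
    ext c; simp only [Set.mem_setOf_eq, Set.mem_empty_iff_false, iff_false]
    rintro ⟨r, rfl, hr, hvis⟩; exact H r hr hvis
  rw [retTime, this, sInf_empty]

lemma retTime_eq_coe (ω : Ω) (t : ℤ) (x z : S) {r0 : ℕ} (h0 : 0 < r0)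
    (hvis : Fpath h ξ ω t x r0 = z)
    (hmin : ∀ r : ℕ, 0 < r → Fpath h ξ ω t x r = z → r0 ≤ r) :
    retTime h ξ t x z ω = r0 := by
  refine le_antisymm (retTime_le h ξ ω t x z h0 hvis) (le_sInf ?_)
  rintro c ⟨r, rfl, hr, hv⟩
  exact_mod_cast hmin r hr hv

lemma retTime_eq_coe_iff (ω : Ω) (t : ℤ) (x z : S) (k : ℕ) (hk : 0 < k) :
    retTime h ξ t x z ω = k ↔
      (Fpath h ξ ω t x k = z ∧ ∀ j : ℕ, 0 < j → j < k → Fpath h ξ ω t x j ≠ z) := by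
  constructor
  · intro he
    by_cases hex : ∃ r : ℕ, 0 < r ∧ Fpath h ξ ω t x r = z
    · obtain ⟨r, hr, hv⟩ := hex
      have hne : {r : ℕ | 0 < r ∧ Fpath h ξ ω t x r = z}.Nonempty := ⟨r, hr, hv⟩
      set r0 := sInf {r : ℕ | 0 < r ∧ Fpath h ξ ω t x r = z} with hr0
      have hmem := Nat.sInf_mem hne
      have heq : retTime h ξ t x z ω = r0 :=
        retTime_eq_coe h ξ ω t x z hmem.1 hmem.2 (fun r hr hv => Nat.sInf_le ⟨hr, hv⟩)
      rw [heq] at he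
      have : r0 = k := by exact_mod_cast he
      subst this
      refine ⟨hmem.2, fun j hj hjk hv => ?_⟩
      have := Nat.sInf_le (show j ∈ {r : ℕ | 0 < r ∧ Fpath h ξ ω t x r = z} from ⟨hj, hv⟩)
      omega
    · push_neg at hex
      rw [retTime_eq_top h ξ ω t x z (fun r hr => hex r hr)] at he
      exact absurd he.symm (by simp)
  · rintro ⟨hv, hmin⟩
    exact retTime_eq_coe h ξ ω t x z hk hv
      (fun r hr hvr => by by_contra hc; exact hmin r hr (by omega) hvr)

lemma retTime_iterate (hcov : ∀ (t : ℤ) (ω : Ω), ξ t (θ ω) = ξ (t + 1) ω)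
    (m : ℕ) (ω : Ω) (t : ℤ) (x z : S) :
    retTime h ξ t x z (θ^[m] ω) = retTime h ξ (t + m) x z ω := by
  unfold retTime
  congr 1
  ext c
  simp only [Set.mem_setOf_eq, fpath_iterate h ξ hcov]

end RetTime

end Aux

section Aux2
variable {Ω S Ξ : Type*} [MeasurableSpace Ξ] [MeasurableSpace S]
  [MeasurableSingletonClass S] [Countable S]
  (h : S → Ξ → S) (ξ : ℤ → Ω → Ξ)

/-- measurability of the path, with respect to any σ-algebra making the relevant
driving variables measurable. -/
lemma fpath_measurable (m : MeasurableSpace Ω) (hh : ∀ x, Measurable (h x))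
    (t : ℤ) (x : S) (n : ℕ) (hξ : ∀ k : ℕ, k < n → Measurable[m] (ξ (t + k))) :
    Measurable[m] (fun ω => Fpath h ξ ω t x n) := by
  induction n with
  | zero => exact measurable_const
  | succ n ih =>
      have ihm : Measurable[m] (fun ω => Fpath h ξ ω t x n) :=
        ih (fun k hk => hξ k (by omega))
      have hξn : Measurable[m] (ξ (t + n)) := hξ n (by omega)
      apply measurable_to_countable'
      intro s
      have : (fun ω => Fpath h ξ ω t x (n+1)) ⁻¹' {s} =
          ⋃ x' : S, ((fun ω => Fpath h ξ ω t x n) ⁻¹' {x'} ∩ (ξ (t + n)) ⁻¹' (h x' ⁻¹' {s})) := by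
        ext ω
        simp only [Set.mem_preimage, Set.mem_singleton_iff, Set.mem_iUnion, Set.mem_inter_iff]
        constructor
        · intro hs; exact ⟨Fpath h ξ ω t x n, rfl, hs⟩
        · rintro ⟨x', hx', hs⟩
          show h (Fpath h ξ ω t x n) (ξ (t + n) ω) = s
          rw [hx']; exact hs
      rw [this]
      exact MeasurableSet.iUnion fun x' =>
        (ihm (measurableSet_singleton x')).inter (hξn ((hh x') (measurableSet_singleton s)))

lemma measurable_avoid (m : MeasurableSpace Ω) {g : ℕ → Ω → S}
    (hg : ∀ r, Measurable[m] (g r)) (n : ℕ) (z : S) :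
    MeasurableSet[m] {ω | ∀ r : ℕ, 0 < r → r ≤ n → g r ω ≠ z} := by
  have : {ω | ∀ r : ℕ, 0 < r → r ≤ n → g r ω ≠ z} =
      ⋂ (r : ℕ), ⋂ (_ : 0 < r), ⋂ (_ : r ≤ n), ((g r) ⁻¹' {z})ᶜ := by
    ext ω; simp [Set.mem_iInter]
  rw [this]
  exact MeasurableSet.iInter fun r => MeasurableSet.iInter fun _ =>
    MeasurableSet.iInter fun _ => ((hg r) (measurableSet_singleton z)).compl

lemma measurable_avoid_lt (m : MeasurableSpace Ω) {g : ℕ → Ω → S}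
    (hg : ∀ r, Measurable[m] (g r)) (n : ℕ) (z : S) :
    MeasurableSet[m] {ω | ∀ r : ℕ, 0 < r → r < n → g r ω ≠ z} := by
  have : {ω | ∀ r : ℕ, 0 < r → r < n → g r ω ≠ z} =
      ⋂ (r : ℕ), ⋂ (_ : 0 < r), ⋂ (_ : r < n), ((g r) ⁻¹' {z})ᶜ := by
    ext ω; simp [Set.mem_iInter]
  rw [this]
  exact MeasurableSet.iInter fun r => MeasurableSet.iInter fun _ =>
    MeasurableSet.iInter fun _ => ((hg r) (measurableSet_singleton z)).compl

end Aux2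

section Card

lemma encard_cast_eq_tsum (T : Set ℕ) :
    ((T.encard : ℕ∞) : ℝ≥0∞) = ∑' n : ℕ, if n ∈ T then (1 : ℝ≥0∞) else 0 := by
  by_cases hT : T.Finite
  · rw [hT.encard_eq_coe_toFinset_card]
    rw [tsum_eq_sum (s := hT.toFinset) (by
      intro n hn
      rw [if_neg]; simpa using hn)]
    rw [Finset.sum_congr rfl (fun n hn => if_pos (by simpa using hn))]
    simp
  · rw [Set.Infinite.encard_eq hT]
    have : ∀ N : ℕ, (N : ℝ≥0∞) ≤ ∑' n : ℕ, if n ∈ T then (1 : ℝ≥0∞) else 0 := by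
      intro N
      obtain ⟨s, hsub, hcard⟩ := Set.Infinite.exists_subset_card_eq hT N
      calc (N : ℝ≥0∞) = ∑ n ∈ s, if n ∈ T then (1:ℝ≥0∞) else 0 := by
              rw [Finset.sum_congr rfl (fun n hn => if_pos (hsub hn))]
              simp [hcard]
        _ ≤ _ := ENNReal.sum_le_tsum s
    have htop : ∑' n : ℕ, (if n ∈ T then (1 : ℝ≥0∞) else 0) = ⊤ := by
      by_contra hne
      obtain ⟨N, hN⟩ := ENNReal.exists_nat_gt hne
      exact absurd (this N) (not_le.2 hN)
    rw [htop]; simp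

end Card


section Sums
variable {Ω S Ξ : Type*} (h : S → Ξ → S) (ξ : ℤ → Ω → Ξ)

lemma nvisits_eq_tsum (xstar y : S) (ω : Ω) :
    ((Nvisits h ξ xstar y ω : ℕ∞) : ℝ≥0∞) =
      ∑' n : ℕ, if ((n : ℝ≥0∞) < retTime h ξ 0 xstar xstar ω ∧ Fpath h ξ ω 0 xstar n = y)
        then (1:ℝ≥0∞) else 0 := by
  rw [Nvisits, encard_cast_eq_tsum]
  exact tsum_congr fun n => by simp [Set.mem_setOf_eq]

lemma retTime_eq_tsum (xstar : S) (ω : Ω) :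
    retTime h ξ 0 xstar xstar ω =
      ∑' n : ℕ, if ((n : ℝ≥0∞) < retTime h ξ 0 xstar xstar ω) then (1:ℝ≥0∞) else 0 := by
  by_cases hex : ∃ r : ℕ, 0 < r ∧ Fpath h ξ ω 0 xstar r = xstar
  · obtain ⟨r, hr, hv⟩ := hex
    have hne : {r : ℕ | 0 < r ∧ Fpath h ξ ω 0 xstar r = xstar}.Nonempty := ⟨r, hr, hv⟩
    have hmem := Nat.sInf_mem hne
    set r0 := sInf {r : ℕ | 0 < r ∧ Fpath h ξ ω 0 xstar r = xstar} with hr0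
    have heq : retTime h ξ 0 xstar xstar ω = r0 :=
      retTime_eq_coe h ξ ω 0 xstar xstar hmem.1 hmem.2 (fun r hr hv => Nat.sInf_le ⟨hr, hv⟩)
    rw [heq]
    have : ∀ n : ℕ, (if ((n : ℝ≥0∞) < (r0 : ℝ≥0∞)) then (1:ℝ≥0∞) else 0)
        = if n ∈ {i : ℕ | i < r0} then (1:ℝ≥0∞) else 0 := by
      intro n
      congr 1
      simp only [Set.mem_setOf_eq, eq_iff_iff]
      exact_mod_cast Iff.rfl
    rw [tsum_congr this]
    have hsub : ∑' (n:ℕ), (if n ∈ {i : ℕ | i < r0} then (1:ℝ≥0∞) else 0)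
        = ∑' (n : {i : ℕ | i < r0}), (1:ℝ≥0∞) := by
      rw [tsum_subtype {i : ℕ | i < r0} (fun _ => (1:ℝ≥0∞))]
      exact tsum_congr fun n => by simp [Set.indicator_apply]
    rw [hsub, ENNReal.tsum_set_one, Set.Nat.encard_range]
    simp
  · push_neg at hex
    rw [retTime_eq_top h ξ ω 0 xstar xstar hex]
    have : ∀ n : ℕ, (if ((n : ℝ≥0∞) < (⊤:ℝ≥0∞)) then (1:ℝ≥0∞) else 0)
        = if n ∈ (Set.univ : Set ℕ) then (1:ℝ≥0∞) else 0 := by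
      intro n; rw [if_pos (by simp), if_pos (by simp)]
    rw [tsum_congr this]
    have hsub : ∑' (n:ℕ), (if n ∈ (Set.univ : Set ℕ) then (1:ℝ≥0∞) else 0)
        = ∑' (n : (Set.univ : Set ℕ)), (1:ℝ≥0∞) := by
      rw [tsum_subtype (Set.univ : Set ℕ) (fun _ => (1:ℝ≥0∞))]
      exact tsum_congr fun n => by simp [Set.indicator_apply]
    rw [hsub, ENNReal.tsum_set_one]
    simp [Set.encard_univ, ENat.card_eq_top_of_infinite]

lemma tsum_nvisits (xstar : S) (ω : Ω) :
    ∑' y : S, ((Nvisits h ξ xstar y ω : ℕ∞) : ℝ≥0∞) = retTime h ξ 0 xstar xstar ω := by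
  calc ∑' y : S, ((Nvisits h ξ xstar y ω : ℕ∞) : ℝ≥0∞)
      = ∑' (y : S) (n : ℕ), if ((n : ℝ≥0∞) < retTime h ξ 0 xstar xstar ω
          ∧ Fpath h ξ ω 0 xstar n = y) then (1:ℝ≥0∞) else 0 :=
        tsum_congr fun y => nvisits_eq_tsum h ξ xstar y ω
    _ = ∑' (n : ℕ) (y : S), if ((n : ℝ≥0∞) < retTime h ξ 0 xstar xstar ω
          ∧ Fpath h ξ ω 0 xstar n = y) then (1:ℝ≥0∞) else 0 := ENNReal.tsum_comm
    _ = ∑' n : ℕ, if ((n : ℝ≥0∞) < retTime h ξ 0 xstar xstar ω) then (1:ℝ≥0∞) else 0 := by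
        refine tsum_congr fun n => ?_
        rw [tsum_eq_single (Fpath h ξ ω 0 xstar n) ?_]
        · by_cases hc : (n : ℝ≥0∞) < retTime h ξ 0 xstar xstar ω <;> simp [hc]
        · intro y' hy'
          rw [if_neg]
          rintro ⟨-, he⟩
          exact hy' he.symm
    _ = retTime h ξ 0 xstar xstar ω := (retTime_eq_tsum h ξ xstar ω).symm

end Sums

section Chain
variable {Ω S Ξ : Type*} (h : S → Ξ → S) (ξ : ℤ → Ω → Ξ) (xstar : S) (ω : Ω)

lemma forward_recurrent
    (hret : ∀ s : ℤ, ∃ r : ℕ, 0 < r ∧ Fpath h ξ ω s xstar r = xstar) :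
    ∀ (s : ℤ) (m : ℕ), ∃ k ≥ m, Fpath h ξ ω s xstar k = xstar := by
  intro s m
  induction m with
  | zero => exact ⟨0, le_refl 0, rfl⟩
  | succ m ih =>
      obtain ⟨k, hk, hv⟩ := ih
      obtain ⟨r, hr, hrv⟩ := hret (s + k)
      refine ⟨k + r, by omega, ?_⟩
      rw [fpath_tail h ξ ω s xstar xstar k r hv]
      exact hrv

/-- tail relation in `ℤ`-time: if the path from `(s,x⋆)` visits `x⋆` at time `r`,
then its value at any later time `u` agrees with the path from `(r,x⋆)`. -/
lemma fpath_tail_int {s r u : ℤ} (hsr : s ≤ r) (hru : r ≤ u)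
    (hvis : Fpath h ξ ω s xstar (r - s).toNat = xstar) :
    Fpath h ξ ω s xstar (u - s).toNat = Fpath h ξ ω r xstar (u - r).toNat := by
  have h1 := fpath_tail h ξ ω s xstar xstar (r - s).toNat (u - r).toNat hvis
  rw [show (r - s).toNat + (u - r).toNat = (u - s).toNat by omega] at h1
  rw [show s + ((r - s).toNat : ℤ) = r by omega] at h1
  exact h1

/-- From arbitrarily old ancestors of `(0,x⋆)` and the Borel–Cantelli-type finiteness
witness, produce a backward `x⋆`-recurrent bi-infinite path through `(0,x⋆)`. -/
lemma chain_lemma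
    (hBCw : ∀ t : ℤ, t ≤ 0 → ∃ I : ℕ, ∀ i : ℕ, i ≥ I →
      ¬(Fpath h ξ ω (t-1-i) xstar (i+1) = xstar ∧
        ∀ j : ℕ, 0 < j → j < i+1 → Fpath h ξ ω (t-1-i) xstar j ≠ xstar))
    (hanc0 : ∀ b : ℤ, ∃ s : ℤ, s ≤ b ∧ s < 0 ∧ Fpath h ξ ω s xstar (0 - s).toNat = xstar) :
    ∃ c : ℤ → S, (∀ t : ℤ, c (t+1) = h (c t) (ξ t ω)) ∧
      (∀ n : ℤ, ∃ s ≤ n, c s = xstar) ∧ c 0 = xstar := by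
  classical
  -- ancestor relation
  set anc : ℤ → ℤ → Prop := fun s t => s < t ∧ Fpath h ξ ω s xstar (t - s).toNat = xstar
    with hancdef
  set AncInf : ℤ → Prop := fun t => ∀ b : ℤ, ∃ s ≤ b, anc s t with hAncInfdef
  have h0 : AncInf 0 := by
    intro b
    obtain ⟨s, hsb, hs0, hv⟩ := hanc0 b
    exact ⟨s, hsb, hs0, hv⟩
  -- the induction step
  have step : ∀ t : ℤ, t ≤ 0 → AncInf t → ∃ r : ℤ, r < t ∧ anc r t ∧ AncInf r := by
    intro t ht hA
    obtain ⟨I, hI⟩ := hBCw t ht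
    -- a sequence of ancestors going to `-∞`
    have hseq : ∀ m : ℕ, ∃ s, s ≤ t - 1 - m ∧ anc s t := fun m => hA (t - 1 - m)
    choose sfun hsle hsanc using hseq
    -- last visit of the path from `(sfun m, x⋆)` before `t`
    have hlast : ∀ m : ℕ, ∃ r : ℤ,
        (sfun m ≤ r ∧ r < t ∧ Fpath h ξ ω (sfun m) xstar (r - sfun m).toNat = xstar) ∧
        ∀ v : ℤ, (sfun m ≤ v ∧ v < t ∧ Fpath h ξ ω (sfun m) xstar (v - sfun m).toNat = xstar)
          → v ≤ r := by
      intro m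
      obtain ⟨r, hr1, hr2⟩ := Int.exists_greatest_of_bdd
        (P := fun v => sfun m ≤ v ∧ v < t ∧ Fpath h ξ ω (sfun m) xstar (v - sfun m).toNat = xstar)
        ⟨t - 1, fun v hv => by omega⟩
        ⟨sfun m, le_refl _, (hsanc m).1, by
          rw [show (sfun m - sfun m).toNat = 0 by omega]; rfl⟩
      exact ⟨r, hr1, hr2⟩
    choose rfun hr1 hr2 using hlast
    -- the path from `(rfun m, x⋆)` reaches `(t, x⋆)` with no intermediate `x⋆` visit
    have hEV : ∀ m : ℕ, Fpath h ξ ω (rfun m) xstar (t - rfun m).toNat = xstar ∧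
        ∀ j : ℕ, 0 < j → j < (t - rfun m).toNat → Fpath h ξ ω (rfun m) xstar j ≠ xstar := by
      intro m
      obtain ⟨hsr, hrt, hrv⟩ := hr1 m
      constructor
      · rw [← fpath_tail_int h ξ xstar ω hsr (le_of_lt hrt) hrv]
        exact (hsanc m).2
      · intro j hj hjlt hjv
        have hvt : rfun m + j < t := by omega
        have : Fpath h ξ ω (sfun m) xstar ((rfun m + j) - sfun m).toNat = xstar := by
          rw [fpath_tail_int h ξ xstar ω hsr (by omega) hrv]
          rw [show (rfun m + j - rfun m).toNat = j by omega]
          exact hjv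
        have := hr2 m (rfun m + j) ⟨by omega, hvt, this⟩
        omega
    -- each `rfun m` lies in the window `[t - I, t - 1]`
    have hwin : ∀ m : ℕ, t - I ≤ rfun m ∧ rfun m ≤ t - 1 := by
      intro m
      obtain ⟨hsr, hrt, hrv⟩ := hr1 m
      refine ⟨?_, by omega⟩
      set i := (t - 1 - rfun m).toNat with hi
      have hit : t - 1 - i = rfun m := by omega
      by_contra hcon
      have hiI : i ≥ I := by omega
      apply hI i hiI
      constructor
      · rw [hit, show i + 1 = (t - rfun m).toNat by omega]
        exact (hEV m).1
      · intro j hj hji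
        rw [hit]
        exact (hEV m).2 j hj (by omega)
    -- pigeonhole: some value `r⋆` occurs for arbitrarily old ancestors
    haveI : Finite ↥(Set.Icc (t - I) (t - 1)) := (Set.finite_Icc _ _).to_subtype
    obtain ⟨v, hv⟩ := Finite.exists_infinite_fiber
      (fun m : ℕ => (⟨rfun m, by have := hwin m; exact Set.mem_Icc.2 ⟨this.1, this.2⟩⟩ :
        ↥(Set.Icc (t - I) (t - 1))))
    have hfib : {m : ℕ | rfun m = (v : ℤ)}.Infinite := by
      have h1 : ((fun m : ℕ => (⟨rfun m, _⟩ : ↥(Set.Icc (t - I) (t - 1)))) ⁻¹' {v}).Infinite :=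
        Set.infinite_coe_iff.mp hv
      refine Set.Infinite.mono ?_ h1
      intro m hm
      simp only [Set.mem_preimage, Set.mem_singleton_iff] at hm
      simpa using congrArg Subtype.val hm
    refine ⟨(v : ℤ), ?_, ?_, ?_⟩
    · obtain ⟨m, hm, -⟩ := hfib.exists_gt 0
      have := (hr1 m).2.1
      simp only [Set.mem_setOf_eq] at hm
      omega
    · obtain ⟨m, hm, -⟩ := hfib.exists_gt 0
      simp only [Set.mem_setOf_eq] at hm
      have h1 := hEV m
      rw [hm] at h1
      exact ⟨by have := (hr1 m).2.1; rw [hm] at this; omega, h1.1⟩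
    · -- AncInf r⋆
      intro b
      obtain ⟨m, hm, hmb⟩ := hfib.exists_gt ((t - 1 - (b ⊓ ((v:ℤ) - 1))).toNat)
      simp only [Set.mem_setOf_eq] at hm
      refine ⟨sfun m, ?_, ?_, ?_⟩
      · have := hsle m; omega
      · have := hsle m
        have h2 := (hr1 m).1
        omega
      · have h3 := (hr1 m).1
        have h4 := (hr1 m).2.2
        rw [hm] at h4
        exact h4
  -- iterate the step to get a chain going to `-∞`
  have hG : ∀ p : {p : ℤ // p ≤ 0 ∧ AncInf p},
      ∃ r : ℤ, r < p.1 ∧ anc r p.1 ∧ AncInf r := fun p => step p.1 p.2.1 p.2.2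
  let G : {p : ℤ // p ≤ 0 ∧ AncInf p} → {p : ℤ // p ≤ 0 ∧ AncInf p} := fun p =>
    ⟨(hG p).choose, by
      have hs := (hG p).choose_spec
      exact ⟨by have := p.2.1; omega, hs.2.2⟩⟩
  let Fs : ℕ → {p : ℤ // p ≤ 0 ∧ AncInf p} := fun i => G^[i] ⟨0, le_refl 0, h0⟩
  let F : ℕ → ℤ := fun i => (Fs i).1
  have hF0 : F 0 = 0 := rfl
  have hFstep : ∀ i : ℕ, F (i+1) < F i ∧ anc (F (i+1)) (F i) := by
    intro i
    have h1 : Fs (i+1) = G (Fs i) := Function.iterate_succ_apply' G i _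
    have h2 := (hG (Fs i)).choose_spec
    constructor
    · show (Fs (i+1)).1 < (Fs i).1
      rw [h1]; exact h2.1
    · show anc (Fs (i+1)).1 (Fs i).1
      rw [h1]; exact h2.2.1
  have hFanti : ∀ i j : ℕ, i ≤ j → F j ≤ F i := by
    intro i j hij
    induction j with
    | zero => have : i = 0 := by omega
              subst this; exact le_refl _
    | succ j ih =>
        rcases Nat.lt_or_ge i (j+1) with hlt | hge
        · have := (hFstep j).1
          have := ih (by omega)
          omega
        · have : i = j + 1 := by omega
          subst this; exact le_refl _
  have hFle : ∀ i : ℕ, F i ≤ -(i:ℤ) := by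
    intro i
    induction i with
    | zero => simp [hF0]
    | succ i ih =>
        have := (hFstep i).1
        omega
  -- consistency of the bi-infinite path
  have hnest : ∀ (i : ℕ) (u : ℤ), F i ≤ u → ∀ j : ℕ, i ≤ j →
      Fpath h ξ ω (F j) xstar (u - F j).toNat = Fpath h ξ ω (F i) xstar (u - F i).toNat := by
    intro i u hu j hij
    induction j with
    | zero => have : i = 0 := by omega
              subst this; rfl
    | succ j ih =>
        rcases Nat.lt_or_ge i (j+1) with hlt | hge
        · have hij' : i ≤ j := by omega
          have h1 : Fpath h ξ ω (F (j+1)) xstar (u - F (j+1)).toNat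
              = Fpath h ξ ω (F j) xstar (u - F j).toNat := by
            have hstep := hFstep j
            have hvis := hstep.2.2
            exact fpath_tail_int h ξ xstar ω (le_of_lt hstep.1)
              (le_trans (hFanti i j hij') hu) hvis
          rw [h1, ih hij']
        · have : i = j + 1 := by omega
          subst this; rfl
  let idx : ℤ → ℕ := fun u => (-u).toNat
  have hidx : ∀ u : ℤ, F (idx u) ≤ u := by
    intro u
    have := hFle (idx u)
    have : -(((-u).toNat : ℕ) : ℤ) ≤ u := by omega
    calc F (idx u) ≤ -((idx u : ℕ) : ℤ) := hFle (idx u)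
      _ ≤ u := by simp only [idx]; omega
  let c : ℤ → S := fun u => Fpath h ξ ω (F (idx u)) xstar ((u - F (idx u)).toNat)
  have hcrep : ∀ (u : ℤ) (i : ℕ), F i ≤ u →
      c u = Fpath h ξ ω (F i) xstar ((u - F i).toNat) := by
    intro u i hi
    rcases le_or_gt i (idx u) with hle | hlt
    · exact hnest i u hi (idx u) hle
    · exact (hnest (idx u) u (hidx u) i (by omega)).symm
  refine ⟨c, ?_, ?_, ?_⟩
  · intro u
    rw [hcrep u (idx u) (hidx u), hcrep (u+1) (idx u) (le_trans (hidx u) (by omega))]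
    rw [show (u + 1 - F (idx u)).toNat = (u - F (idx u)).toNat + 1 from by
      have := hidx u; omega]
    rw [fpath_succ]
    congr 2
    have := hidx u; omega
  · intro n
    refine ⟨F ((-n).toNat), by have := hFle ((-n).toNat); omega, ?_⟩
    rw [hcrep (F ((-n).toNat)) ((-n).toNat) (le_refl _)]
    rw [show (F ((-n).toNat) - F ((-n).toNat)).toNat = 0 by omega]
    rfl
  · rw [hcrep 0 0 (by rw [hF0])]
    rw [hF0]
    rfl

end Chain

/-- **Cycle formulas via mass transport.**  For the unique bi-recurrent state
path `β` in an a.s. connected Doeblin graph,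
`𝔼[N^{(0,x⋆)}(y;x⋆) 1_{β₀=x⋆}] = P(β₀ = y)` and
`𝔼[σ^{(0,x⋆)}(x⋆) 1_{β₀=x⋆}] = 1`; in the Markovian (i.i.d. driving) case
these reduce to the classical cycle formulas with `π(y) = P(β₀ = y)`. -/
theorem cycle_formulas
    {Ω S Ξ : Type*} [MeasurableSpace Ω] [MeasurableSpace Ξ] [MeasurableSpace S]
    [MeasurableSingletonClass S] [Countable S]
    (P : Measure Ω) [IsProbabilityMeasure P]
    (h : S → Ξ → S) (hhmeas : ∀ x, Measurable (h x))
    (ξ : ℤ → Ω → Ξ) (hξmeas : ∀ t, Measurable (ξ t))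
    (θ : Ω → Ω) (hergo : Ergodic θ P)
    (hcov : ∀ (t : ℤ) (ω : Ω), ξ t (θ ω) = ξ (t + 1) ω)
    (hconn : ∀ᵐ ω ∂P, ∀ u v : ℤ × S, Merge h ξ ω u v)
    (xstar : S)
    (hposrec : ∫⁻ ω, retTime h ξ 0 xstar xstar ω ∂P < ⊤)
    (β : ℤ → Ω → S) (hβmeas : ∀ t, Measurable (β t))
    (hβpath : ∀ᵐ ω ∂P, ∀ t : ℤ, β (t + 1) ω = h (β t ω) (ξ t ω))
    (hβbirec : ∀ᵐ ω ∂P, ∀ n : ℤ,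
      (∃ t, n ≤ t ∧ β t ω = xstar) ∧ (∃ t, t ≤ n ∧ β t ω = xstar))
    (hβcov : ∀ (t : ℤ) (ω : Ω), β t (θ ω) = β (t + 1) ω)
    (hβunique : ∀ γ : ℤ → Ω → S,
      (∀ᵐ ω ∂P, ∀ t : ℤ, γ (t + 1) ω = h (γ t ω) (ξ t ω)) →
      (∀ᵐ ω ∂P, ∀ n : ℤ,
        (∃ t, n ≤ t ∧ γ t ω = xstar) ∧ (∃ t, t ≤ n ∧ γ t ω = xstar)) →
      ∀ᵐ ω ∂P, ∀ t : ℤ, γ t ω = β t ω)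
    (y : S) :
    (∫⁻ ω, (Nvisits h ξ xstar y ω : ℝ≥0∞)
        * (if β 0 ω = xstar then 1 else 0) ∂P = P {ω | β 0 ω = y})
    ∧ (∫⁻ ω, retTime h ξ 0 xstar xstar ω
        * (if β 0 ω = xstar then 1 else 0) ∂P = 1)
    ∧ (iIndepFun ξ P →
        ((∫⁻ ω, (Nvisits h ξ xstar y ω : ℝ≥0∞) ∂P) * P {ω | β 0 ω = xstar}
            = P {ω | β 0 ω = y})
        ∧ (∫⁻ ω, retTime h ξ 0 xstar xstar ω ∂P) * P {ω | β 0 ω = xstar} = 1) := by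
  classical
  have hMP : MeasurePreserving θ P P := hergo.toMeasurePreserving
  -- measurability of paths
  have mFp : ∀ (t : ℤ) (n : ℕ), Measurable (fun ω => Fpath h ξ ω t xstar n) := fun t n =>
    fpath_measurable h ξ _ hhmeas t xstar n (fun k _ => hξmeas _)
  set Bset : Set Ω := {ω | β 0 ω = xstar} with hBdef
  have hBmeas : MeasurableSet Bset := (hβmeas 0) (measurableSet_singleton xstar)
  set G : S → ℕ → Set Ω := fun y' n =>
    {ω | Fpath h ξ ω 0 xstar n = y' ∧
      ∀ r : ℕ, 0 < r → r ≤ n → Fpath h ξ ω 0 xstar r ≠ xstar} with hGdef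
  have hGmeas : ∀ y' n, MeasurableSet (G y' n) := fun y' n =>
    ((mFp 0 n) (measurableSet_singleton y')).inter
      (measurable_avoid _ (fun r => mFp 0 r) n xstar)
  set R : ℕ → Set Ω := fun n =>
    {ω | ∀ r : ℕ, 0 < r → r ≤ n → Fpath h ξ ω 0 xstar r ≠ xstar} with hRdef
  have hRmeas : ∀ n, MeasurableSet (R n) := fun n =>
    measurable_avoid _ (fun r => mFp 0 r) n xstar
  have hRmem : ∀ (n : ℕ) (ω : Ω), ω ∈ R n ↔ (n : ℝ≥0∞) < retTime h ξ 0 xstar xstar ω :=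
    fun n ω => (retTime_lt_iff h ξ ω 0 xstar xstar n).symm
  -- pointwise decompositions
  have hptwiseN : ∀ (y' : S) (ω : Ω), (Nvisits h ξ xstar y' ω : ℝ≥0∞) =
      ∑' n : ℕ, (G y' n).indicator (fun _ => (1:ℝ≥0∞)) ω := by
    intro y' ω
    rw [nvisits_eq_tsum]
    refine tsum_congr fun n => ?_
    rw [Set.indicator_apply]
    congr 1
    simp only [hGdef, Set.mem_setOf_eq, eq_iff_iff, retTime_lt_iff h ξ ω 0 xstar xstar n]
    tauto
  have hptwise : ∀ (y' : S) (ω : Ω),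
      (Nvisits h ξ xstar y' ω : ℝ≥0∞) * (if β 0 ω = xstar then 1 else 0) =
      ∑' n : ℕ, (Bset ∩ G y' n).indicator (fun _ => (1:ℝ≥0∞)) ω := by
    intro y' ω
    rw [hptwiseN y' ω, ← ENNReal.tsum_mul_right]
    refine tsum_congr fun n => ?_
    rw [Set.indicator_apply, Set.indicator_apply]
    by_cases hg : ω ∈ G y' n <;> by_cases hb : ω ∈ Bset <;>
      simp [hg, hb, Set.mem_inter_iff, hBdef, Set.mem_setOf_eq] <;> tauto
  have hptwiseR : ∀ ω : Ω, retTime h ξ 0 xstar xstar ω =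
      ∑' n : ℕ, (R n).indicator (fun _ => (1:ℝ≥0∞)) ω := by
    intro ω
    rw [retTime_eq_tsum]
    refine tsum_congr fun n => ?_
    rw [Set.indicator_apply]
    congr 1
    simp only [eq_iff_iff]
    exact (hRmem n ω).symm
  have hptwiseRB : ∀ ω : Ω,
      retTime h ξ 0 xstar xstar ω * (if β 0 ω = xstar then 1 else 0) =
      ∑' n : ℕ, (Bset ∩ R n).indicator (fun _ => (1:ℝ≥0∞)) ω := by
    intro ω
    rw [hptwiseR ω, ← ENNReal.tsum_mul_right]
    refine tsum_congr fun n => ?_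
    rw [Set.indicator_apply, Set.indicator_apply]
    by_cases hg : ω ∈ R n <;> by_cases hb : ω ∈ Bset <;>
      simp [hg, hb, Set.mem_inter_iff, hBdef, Set.mem_setOf_eq] <;> tauto
  -- integral of a sum of indicators
  have hint : ∀ (A : ℕ → Set Ω), (∀ n, MeasurableSet (A n)) →
      ∫⁻ ω, (∑' n : ℕ, (A n).indicator (fun _ => (1:ℝ≥0∞)) ω) ∂P = ∑' n : ℕ, P (A n) := by
    intro A hA
    have heq := lintegral_tsum (μ := P)
      (f := fun n => (A n).indicator (fun _ => (1:ℝ≥0∞)))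
      (fun n => (measurable_const.indicator (hA n)).aemeasurable)
    rw [heq]
    exact tsum_congr fun n => lintegral_indicator_one (hA n)
  -- ** mass transport: the key identity **
  have key1 : ∀ y' : S, (∑' n : ℕ, P (Bset ∩ G y' n)) = P {ω | β 0 ω = y'} := by
    intro y'
    set A : ℕ → Set Ω := fun n => {ω | β (-(n:ℤ)) ω = xstar ∧
      (Fpath h ξ ω (-(n:ℤ)) xstar n = y' ∧
      ∀ r : ℕ, 0 < r → r ≤ n → Fpath h ξ ω (-(n:ℤ)) xstar r ≠ xstar)} with hAdef
    set D : ℕ → Set Ω := fun n => {ω | β 0 ω = y' ∧ (β (-(n:ℤ)) ω = xstar ∧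
      ∀ r : ℕ, 0 < r → r ≤ n → β (-(n:ℤ) + r) ω ≠ xstar)} with hDdef
    have hAmeas : ∀ n, MeasurableSet (A n) := fun n =>
      ((hβmeas _) (measurableSet_singleton xstar)).inter
        (((mFp _ n) (measurableSet_singleton y')).inter
          (measurable_avoid _ (fun r => mFp _ r) n xstar))
    have hbeta_avoid : ∀ n : ℕ, MeasurableSet
        {ω | ∀ r : ℕ, 0 < r → r ≤ n → β (-(n:ℤ) + r) ω ≠ xstar} :=
      fun n => measurable_avoid _ (fun r => hβmeas (-(n:ℤ) + r)) n xstar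
    have hDmeas : ∀ n, MeasurableSet (D n) := fun n =>
      ((hβmeas _) (measurableSet_singleton y')).inter
        (((hβmeas _) (measurableSet_singleton xstar)).inter (hbeta_avoid n))
    -- step 1 : P (Bset ∩ G y' n) = P (A n) by measure preservation
    have step1 : ∀ n : ℕ, P (Bset ∩ G y' n) = P (A n) := by
      intro n
      have hpre : (θ^[n]) ⁻¹' (A n) = Bset ∩ G y' n := by
        ext ω
        have e1 : β (-(n:ℤ)) (θ^[n] ω) = β 0 ω := by
          rw [beta_iterate hβcov n (-(n:ℤ)) ω]
          norm_num
        have e2 : ∀ r : ℕ, Fpath h ξ (θ^[n] ω) (-(n:ℤ)) xstar r = Fpath h ξ ω 0 xstar r := by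
          intro r
          rw [fpath_iterate h ξ hcov n ω (-(n:ℤ)) xstar r]
          norm_num
        simp only [Set.mem_preimage, hAdef, Set.mem_setOf_eq, e1, e2,
          Set.mem_inter_iff, hBdef, hGdef]
      rw [← hpre]
      exact (hMP.iterate n).measure_preimage (hAmeas n).nullMeasurableSet
    -- step 2 : P (A n) = P (D n), a.e. identification via the path property of β
    have step2 : ∀ n : ℕ, P (A n) = P (D n) := by
      intro n
      refine measure_congr (Filter.eventuallyEq_set.mpr ?_)
      filter_upwards [hβpath] with ω hp
      have hfol : β (-(n:ℤ)) ω = xstar →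
          ∀ r : ℕ, Fpath h ξ ω (-(n:ℤ)) xstar r = β (-(n:ℤ) + r) ω := by
        intro hb r
        have := path_follows h ξ (c := fun t => β t ω) hp (-(n:ℤ)) r
        rw [hb] at this
        exact this.symm
      simp only [hAdef, hDdef, Set.mem_setOf_eq]
      constructor
      · rintro ⟨hb, hy, hav⟩
        refine ⟨?_, hb, fun r hr hrn => ?_⟩
        · rw [show (0:ℤ) = -(n:ℤ) + n by ring, ← hfol hb n]
          exact hy
        · rw [← hfol hb r]
          exact hav r hr hrn
      · rintro ⟨hy, hb, hav⟩
        refine ⟨hb, ?_, fun r hr hrn => ?_⟩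
        · rw [hfol hb n, show -(n:ℤ) + n = 0 by ring]
          exact hy
        · rw [hfol hb r]
          exact hav r hr hrn
    -- step 3 : the D n are pairwise disjoint
    have hDdisj : Pairwise (Function.onFun Disjoint D) := by
      have hkey : ∀ a b : ℕ, a < b → ∀ ω : Ω, ω ∈ D a → ω ∈ D b → False := by
        intro a b hab ω ha hb
        simp only [hDdef, Set.mem_setOf_eq] at ha hb
        refine hb.2.2 (b - a) (by omega) (by omega) ?_
        rw [show -(b:ℤ) + ((b - a : ℕ) : ℤ) = -(a:ℤ) by push_cast; omega]
        exact ha.2.1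
      intro a b hab
      rcases lt_or_gt_of_ne hab with hlt | hgt
      · exact Set.disjoint_left.mpr fun ω hωa hωb => hkey a b hlt ω hωa hωb
      · exact Set.disjoint_left.mpr fun ω hωa hωb => hkey b a hgt ω hωb hωa
    -- step 4 : the union of the D n is a.e. {β 0 = y'}
    have hDunion : P (⋃ n, D n) = P {ω | β 0 ω = y'} := by
      refine measure_congr (Filter.eventuallyEq_set.mpr ?_)
      filter_upwards [hβbirec] with ω hbi
      simp only [Set.mem_iUnion, Set.mem_setOf_eq]
      constructor
      · rintro ⟨n, hn⟩
        simp only [hDdef, Set.mem_setOf_eq] at hn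
        exact hn.1
      · intro hy0
        obtain ⟨-, t1, ht1, htx⟩ := hbi 0
        obtain ⟨t0, ht0, hmax⟩ := Int.exists_greatest_of_bdd
          (P := fun t => t ≤ 0 ∧ β t ω = xstar) ⟨0, fun z hz => hz.1⟩ ⟨t1, ht1, htx⟩
        refine ⟨(-t0).toNat, ?_⟩
        simp only [hDdef, Set.mem_setOf_eq]
        refine ⟨hy0, ?_, ?_⟩
        · rw [show -(((-t0).toNat : ℕ) : ℤ) = t0 by omega]
          exact ht0.2
        · intro r hr hrn heq
          rw [show -(((-t0).toNat : ℕ) : ℤ) + r = t0 + r by omega] at heq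
          have h1 : t0 + r ≤ 0 := by omega
          have := hmax (t0 + r) ⟨h1, heq⟩
          omega
    calc ∑' n : ℕ, P (Bset ∩ G y' n) = ∑' n : ℕ, P (D n) := by
          refine tsum_congr fun n => ?_
          rw [step1 n, step2 n]
      _ = P (⋃ n, D n) := (measure_iUnion hDdisj hDmeas).symm
      _ = P {ω | β 0 ω = y'} := hDunion
  -- the first formula
  have part1 : ∀ y' : S, ∫⁻ ω, (Nvisits h ξ xstar y' ω : ℝ≥0∞)
      * (if β 0 ω = xstar then 1 else 0) ∂P = P {ω | β 0 ω = y'} := by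
    intro y'
    rw [lintegral_congr (hptwise y'), hint _ (fun n => hBmeas.inter (hGmeas y' n))]
    exact key1 y'
  -- decomposition over the value of the path at time n
  have hRdecomp : ∀ n : ℕ, P (Bset ∩ R n) = ∑' y' : S, P (Bset ∩ G y' n) := by
    intro n
    have : Bset ∩ R n = ⋃ y' : S, (Bset ∩ G y' n) := by
      ext ω
      simp only [Set.mem_inter_iff, Set.mem_iUnion, hRdef, hGdef, Set.mem_setOf_eq]
      constructor
      · rintro ⟨hb, hr⟩
        exact ⟨Fpath h ξ ω 0 xstar n, hb, rfl, hr⟩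
      · rintro ⟨y', hb, -, hr⟩
        exact ⟨hb, hr⟩
    rw [this]
    refine measure_iUnion ?_ (fun y' => hBmeas.inter (hGmeas y' n))
    intro a b hab
    refine Set.disjoint_left.mpr fun ω hωa hωb => hab ?_
    simp only [Set.mem_inter_iff, hGdef, Set.mem_setOf_eq] at hωa hωb
    rw [← hωa.2.1, ← hωb.2.1]
  -- total mass one
  have hsum1 : ∑' y' : S, P {ω | β 0 ω = y'} = 1 := by
    have hu : ⋃ y' : S, {ω | β 0 ω = y'} = Set.univ := by
      ext ω
      simp only [Set.mem_iUnion, Set.mem_setOf_eq, Set.mem_univ, iff_true]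
      exact ⟨β 0 ω, rfl⟩
    have hdis : Pairwise (Function.onFun Disjoint (fun y' : S => {ω | β 0 ω = y'})) := by
      intro a b hab
      refine Set.disjoint_left.mpr fun ω hωa hωb => hab ?_
      simp only [Set.mem_setOf_eq] at hωa hωb
      rw [← hωa, ← hωb]
    rw [← measure_iUnion hdis (fun y' => (hβmeas 0) (measurableSet_singleton y')), hu,
      measure_univ]
  -- the second formula
  have hmid : ∑' n : ℕ, P (Bset ∩ R n) = 1 := by
    calc ∑' n : ℕ, P (Bset ∩ R n) = ∑' (n : ℕ) (y' : S), P (Bset ∩ G y' n) :=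
          tsum_congr hRdecomp
      _ = ∑' (y' : S) (n : ℕ), P (Bset ∩ G y' n) := ENNReal.tsum_comm
      _ = ∑' y' : S, P {ω | β 0 ω = y'} := tsum_congr key1
      _ = 1 := hsum1
  have part2 : ∫⁻ ω, retTime h ξ 0 xstar xstar ω
      * (if β 0 ω = xstar then 1 else 0) ∂P = 1 := by
    rw [lintegral_congr hptwiseRB, hint _ (fun n => hBmeas.inter (hRmeas n))]
    exact hmid
  refine ⟨part1 y, part2, ?_⟩
  intro hind
  -- past and future σ-algebras
  have hcomaple : ∀ t : ℤ,
      MeasurableSpace.comap (ξ t) inferInstance ≤ ‹MeasurableSpace Ω› :=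
    fun t => (hξmeas t).comap_le
  have hindep : Indep (⨆ t ∈ {t : ℤ | t < 0}, MeasurableSpace.comap (ξ t) inferInstance)
      (⨆ t ∈ {t : ℤ | 0 ≤ t}, MeasurableSpace.comap (ξ t) inferInstance) P := by
    refine indep_iSup_of_disjoint (fun t => hcomaple t) hind.iIndep ?_
    rw [Set.disjoint_left]
    intro t ht ht'
    simp only [Set.mem_setOf_eq] at ht ht'
    omega
  have hprod := (Indep_iff (⨆ t ∈ {t : ℤ | t < 0}, MeasurableSpace.comap (ξ t) inferInstance) (⨆ t ∈ {t : ℤ | 0 ≤ t}, MeasurableSpace.comap (ξ t) inferInstance) P).mp hindep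
  have hpastxi : ∀ t : ℤ, t < 0 → Measurable[(⨆ t ∈ {t : ℤ | t < 0}, MeasurableSpace.comap (ξ t) inferInstance)] (ξ t) := fun t ht =>
    Measurable.of_comap_le (le_iSup₂ (f := fun (t : ℤ) (_ : t ∈ {t : ℤ | t < 0}) =>
      MeasurableSpace.comap (ξ t) inferInstance) t ht)
  have hfutxi : ∀ t : ℤ, 0 ≤ t → Measurable[(⨆ t ∈ {t : ℤ | 0 ≤ t}, MeasurableSpace.comap (ξ t) inferInstance)] (ξ t) := fun t ht =>
    Measurable.of_comap_le (le_iSup₂ (f := fun (t : ℤ) (_ : t ∈ {t : ℤ | 0 ≤ t}) =>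
      MeasurableSpace.comap (ξ t) inferInstance) t ht)
  have hfutF : ∀ n : ℕ, Measurable[(⨆ t ∈ {t : ℤ | 0 ≤ t}, MeasurableSpace.comap (ξ t) inferInstance)] (fun ω => Fpath h ξ ω 0 xstar n) := fun n =>
    fpath_measurable h ξ (⨆ t ∈ {t : ℤ | 0 ≤ t}, MeasurableSpace.comap (ξ t) inferInstance) hhmeas 0 xstar n (fun k _ => hfutxi _ (by omega))
  have hGfut : ∀ (y' : S) (n : ℕ), MeasurableSet[(⨆ t ∈ {t : ℤ | 0 ≤ t}, MeasurableSpace.comap (ξ t) inferInstance)] (G y' n) := fun y' n =>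
    MeasurableSet.inter ((hfutF n) (measurableSet_singleton y'))
      (measurable_avoid (⨆ t ∈ {t : ℤ | 0 ≤ t}, MeasurableSpace.comap (ξ t) inferInstance) (fun r => hfutF r) n xstar)
  have hRfut : ∀ n : ℕ, MeasurableSet[(⨆ t ∈ {t : ℤ | 0 ≤ t}, MeasurableSpace.comap (ξ t) inferInstance)] (R n) := fun n =>
    measurable_avoid (⨆ t ∈ {t : ℤ | 0 ≤ t}, MeasurableSpace.comap (ξ t) inferInstance) (fun r => hfutF r) n xstar
  -- the past event of having arbitrarily old x⋆-ancestors
  set anc : ℕ → Set Ω := fun j =>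
    {ω | Fpath h ξ ω (-(j:ℤ)-1) xstar (j+1) = xstar} with hancdef
  set Bpp : Set Ω := ⋂ k : ℕ, ⋃ j : ℕ, anc (k + j) with hBppdef
  have hancpast : ∀ j : ℕ, MeasurableSet[(⨆ t ∈ {t : ℤ | t < 0}, MeasurableSpace.comap (ξ t) inferInstance)] (anc j) := fun j =>
    (fpath_measurable h ξ (⨆ t ∈ {t : ℤ | t < 0}, MeasurableSpace.comap (ξ t) inferInstance) hhmeas (-(j:ℤ)-1) xstar (j+1)
      (fun k hk => hpastxi _ (by omega))) (measurableSet_singleton xstar)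
  have hBpppast : MeasurableSet[(⨆ t ∈ {t : ℤ | t < 0}, MeasurableSpace.comap (ξ t) inferInstance)] Bpp :=
    MeasurableSet.iInter fun k => MeasurableSet.iUnion fun j => hancpast _
  -- the key a.e. identification
  have hBBpp : ∀ᵐ ω ∂P, (ω ∈ Bset ↔ ω ∈ Bpp) := by
    -- measurability of the return time
    have mRet : Measurable (retTime h ξ 0 xstar xstar) := by
      have hfe : retTime h ξ 0 xstar xstar =
          fun ω => ∑' n : ℕ, (R n).indicator (fun _ => (1:ℝ≥0∞)) ω := funext hptwiseR
      rw [hfe]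
      exact Measurable.ennreal_tsum (fun n => measurable_const.indicator (hRmeas n))
    -- almost surely, from every (s, x⋆) the path returns to x⋆
    set Nset : ℤ → Set Ω := fun s =>
      {ω | ∀ r : ℕ, 0 < r → Fpath h ξ ω s xstar r ≠ xstar} with hNdef
    have hNmeas : ∀ s : ℤ, MeasurableSet (Nset s) := by
      intro s
      have he : Nset s = ⋂ (r : ℕ), ⋂ (_ : 0 < r),
          ((fun ω => Fpath h ξ ω s xstar r) ⁻¹' {xstar})ᶜ := by
        ext ω; simp [hNdef]
      rw [he]
      exact MeasurableSet.iInter fun r => MeasurableSet.iInter fun _ =>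
        ((mFp s r) (measurableSet_singleton xstar)).compl
    have hN0 : P (Nset 0) = 0 := by
      have hae : ∀ᵐ ω ∂P, retTime h ξ 0 xstar xstar ω < ⊤ := ae_lt_top mRet hposrec.ne
      rw [measure_eq_zero_iff_ae_notMem]
      filter_upwards [hae] with ω hlt hmem
      rw [retTime_eq_top h ξ ω 0 xstar xstar hmem] at hlt
      exact absurd hlt (lt_irrefl ⊤)
    have hNpre : ∀ (s : ℤ) (m : ℕ), (θ^[m]) ⁻¹' (Nset s) = Nset (s + m) := by
      intro s m
      ext ω
      simp only [Set.mem_preimage, hNdef, Set.mem_setOf_eq, fpath_iterate h ξ hcov]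
    have hNs : ∀ s : ℤ, P (Nset s) = 0 := by
      intro s
      rcases le_or_gt s 0 with hs | hs
      · have hmp := (hMP.iterate ((-s).toNat)).measure_preimage (hNmeas s).nullMeasurableSet
        rw [hNpre s ((-s).toNat), show s + ((((-s).toNat : ℕ)) : ℤ) = 0 by omega] at hmp
        rw [← hmp]
        exact hN0
      · have hmp := (hMP.iterate (s.toNat)).measure_preimage (hNmeas 0).nullMeasurableSet
        rw [hNpre 0 (s.toNat), show (0:ℤ) + (((s.toNat : ℕ)) : ℤ) = s by omega] at hmp
        rw [hmp]
        exact hN0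
    have hforward : ∀ᵐ ω ∂P, ∀ (s : ℤ) (m : ℕ), ∃ k ≥ m, Fpath h ξ ω s xstar k = xstar := by
      have hfinret : ∀ᵐ ω ∂P, ∀ s : ℤ, ∃ r : ℕ, 0 < r ∧ Fpath h ξ ω s xstar r = xstar := by
        rw [ae_all_iff]
        intro s
        have h0 : ∀ᵐ ω ∂P, ω ∉ Nset s := (measure_eq_zero_iff_ae_notMem).mp (hNs s)
        filter_upwards [h0] with ω hω
        by_contra hc
        push_neg at hc
        exact hω (fun r hr => hc r hr)
      filter_upwards [hfinret] with ω hω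
      exact forward_recurrent h ξ xstar ω hω
    -- Borel–Cantelli: exact first-return-time events
    set EV : ℤ → ℕ → Set Ω := fun r k => {ω | Fpath h ξ ω r xstar k = xstar ∧
      ∀ j : ℕ, 0 < j → j < k → Fpath h ξ ω r xstar j ≠ xstar} with hEVdef
    have hEVmeas : ∀ (r : ℤ) (k : ℕ), MeasurableSet (EV r k) := fun r k =>
      ((mFp r k) (measurableSet_singleton xstar)).inter
        (measurable_avoid_lt _ (fun j => mFp r j) k xstar)
    have hEVP : ∀ (r : ℤ) (k : ℕ), r ≤ 0 → P (EV r k) = P (EV 0 k) := by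
      intro r k hr
      have hpre : (θ^[(-r).toNat]) ⁻¹' (EV r k) = EV 0 k := by
        ext ω
        simp only [Set.mem_preimage, hEVdef, Set.mem_setOf_eq, fpath_iterate h ξ hcov,
          show r + ((((-r).toNat : ℕ)) : ℤ) = 0 by omega]
      rw [← hpre]
      exact ((hMP.iterate _).measure_preimage (hEVmeas r k).nullMeasurableSet).symm
    have hEV0disj : Pairwise (Function.onFun Disjoint (fun i : ℕ => EV 0 (i+1))) := by
      have hkey : ∀ a b : ℕ, a < b → ∀ ω : Ω, ω ∈ EV 0 (a+1) → ω ∈ EV 0 (b+1) → False := by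
        intro a b hab ω ha hb
        simp only [hEVdef, Set.mem_setOf_eq] at ha hb
        exact hb.2 (a+1) (by omega) (by omega) ha.1
      intro a b hab
      rcases lt_or_gt_of_ne hab with hlt | hgt
      · exact Set.disjoint_left.mpr fun ω h1 h2 => hkey a b hlt ω h1 h2
      · exact Set.disjoint_left.mpr fun ω h1 h2 => hkey b a hgt ω h2 h1
    have hBC : ∀ᵐ ω ∂P, ∀ t : ℤ, t ≤ 0 → ∃ I : ℕ, ∀ i : ℕ, i ≥ I →
        ω ∉ EV (t-1-i) (i+1) := by
      rw [ae_all_iff]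
      intro t
      by_cases ht : t ≤ 0
      · have hsum : (∑' i : ℕ, P (EV (t-1-i) (i+1))) ≠ ∞ := by
          have he : (∑' i : ℕ, P (EV (t-1-i) (i+1))) = ∑' i : ℕ, P (EV 0 (i+1)) :=
            tsum_congr fun i => hEVP _ _ (by omega)
          rw [he, ← measure_iUnion hEV0disj (fun i => hEVmeas 0 (i+1))]
          exact (measure_lt_top P _).ne
        have hae := MeasureTheory.ae_eventually_notMem (μ := P) hsum
        filter_upwards [hae] with ω hω _
        obtain ⟨I, hI⟩ := (Filter.eventually_atTop).mp hω
        exact ⟨I, hI⟩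
      · filter_upwards with ω ht'
        exact absurd ht' ht
    -- uniqueness: a.s. every bi-recurrent path equals β
    set bad : Ω → Prop := fun ω => ∃ c : ℤ → S,
      (∀ t : ℤ, c (t+1) = h (c t) (ξ t ω)) ∧ (∀ n : ℤ, ∃ s ≤ n, c s = xstar) ∧
      ∃ t : ℤ, c t ≠ β t ω with hbaddef
    set good : Ω → Prop := fun ω =>
      ∀ (s : ℤ) (m : ℕ), ∃ k ≥ m, Fpath h ξ ω s xstar k = xstar with hgooddef
    set γ : ℤ → Ω → S := fun t ω =>
      if hb : bad ω ∧ good ω then hb.1.choose t else β t ω with hγdef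
    have hγrw_pos : ∀ (ω : Ω) (hb : bad ω ∧ good ω) (t : ℤ), γ t ω = hb.1.choose t := by
      intro ω hb t
      rw [hγdef]
      exact dif_pos hb
    have hγrw_neg : ∀ (ω : Ω), ¬(bad ω ∧ good ω) → ∀ t : ℤ, γ t ω = β t ω := by
      intro ω hb t
      rw [hγdef]
      exact dif_neg hb
    have hγpath : ∀ᵐ ω ∂P, ∀ t : ℤ, γ (t+1) ω = h (γ t ω) (ξ t ω) := by
      filter_upwards [hβpath] with ω hp t
      by_cases hb : bad ω ∧ good ω
      · rw [hγrw_pos ω hb, hγrw_pos ω hb]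
        exact hb.1.choose_spec.1 t
      · rw [hγrw_neg ω hb, hγrw_neg ω hb]
        exact hp t
    have hγrec : ∀ᵐ ω ∂P, ∀ n : ℤ,
        (∃ t, n ≤ t ∧ γ t ω = xstar) ∧ (∃ t, t ≤ n ∧ γ t ω = xstar) := by
      filter_upwards [hβbirec, hforward] with ω hbi hfw n
      by_cases hb : bad ω ∧ good ω
      · have hc := hb.1.choose_spec
        constructor
        · obtain ⟨s, hs, hcs⟩ := hc.2.1 n
          obtain ⟨k, hk, hvk⟩ := hfw s ((n - s).toNat)
          refine ⟨s + k, by omega, ?_⟩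
          rw [hγrw_pos ω hb]
          have hpf := path_follows h ξ hc.1 s k
          rw [hcs] at hpf
          rw [hpf, hvk]
        · obtain ⟨s, hs, hcs⟩ := hc.2.1 n
          exact ⟨s, hs, by rw [hγrw_pos ω hb]; exact hcs⟩
      · obtain ⟨h1, h2⟩ := hbi n
        constructor
        · obtain ⟨t1, ha, hbb⟩ := h1
          exact ⟨t1, ha, by rw [hγrw_neg ω hb]; exact hbb⟩
        · obtain ⟨t1, ha, hbb⟩ := h2
          exact ⟨t1, ha, by rw [hγrw_neg ω hb]; exact hbb⟩
    have huniq := hβunique γ hγpath hγrec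
    have hU : ∀ᵐ ω ∂P, ∀ c : ℤ → S, (∀ t : ℤ, c (t+1) = h (c t) (ξ t ω)) →
        (∀ n : ℤ, ∃ s ≤ n, c s = xstar) → ∀ t : ℤ, c t = β t ω := by
      filter_upwards [huniq, hforward] with ω heq hfw c hc1 hc2 t
      by_contra hne
      have hb : bad ω ∧ good ω := ⟨⟨c, hc1, hc2, t, hne⟩, hfw⟩
      obtain ⟨t', ht'⟩ := hb.1.choose_spec.2.2
      have h1 := heq t'
      rw [hγrw_pos ω hb] at h1
      exact ht' h1
    -- Bset ⊆ Bpp a.e.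
    have hBsub : ∀ᵐ ω ∂P, ω ∈ Bset → ω ∈ Bpp := by
      filter_upwards [hβpath, hβbirec] with ω hp hbi hb0
      have hb0' : β 0 ω = xstar := hb0
      simp only [hBppdef, Set.mem_iInter, Set.mem_iUnion, hancdef, Set.mem_setOf_eq]
      intro k
      obtain ⟨-, t1, ht1, htx⟩ := hbi (-(k:ℤ)-1)
      refine ⟨(-t1 - 1 - k).toNat, ?_⟩
      rw [show -(((k + (-t1 - 1 - k).toNat : ℕ)) : ℤ) - 1 = t1 from by push_cast; omega,
        show (k + (-t1 - 1 - k).toNat) + 1 = (-t1).toNat from by omega]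
      have hpf := path_follows h ξ (c := fun t => β t ω) hp t1 ((-t1).toNat)
      rw [htx] at hpf
      rw [show t1 + ((((-t1).toNat : ℕ)) : ℤ) = 0 from by omega] at hpf
      rw [← hpf]
      exact hb0'
    -- Bpp ⊆ Bset a.e.
    have hBppsub : ∀ᵐ ω ∂P, ω ∈ Bpp → ω ∈ Bset := by
      filter_upwards [hBC, hU] with ω hbc hu hmem
      have hanc0 : ∀ b : ℤ, ∃ s : ℤ, s ≤ b ∧ s < 0 ∧
          Fpath h ξ ω s xstar ((0 - s).toNat) = xstar := by
        intro b
        simp only [hBppdef, Set.mem_iInter, Set.mem_iUnion, hancdef,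
          Set.mem_setOf_eq] at hmem
        obtain ⟨j, hj⟩ := hmem ((-b).toNat)
        refine ⟨-((((-b).toNat + j : ℕ)) : ℤ) - 1, by omega, by omega, ?_⟩
        rw [show (0 - (-((((-b).toNat + j : ℕ)) : ℤ) - 1)).toNat = ((-b).toNat + j) + 1
          from by omega]
        exact hj
      obtain ⟨c, hc1, hc2, hc0⟩ := chain_lemma h ξ xstar ω (fun t ht => by
        obtain ⟨I, hI⟩ := hbc t ht
        refine ⟨I, fun i hi hcon => hI i hi ?_⟩
        simpa [hEVdef, Set.mem_setOf_eq] using hcon) hanc0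
      show β 0 ω = xstar
      rw [← hu c hc1 hc2 0]
      exact hc0
    filter_upwards [hBsub, hBppsub] with ω h1 h2
    exact ⟨h1, h2⟩
  have hPBB : P Bset = P Bpp := measure_congr (Filter.eventuallyEq_set.mpr hBBpp)
  have hsplit : ∀ T : Set Ω, MeasurableSet[(⨆ t ∈ {t : ℤ | 0 ≤ t}, MeasurableSpace.comap (ξ t) inferInstance)] T → P (Bset ∩ T) = P Bset * P T := by
    intro T hT
    have e1 : P (Bset ∩ T) = P (Bpp ∩ T) := by
      refine measure_congr (Filter.eventuallyEq_set.mpr ?_)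
      filter_upwards [hBBpp] with ω hiff
      simp only [Set.mem_inter_iff]
      rw [hiff]
    rw [e1, hprod Bpp T hBpppast hT, hPBB]
  constructor
  · have hEN : ∫⁻ ω, (Nvisits h ξ xstar y ω : ℝ≥0∞) ∂P = ∑' n : ℕ, P (G y n) := by
      rw [lintegral_congr (hptwiseN y)]
      exact hint _ (fun n => hGmeas y n)
    rw [hEN]
    calc (∑' n : ℕ, P (G y n)) * P Bset = ∑' n : ℕ, P (G y n) * P Bset :=
          ENNReal.tsum_mul_right.symm
      _ = ∑' n : ℕ, P (Bset ∩ G y n) := tsum_congr fun n => by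
            rw [hsplit _ (hGfut y n), mul_comm]
      _ = P {ω | β 0 ω = y} := key1 y
  · have hER : ∫⁻ ω, retTime h ξ 0 xstar xstar ω ∂P = ∑' n : ℕ, P (R n) := by
      rw [lintegral_congr hptwiseR]
      exact hint _ (fun n => hRmeas n)
    rw [hER]
    calc (∑' n : ℕ, P (R n)) * P Bset = ∑' n : ℕ, P (R n) * P Bset :=
          ENNReal.tsum_mul_right.symm
      _ = ∑' n : ℕ, P (Bset ∩ R n) := tsum_congr fun n => by
            rw [hsplit _ (hRfut n), mul_comm]
      _ = 1 := hmid
end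

section
/- Suppose the Doeblin graph has fully independent transitions with transition matrix $P$. For finite sets $E=\{x^*,x_1,\dots,x_n\}$ and $E'=\{x^*,y_1,\dots,y_m\}$ containing $x^*$, define $P_{\mathbf{B}}(E,E') := \mathbb{P}(\{x^*\}\cup\{h(y,\xi_0):y\in E\} = E')$. Then $P_{\mathbf{B}}$ satisfies the recurrence $P_{\mathbf{B}}(E,E') = \left(p_{x_n,x^*}+\sum_{i=1}^m p_{x_n,y_i}\right)P_{\mathbf{B}}(E\setminus\{x_n\},E') + \sum_{i=1}^m p_{x_n,y_i}\,P_{\mathbf{B}}(E\setminus\{x_n\},E'\setminus\{y_i\})$, with base cases $P_{\mathbf{B}}(E,E')=0$ if $\#E'>\#E+1$, $P_{\mathbf{B}}(\{x^*\},\{x^*,y\})=p_{x^*,y}$, and $P_{\mathbf{B}}(E,\{x^*\})=\prod_{y\in E}p_{y,x^*}$. -/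
open MeasureTheory ProbabilityTheory ENNReal
open scoped Classical

/-- **Recurrence for the transition matrix of the bridge-slice chain.**  Under
fully independent transitions, the extended transition matrix
`P_𝐁(E,E') = P({x⋆} ∪ {h(y,ξ₀) : y ∈ E} = E')` on finite sets containing `x⋆`
satisfies the stated recurrence and base cases. -/
theorem bridge_chain_transition_recurrence
    {Ω S Ξ : Type*} [MeasurableSpace Ω] [MeasurableSpace Ξ] [MeasurableSpace S]
    [MeasurableSingletonClass S] [Countable S] [DecidableEq S]
    (P : Measure Ω) [IsProbabilityMeasure P]
    (h : S → Ξ → S) (hhmeas : ∀ x, Measurable (h x))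
    (ξ : ℤ → Ω → Ξ) (hξmeas : ∀ t, Measurable (ξ t))
    (hfullindep : iIndepFun (fun (x : S) ω => h x (ξ 0 ω)) P)
    (p : S → S → ℝ≥0∞) (hp : ∀ x y, p x y = P {ω | h x (ξ 0 ω) = y})
    (xstar : S)
    (PB : Finset S → Finset S → ℝ≥0∞)
    (hPB : ∀ E E' : Finset S,
      PB E E' = P {ω | insert xstar ((fun y => h y (ξ 0 ω)) '' (E : Set S)) = (E' : Set S)}) :
    -- the recurrence
    (∀ E E' : Finset S, xstar ∈ E → xstar ∈ E' →
      ∀ xn ∈ E, xn ≠ xstar →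
        PB E E'
          = (p xn xstar + ∑ y ∈ E'.erase xstar, p xn y) * PB (E.erase xn) E'
            + ∑ y ∈ E'.erase xstar, p xn y * PB (E.erase xn) (E'.erase y))
    -- base case: too many states
    ∧ (∀ E E' : Finset S, xstar ∈ E → xstar ∈ E' →
        E.card + 1 < E'.card → PB E E' = 0)
    -- base case: from the singleton
    ∧ (∀ y : S, y ≠ xstar → PB {xstar} {xstar, y} = p xstar y)
    -- base case: collapse to the singleton
    ∧ (∀ E : Finset S, xstar ∈ E → PB E {xstar} = ∏ y ∈ E, p y xstar) := by
  classical
  set f : S → Ω → S := fun x ω => h x (ξ 0 ω) with hf_def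
  have hf : ∀ x, Measurable (f x) := fun x => (hhmeas x).comp (hξmeas 0)
  set Ev : Finset S → Finset S → Set Ω :=
    fun T F => {ω | insert xstar ((fun y => f y ω) '' (T : Set S)) = (F : Set S)} with hEv_def
  have hPB' : ∀ T F : Finset S, PB T F = P (Ev T F) := hPB
  have hEv_eq : ∀ T F : Finset S,
      Ev T F = (fun ω (i : T) => f i ω) ⁻¹'
        {u : T → S | insert xstar (Set.range u) = (F : Set S)} := by
    intro T F
    ext ω
    simp only [hEv_def, Set.mem_setOf_eq, Set.mem_preimage]
    rw [Set.image_eq_range]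
    exact Iff.rfl
  have hEvMeas : ∀ T F : Finset S, MeasurableSet (Ev T F) := by
    intro T F
    rw [hEv_eq]
    have hg : Measurable (fun ω (i : T) => f i ω) := measurable_pi_lambda _ fun i => hf i
    exact hg ((Set.to_countable _).measurableSet)
  have hfz : ∀ (xn z : S), MeasurableSet {ω | f xn ω = z} :=
    fun xn z => (hf xn) (measurableSet_singleton z)
  have hkey : ∀ (T : Finset S) (xn : S), xn ∉ T → ∀ (z : S) (F : Finset S),
      P ({ω | f xn ω = z} ∩ Ev T F) = p xn z * P (Ev T F) := by
    intro T xn hxn z F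
    have hdisj : Disjoint ({xn} : Finset S) T := by simpa using hxn
    have hindep := hfullindep.indepFun_finset {xn} T hdisj hf
    have h1 : {ω | f xn ω = z}
        = (fun ω (i : ({xn} : Finset S)) => f i ω) ⁻¹'
            {u : ({xn} : Finset S) → S | u ⟨xn, Finset.mem_singleton_self xn⟩ = z} := rfl
    rw [h1, hEv_eq]
    rw [hindep.measure_inter_preimage_eq_mul _ _ ((Set.to_countable _).measurableSet)
      ((Set.to_countable _).measurableSet)]
    congr 1
    exact (hp xn z).symm
  refine ⟨?_, ?_, ?_, ?_⟩
  · -- the recurrence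
    intro E E' hxE hxE' xn hxnE hxnne
    set T : Finset S := E.erase xn with hT_def
    have hxnT : xn ∉ T := Finset.notMem_erase _ _
    have hET : (E : Set S) = insert xn (T : Set S) := by
      rw [hT_def, Finset.coe_erase, Set.insert_diff_singleton,
        Set.insert_eq_self.mpr (by exact_mod_cast hxnE)]
    -- image splitting
    have himg : ∀ ω, insert xstar ((fun y => f y ω) '' (E : Set S))
        = insert (f xn ω) (insert xstar ((fun y => f y ω) '' (T : Set S))) := by
      intro ω
      rw [hET, Set.image_insert_eq, Set.insert_comm]
    -- decomposition over the value of f xn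
    have hdecomp : Ev E E' = ⋃ z : S, ({ω | f xn ω = z} ∩ Ev E E') := by
      ext ω; simp
    have hterm_meas : ∀ z : S, MeasurableSet ({ω | f xn ω = z} ∩ Ev E E') :=
      fun z => (hfz xn z).inter (hEvMeas E E')
    have hpw : Pairwise (Function.onFun Disjoint fun z => {ω | f xn ω = z} ∩ Ev E E') := by
      intro z₁ z₂ hne
      simp only [Function.onFun, Set.disjoint_left]
      rintro ω ⟨h1, -⟩ ⟨h2, -⟩
      exact hne (h1.symm.trans h2)
    have htsum : P (Ev E E') = ∑' z : S, P ({ω | f xn ω = z} ∩ Ev E E') := by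
      conv_lhs => rw [hdecomp]
      exact measure_iUnion hpw hterm_meas
    -- term for z ∉ E'
    have hzero : ∀ z : S, z ∉ E' → P ({ω | f xn ω = z} ∩ Ev E E') = 0 := by
      intro z hz
      have : ({ω | f xn ω = z} ∩ Ev E E') = ∅ := by
        ext ω
        simp only [Set.mem_inter_iff, Set.mem_setOf_eq, Set.mem_empty_iff_false, iff_false,
          not_and, hEv_def]
        intro hfxz hEv
        apply hz
        have hzmem : z ∈ insert xstar ((fun y => f y ω) '' (E : Set S)) :=
          Set.mem_insert_of_mem _ ⟨xn, by exact_mod_cast hxnE, hfxz⟩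
        rw [hEv] at hzmem
        exact_mod_cast hzmem
      rw [this, measure_empty]
    -- term for z = xstar
    have hxstar_term : P ({ω | f xn ω = xstar} ∩ Ev E E')
        = p xn xstar * PB T E' := by
      have hseteq : {ω | f xn ω = xstar} ∩ Ev E E' = {ω | f xn ω = xstar} ∩ Ev T E' := by
        ext ω
        simp only [Set.mem_inter_iff, Set.mem_setOf_eq, hEv_def, and_congr_right_iff]
        intro hfx
        rw [himg ω, hfx, Set.insert_comm, Set.insert_idem]
      rw [hseteq, hkey T xn hxnT xstar E', hPB' T E']
    -- term for z ∈ E', z ≠ xstar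
    have hmid_term : ∀ z ∈ E'.erase xstar,
        P ({ω | f xn ω = z} ∩ Ev E E')
          = p xn z * PB T E' + p xn z * PB T (E'.erase z) := by
      intro z hz
      obtain ⟨hzne, hzE'⟩ := Finset.mem_erase.mp hz
      have hseteq : {ω | f xn ω = z} ∩ Ev E E'
          = ({ω | f xn ω = z} ∩ Ev T E') ∪ ({ω | f xn ω = z} ∩ Ev T (E'.erase z)) := by
        ext ω
        simp only [Set.mem_inter_iff, Set.mem_setOf_eq, Set.mem_union, hEv_def]
        constructor
        · rintro ⟨hfx, hEv⟩
          rw [himg ω, hfx] at hEv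
          set A : Set S := insert xstar ((fun y => f y ω) '' (T : Set S)) with hA_def
          by_cases hzA : z ∈ A
          · left
            refine ⟨hfx, ?_⟩
            rw [← Set.insert_eq_self.mpr hzA, hEv]
          · right
            refine ⟨hfx, ?_⟩
            rw [Finset.coe_erase, ← hEv, Set.insert_diff_self_of_notMem hzA]
        · rintro (⟨hfx, hEv⟩ | ⟨hfx, hEv⟩)
          · refine ⟨hfx, ?_⟩
            rw [himg ω, hfx, hEv, Set.insert_eq_self.mpr (by exact_mod_cast hzE')]
          · refine ⟨hfx, ?_⟩
            rw [himg ω, hfx, hEv, Finset.coe_erase, Set.insert_diff_singleton,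
              Set.insert_eq_self.mpr (by exact_mod_cast hzE')]
      have hdisj2 : Disjoint ({ω | f xn ω = z} ∩ Ev T E')
          ({ω | f xn ω = z} ∩ Ev T (E'.erase z)) := by
        simp only [Set.disjoint_left]
        rintro ω ⟨-, h1⟩ ⟨-, h2⟩
        simp only [hEv_def, Set.mem_setOf_eq] at h1 h2
        have : (E' : Set S) = ((E'.erase z : Finset S) : Set S) := h1.symm.trans h2
        have hzz : z ∈ ((E'.erase z : Finset S) : Set S) := by
          rw [← this]; exact_mod_cast hzE'
        simp at hzz
      rw [hseteq, measure_union hdisj2 ((hfz xn z).inter (hEvMeas T (E'.erase z))),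
        hkey T xn hxnT z E', hkey T xn hxnT z (E'.erase z), hPB' T E', hPB' T (E'.erase z)]
    -- put it together
    rw [hPB' E E', htsum, tsum_eq_sum (s := E') (fun z hz => hzero z hz),
      ← Finset.add_sum_erase E' _ hxE', hxstar_term, Finset.sum_congr rfl hmid_term,
      Finset.sum_add_distrib, ← Finset.sum_mul, add_mul]
    ring
  · -- base case: too many states
    intro E E' hxE hxE' hcard
    rw [hPB' E E']
    have : Ev E E' = ∅ := by
      ext ω
      simp only [hEv_def, Set.mem_setOf_eq, Set.mem_empty_iff_false, iff_false]
      intro hEv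
      have h1 : ((E' : Set S)).ncard ≤ (E : Set S).ncard + 1 := by
        rw [← hEv]
        refine le_trans (Set.ncard_insert_le _ _) ?_
        exact Nat.add_le_add_right (Set.ncard_image_le (E.finite_toSet)) 1
      rw [Set.ncard_coe_finset, Set.ncard_coe_finset] at h1
      omega
    rw [this, measure_empty]
  · -- base case: from the singleton
    intro y hy
    rw [hPB']
    have : Ev {xstar} {xstar, y} = {ω | f xstar ω = y} := by
      ext ω
      simp only [hEv_def, Set.mem_setOf_eq, Finset.coe_singleton, Set.image_singleton,
        Finset.coe_insert, Finset.coe_singleton]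
      constructor
      · intro hEv
        have : y ∈ insert xstar ({f xstar ω} : Set S) := by
          rw [hEv]; exact Set.mem_insert_of_mem _ rfl
        rcases this with h1 | h1
        · exact absurd h1 hy
        · exact h1.symm
      · intro hEv; rw [hEv]
    rw [this]
    exact (hp xstar y).symm
  · -- base case: collapse to the singleton
    intro E hxE
    have hseteq : Ev E {xstar} = ⋂ y ∈ E, (f y) ⁻¹' {xstar} := by
      ext ω
      simp only [hEv_def, Set.mem_setOf_eq, Finset.coe_singleton, Set.mem_iInter,
        Set.mem_preimage, Set.mem_singleton_iff]
      constructor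
      · intro hEv y hyE
        have : f y ω ∈ insert xstar ((fun y => f y ω) '' (E : Set S)) :=
          Set.mem_insert_of_mem _ ⟨y, by exact_mod_cast hyE, rfl⟩
        rw [hEv] at this
        exact this
      · intro hall
        apply Set.Subset.antisymm
        · rw [Set.insert_subset_iff]
          refine ⟨rfl, ?_⟩
          rintro z ⟨y, hy, rfl⟩
          exact hall y (by exact_mod_cast hy)
        · exact Set.singleton_subset_iff.mpr (Set.mem_insert _ _)
    rw [hPB', hseteq]
    have := hfullindep.measure_inter_preimage_eq_mul E
      (sets := fun _ => ({xstar} : Set S)) (fun i _ => measurableSet_singleton xstar)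
    rw [this]
    exact Finset.prod_congr rfl fun y _ => (hp y xstar).symm
end
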